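/- arXiv:1801.10539 — 6 statements merged into one kernel-verified Lean document; each statement's English description precedes it below -/
import Mathlib

section
/- Let (M,d,μ) be a metric measure space with 0 < μ(B(x;R)) < ∞ for all x ∈ M, R > 0, and let p : M × M × (0,∞) → [0,∞) be a measurable symmetric kernel satisfying the semigroup property p(x,y;s+t) = ∫_M p(x,z;s) p(z,y;t) dμ(z), stochastic completeness ∫_M p(x,y;t) dμ(y) = 1, and, for some constant C ∈ [2,∞), the two-sided Li–Yau Gaussian bound C^{-1} e^{-C d(x,y)²/t} (μ(B(x;t^{1/2})) μ(B(y;t^{1/2})))^{-1/2} ≤ p(x,y;t) ≤ C e^{-d(x,y)²/(Ct)} (μ(B(x;t^{1/2})) μ(B(y;t^{1/2})))^{-1/2} for all x,y ∈ M, t > 0, together with the volume doubling property μ(B(x;2R)) ≤ C μ(B(x;R)) for all x ∈ M, R > 0. Let Ω ⊆ M be open and define H_Ω(t) = ∫_Ω ∫_Ω p(x,y;t) dμ(y) dμ(x). If H_Ω(T) < ∞ for some T > 0, then H_Ω(t) < ∞ for all t > 0. -/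
open MeasureTheory Metric ENNReal

/-- If a metric measure space carries a symmetric measurable kernel satisfying the
semigroup identity, stochastic completeness, the two-sided Li–Yau gaussian bound with
constant `C ∈ [2,∞)`, and volume doubling, and if the heat content
`H_Ω(t) = ∫_Ω ∫_Ω p(x,y;t) dμ(y) dμ(x)` of an open set `Ω` is finite for some `T > 0`,
then it is finite for all `t > 0`. -/
theorem heat_content_finite_of_finite
    {M : Type*} [MetricSpace M] [MeasurableSpace M] [BorelSpace M]
    (μ : Measure M)
    (hball : ∀ x : M, ∀ R : ℝ, 0 < R → 0 < μ (ball x R) ∧ μ (ball x R) < ⊤)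
    (p : M → M → ℝ → ℝ≥0∞)
    (hp_meas : Measurable fun q : M × M × ℝ => p q.1 q.2.1 q.2.2)
    (hp_symm : ∀ x y : M, ∀ t : ℝ, 0 < t → p x y t = p y x t)
    (hp_semi : ∀ x y : M, ∀ s t : ℝ, 0 < s → 0 < t →
      p x y (s + t) = ∫⁻ z, p x z s * p z y t ∂μ)
    (hp_sc : ∀ x : M, ∀ t : ℝ, 0 < t → ∫⁻ y, p x y t ∂μ = 1)
    (C : ℝ) (hC : 2 ≤ C)
    (hLY_lower : ∀ x y : M, ∀ t : ℝ, 0 < t →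
      ENNReal.ofReal (C⁻¹ * Real.exp (-(C * dist x y ^ 2) / t)) *
        (μ (ball x (Real.sqrt t)) * μ (ball y (Real.sqrt t))) ^ (-(1 : ℝ) / 2)
        ≤ p x y t)
    (hLY_upper : ∀ x y : M, ∀ t : ℝ, 0 < t →
      p x y t ≤ ENNReal.ofReal (C * Real.exp (-(dist x y ^ 2) / (C * t))) *
        (μ (ball x (Real.sqrt t)) * μ (ball y (Real.sqrt t))) ^ (-(1 : ℝ) / 2))
    (hdbl : ∀ x : M, ∀ R : ℝ, 0 < R →
      μ (ball x (2 * R)) ≤ ENNReal.ofReal C * μ (ball x R))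
    (Ω : Set M) (hΩ : IsOpen Ω)
    (H : ℝ → ℝ≥0∞)
    (hH : ∀ t : ℝ, H t = ∫⁻ x in Ω, ∫⁻ y in Ω, p x y t ∂μ ∂μ)
    (T : ℝ) (hT : 0 < T) (hHT : H T < ⊤) :
    ∀ t : ℝ, 0 < t → H t < ⊤ := by
  -- trivial case: empty space
  rcases isEmpty_or_nonempty M with hM | hM
  · intro t ht
    rw [hH, μ.eq_zero_of_isEmpty]
    simp
  obtain ⟨x₀⟩ := hM
  -- μ is σ-finite
  haveI : SigmaFinite μ := by
    refine ⟨⟨⟨fun n => ball x₀ (n + 1), fun _ => trivial,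
      fun n => (hball x₀ (n + 1) (by positivity)).2, ?_⟩⟩⟩
    ext y
    simp only [Set.mem_iUnion, mem_ball, Set.mem_univ, iff_true]
    obtain ⟨n, hn⟩ := exists_nat_gt (dist y x₀)
    exact ⟨n, by linarith⟩
  have hC0 : (0 : ℝ) < C := by linarith
  -- measurability of the kernel at fixed time
  have pm : ∀ s : ℝ, Measurable fun q : M × M => p q.1 q.2 s := fun s =>
    hp_meas.comp (measurable_fst.prodMk (measurable_snd.prodMk measurable_const))
  have pm1 : ∀ (s : ℝ) (y : M), Measurable fun x => p x y s := fun s y =>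
    (pm s).comp (measurable_id.prodMk measurable_const)
  have pm2 : ∀ (s : ℝ) (x : M), Measurable fun y => p x y s := fun s x =>
    (pm s).comp (measurable_const.prodMk measurable_id)
  -- the kernel is finite
  have p_fin : ∀ (x y : M) (s : ℝ), 0 < s → p x y s ≠ ⊤ := by
    intro x y s hs
    have hst : 0 < Real.sqrt s := Real.sqrt_pos.2 hs
    have hV0 : (0 : ℝ≥0∞) < μ (ball x (Real.sqrt s)) * μ (ball y (Real.sqrt s)) :=
      mul_pos (hball x _ hst).1.ne' (hball y _ hst).1.ne'
    have hVt : μ (ball x (Real.sqrt s)) * μ (ball y (Real.sqrt s)) ≠ ⊤ :=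
      ENNReal.mul_ne_top (hball x _ hst).2.ne (hball y _ hst).2.ne
    have hfin : (μ (ball x (Real.sqrt s)) * μ (ball y (Real.sqrt s))) ^ (-(1 : ℝ) / 2) ≠ ⊤ := by
      rw [show (-(1 : ℝ) / 2) = -(1 / 2) by norm_num, ENNReal.rpow_neg]
      exact (ENNReal.inv_lt_top.2 (ENNReal.rpow_pos hV0 hVt)).ne
    exact ((hLY_upper x y s hs).trans_lt
      (ENNReal.mul_lt_top ENNReal.ofReal_lt_top hfin.lt_top)).ne
  -- measurability of the Ω-mass function
  have u_meas : ∀ s : ℝ, Measurable fun z => ∫⁻ x in Ω, p x z s ∂μ := by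
    intro s
    have h : Measurable fun q : M × M => p q.2 q.1 s :=
      (pm s).comp (measurable_snd.prodMk measurable_fst)
    exact h.lintegral_prod_right'
  -- stochastic completeness in the first variable
  have sc1 : ∀ (z : M) (s : ℝ), 0 < s → ∫⁻ w, p w z s ∂μ = 1 := by
    intro z s hs
    rw [lintegral_congr fun w => hp_symm w z s hs]
    exact hp_sc z s hs
  have u_le_one : ∀ (s : ℝ), 0 < s → ∀ z, (∫⁻ x in Ω, p x z s ∂μ) ≤ 1 := fun s hs z =>
    (lintegral_mono' Measure.restrict_le_self le_rfl).trans (sc1 z s hs).le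
  have w_le_one : ∀ (s : ℝ), 0 < s → ∀ z, (∫⁻ y in Ω, p z y s ∂μ) ≤ 1 := fun s hs z =>
    (lintegral_mono' Measure.restrict_le_self le_rfl).trans (hp_sc z s hs).le
  -- representation of the Ω-mass at a later time
  have rep : ∀ (a b : ℝ), 0 < a → 0 < b → ∀ z,
      (∫⁻ x in Ω, p x z (a + b) ∂μ) = ∫⁻ w, (∫⁻ x in Ω, p x w a ∂μ) * p w z b ∂μ := by
    intro a b ha hb z
    have h1 : (∫⁻ x in Ω, p x z (a + b) ∂μ) = ∫⁻ x in Ω, ∫⁻ w, p x w a * p w z b ∂μ ∂μ :=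
      lintegral_congr fun x => hp_semi x z a b ha hb
    have hm : AEMeasurable (Function.uncurry fun x w => p x w a * p w z b)
        ((μ.restrict Ω).prod μ) :=
      ((pm a).mul ((pm1 b z).comp measurable_snd)).aemeasurable
    rw [h1, lintegral_lintegral_swap hm]
    exact lintegral_congr fun w => lintegral_mul_const' _ _ (p_fin w z b hb)
  -- L² contraction
  have contr : ∀ (a b : ℝ), 0 < a → 0 < b →
      (∫⁻ z, (∫⁻ x in Ω, p x z (a + b) ∂μ) ^ 2 ∂μ) ≤
        ∫⁻ w, (∫⁻ x in Ω, p x w a ∂μ) ^ 2 ∂μ := by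
    intro a b ha hb
    have key : ∀ z, (∫⁻ x in Ω, p x z (a + b) ∂μ) ^ 2 ≤
        ∫⁻ w, (∫⁻ x in Ω, p x w a ∂μ) ^ 2 * p w z b ∂μ := by
      intro z
      rw [rep a b ha hb z]
      have h2 : Real.HolderConjugate 2 2 := Real.HolderConjugate.two_two
      have hmf : AEMeasurable
          (fun w => (∫⁻ x in Ω, p x w a ∂μ) * p w z b ^ ((1 : ℝ) / 2)) μ :=
        ((u_meas a).mul ((pm1 b z).pow measurable_const)).aemeasurable
      have hmg : AEMeasurable (fun w => p w z b ^ ((1 : ℝ) / 2)) μ :=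
        ((pm1 b z).pow measurable_const).aemeasurable
      have hCS := ENNReal.lintegral_mul_le_Lp_mul_Lq μ h2 hmf hmg
      have hfg : ∀ w, ((fun w => (∫⁻ x in Ω, p x w a ∂μ) * p w z b ^ ((1 : ℝ) / 2)) *
          fun w => p w z b ^ ((1 : ℝ) / 2)) w
          = (∫⁻ x in Ω, p x w a ∂μ) * p w z b := by
        intro w
        simp only [Pi.mul_apply]
        rw [mul_assoc, ← ENNReal.rpow_add_of_nonneg _ _ (by norm_num) (by norm_num)]
        norm_num
      rw [lintegral_congr hfg] at hCS
      have hfsq : ∀ w, ((∫⁻ x in Ω, p x w a ∂μ) * p w z b ^ ((1 : ℝ) / 2)) ^ (2 : ℝ)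
          = (∫⁻ x in Ω, p x w a ∂μ) ^ 2 * p w z b := by
        intro w
        rw [ENNReal.mul_rpow_of_nonneg _ _ (by norm_num), ← ENNReal.rpow_mul]
        norm_num
      have hgsq : ∀ w, (p w z b ^ ((1 : ℝ) / 2)) ^ (2 : ℝ) = p w z b := by
        intro w
        rw [← ENNReal.rpow_mul]
        norm_num
      rw [lintegral_congr hfsq, lintegral_congr hgsq, sc1 z b hb] at hCS
      simp only [ENNReal.one_rpow, mul_one] at hCS
      calc (∫⁻ w, (∫⁻ x in Ω, p x w a ∂μ) * p w z b ∂μ) ^ 2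
          = ((∫⁻ w, (∫⁻ x in Ω, p x w a ∂μ) * p w z b ∂μ) : ℝ≥0∞) ^ ((2 : ℕ) : ℝ) := by
            rw [ENNReal.rpow_natCast]
        _ ≤ ((∫⁻ w, (∫⁻ x in Ω, p x w a ∂μ) ^ 2 * p w z b ∂μ) ^ ((1 : ℝ) / 2)) ^ ((2 : ℕ) : ℝ) :=
            ENNReal.rpow_le_rpow hCS (by norm_num)
        _ = ∫⁻ w, (∫⁻ x in Ω, p x w a ∂μ) ^ 2 * p w z b ∂μ := by
            rw [← ENNReal.rpow_mul]
            norm_num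
    calc ∫⁻ z, (∫⁻ x in Ω, p x z (a + b) ∂μ) ^ 2 ∂μ
        ≤ ∫⁻ z, ∫⁻ w, (∫⁻ x in Ω, p x w a ∂μ) ^ 2 * p w z b ∂μ ∂μ := lintegral_mono key
      _ = ∫⁻ w, ∫⁻ z, (∫⁻ x in Ω, p x w a ∂μ) ^ 2 * p w z b ∂μ ∂μ := by
          refine lintegral_lintegral_swap ?_
          exact ((((u_meas a).comp measurable_snd).pow_const 2).mul
            ((pm b).comp (measurable_snd.prodMk measurable_fst))).aemeasurable
      _ = ∫⁻ w, (∫⁻ x in Ω, p x w a ∂μ) ^ 2 ∂μ := by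
          refine lintegral_congr fun w => ?_
          have hfin : (∫⁻ x in Ω, p x w a ∂μ) ^ 2 ≠ ⊤ :=
            (pow_le_one' (u_le_one a ha w) 2).trans_lt ENNReal.one_lt_top |>.ne
          rw [lintegral_const_mul' _ _ hfin, hp_sc w b hb, mul_one]
  -- representation of the heat content
  have hrep : ∀ t : ℝ, 0 < t →
      H t = ∫⁻ z, (∫⁻ x in Ω, p x z (t / 2) ∂μ) ^ 2 ∂μ := by
    intro t ht
    have ht2 : 0 < t / 2 := by linarith
    rw [hH]
    calc ∫⁻ x in Ω, ∫⁻ y in Ω, p x y t ∂μ ∂μ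
        = ∫⁻ x in Ω, ∫⁻ z, p x z (t / 2) * (∫⁻ y in Ω, p z y (t / 2) ∂μ) ∂μ ∂μ := by
          refine lintegral_congr fun x => ?_
          have step : ∀ y, p x y t = ∫⁻ z, p x z (t / 2) * p z y (t / 2) ∂μ := by
            intro y
            have := hp_semi x y (t / 2) (t / 2) ht2 ht2
            rwa [add_halves] at this
          rw [lintegral_congr step, lintegral_lintegral_swap
            (((pm (t / 2)).comp (measurable_const.prodMk measurable_snd)).mul
              ((pm (t / 2)).comp (measurable_snd.prodMk measurable_fst))).aemeasurable]
          exact lintegral_congr fun z => lintegral_const_mul' _ _ (p_fin x z _ ht2)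
      _ = ∫⁻ z, (∫⁻ x in Ω, p x z (t / 2) ∂μ) * (∫⁻ y in Ω, p z y (t / 2) ∂μ) ∂μ := by
          rw [lintegral_lintegral_swap]
          · refine lintegral_congr fun z => ?_
            exact lintegral_mul_const' _ _
              ((w_le_one (t / 2) ht2 z).trans_lt ENNReal.one_lt_top).ne
          · have hwm : Measurable fun z => ∫⁻ y in Ω, p z y (t / 2) ∂μ :=
              (pm (t / 2)).lintegral_prod_right'
            exact (((pm (t / 2)).comp (measurable_fst.prodMk measurable_snd)).mul
              (hwm.comp measurable_snd)).aemeasurable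
      _ = ∫⁻ z, (∫⁻ x in Ω, p x z (t / 2) ∂μ) ^ 2 ∂μ := by
          refine lintegral_congr fun z => ?_
          have hsy : (∫⁻ y in Ω, p z y (t / 2) ∂μ) = ∫⁻ x in Ω, p x z (t / 2) ∂μ :=
            lintegral_congr fun y => hp_symm z y _ ht2
          rw [hsy, pow_two]
  -- monotonicity of the heat content
  have mono : ∀ s t : ℝ, 0 < s → s ≤ t → H t ≤ H s := by
    intro s t hs hst
    rcases eq_or_lt_of_le hst with rfl | h
    · exact le_rfl
    rw [hrep t (hs.trans h), hrep s hs]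
    have hsplit : t / 2 = s / 2 + (t - s) / 2 := by ring
    rw [hsplit]
    exact contr (s / 2) ((t - s) / 2) (by linarith) (by linarith)
  -- iterated doubling
  have dbl : ∀ (x : M) (R : ℝ) (n : ℕ), 0 < R →
      μ (ball x (2 ^ n * R)) ≤ ENNReal.ofReal C ^ n * μ (ball x R) := by
    intro x R n hR
    induction n with
    | zero => simp
    | succ n ih =>
      have h2 : (2 : ℝ) ^ (n + 1) * R = 2 * (2 ^ n * R) := by ring
      rw [h2]
      calc μ (ball x (2 * (2 ^ n * R))) ≤ ENNReal.ofReal C * μ (ball x (2 ^ n * R)) :=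
            hdbl x _ (by positivity)
        _ ≤ ENNReal.ofReal C * (ENNReal.ofReal C ^ n * μ (ball x R)) := mul_le_mul_right ih _
        _ = ENNReal.ofReal C ^ (n + 1) * μ (ball x R) := by ring
  -- comparison for small times
  have compare : ∀ t : ℝ, 0 < t → C ^ 2 * t ≤ T → H t < ⊤ := by
    intro t ht htT
    have hst : 0 < Real.sqrt t := Real.sqrt_pos.2 ht
    have hsT : 0 < Real.sqrt T := Real.sqrt_pos.2 hT
    obtain ⟨n, hn⟩ := pow_unbounded_of_one_lt (Real.sqrt T / Real.sqrt t) one_lt_two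
    have hTt : Real.sqrt T ≤ 2 ^ n * Real.sqrt t := by
      rw [div_lt_iff₀ hst] at hn
      linarith
    set K : ℝ≥0∞ := ENNReal.ofReal C ^ (n + 2) with hK
    have hKne : K ≠ ⊤ := by
      rw [hK]
      exact ENNReal.pow_ne_top ENNReal.ofReal_ne_top
    have hpt : ∀ x y : M, p x y t ≤ K * p x y T := by
      intro x y
      set a := μ (ball x (Real.sqrt t)) * μ (ball y (Real.sqrt t)) with ha
      set b := μ (ball x (Real.sqrt T)) * μ (ball y (Real.sqrt T)) with hb
      set c : ℝ≥0∞ := ENNReal.ofReal C ^ n with hc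
      have hc0 : c ≠ 0 := by
        rw [hc]
        exact pow_ne_zero _ (by simp [ENNReal.ofReal_eq_zero]; linarith)
      have hcT : c ≠ ⊤ := by
        rw [hc]; exact ENNReal.pow_ne_top ENNReal.ofReal_ne_top
      have ha0 : a ≠ 0 := (mul_pos (hball x _ hst).1.ne' (hball y _ hst).1.ne').ne'
      have haT : a ≠ ⊤ := ENNReal.mul_ne_top (hball x _ hst).2.ne (hball y _ hst).2.ne
      have hb0 : b ≠ 0 := (mul_pos (hball x _ hsT).1.ne' (hball y _ hsT).1.ne').ne'
      have hbT : b ≠ ⊤ := ENNReal.mul_ne_top (hball x _ hsT).2.ne (hball y _ hsT).2.ne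
      have hVx : μ (ball x (Real.sqrt T)) ≤ ENNReal.ofReal C ^ n * μ (ball x (Real.sqrt t)) :=
        (measure_mono (ball_subset_ball hTt)).trans (dbl x _ n hst)
      have hVy : μ (ball y (Real.sqrt T)) ≤ ENNReal.ofReal C ^ n * μ (ball y (Real.sqrt t)) :=
        (measure_mono (ball_subset_ball hTt)).trans (dbl y _ n hst)
      have hb_le : b ≤ c ^ 2 * a := by
        rw [hb, ha, hc]
        calc μ (ball x (Real.sqrt T)) * μ (ball y (Real.sqrt T))
            ≤ (ENNReal.ofReal C ^ n * μ (ball x (Real.sqrt t))) *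
              (ENNReal.ofReal C ^ n * μ (ball y (Real.sqrt t))) := mul_le_mul' hVx hVy
          _ = (ENNReal.ofReal C ^ n) ^ 2 *
              (μ (ball x (Real.sqrt t)) * μ (ball y (Real.sqrt t))) := by ring
      -- volume factor comparison
      have hbh : b ^ ((1 : ℝ) / 2) ≤ c * a ^ ((1 : ℝ) / 2) := by
        calc b ^ ((1 : ℝ) / 2) ≤ (c ^ 2 * a) ^ ((1 : ℝ) / 2) :=
              ENNReal.rpow_le_rpow hb_le (by norm_num)
          _ = (c ^ 2) ^ ((1 : ℝ) / 2) * a ^ ((1 : ℝ) / 2) :=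
              ENNReal.mul_rpow_of_nonneg _ _ (by norm_num)
          _ = c * a ^ ((1 : ℝ) / 2) := by
              congr 1
              rw [← ENNReal.rpow_natCast c 2, ← ENNReal.rpow_mul]
              norm_num
      have hb12_0 : b ^ ((1 : ℝ) / 2) ≠ 0 :=
        (ENNReal.rpow_pos (pos_iff_ne_zero.2 hb0) hbT).ne'
      have hb12_T : b ^ ((1 : ℝ) / 2) ≠ ⊤ :=
        (ENNReal.rpow_lt_top_of_nonneg (by norm_num) hbT).ne
      have hvol : a ^ (-(1 : ℝ) / 2) ≤ c * b ^ (-(1 : ℝ) / 2) := by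
        rw [show (-(1 : ℝ) / 2) = -(1 / 2) by norm_num, ENNReal.rpow_neg, ENNReal.rpow_neg]
        have hrw : c * (b ^ ((1 : ℝ) / 2))⁻¹ = (b ^ ((1 : ℝ) / 2) * c⁻¹)⁻¹ := by
          rw [ENNReal.mul_inv (Or.inl hb12_0) (Or.inl hb12_T), inv_inv, mul_comm]
        rw [hrw]
        refine ENNReal.inv_le_inv.2 ?_
        calc b ^ ((1 : ℝ) / 2) * c⁻¹ ≤ (c * a ^ ((1 : ℝ) / 2)) * c⁻¹ :=
              mul_le_mul_left hbh _
          _ = a ^ ((1 : ℝ) / 2) * (c * c⁻¹) := by ring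
          _ = a ^ ((1 : ℝ) / 2) := by rw [ENNReal.mul_inv_cancel hc0 hcT, mul_one]
      -- exponential factor comparison
      have hexp : Real.exp (-(dist x y ^ 2) / (C * t)) ≤ Real.exp (-(C * dist x y ^ 2) / T) := by
        apply Real.exp_le_exp.2
        rw [div_le_div_iff₀ (mul_pos hC0 ht) hT]
        nlinarith [sq_nonneg (dist x y), mul_le_mul_of_nonneg_right htT (sq_nonneg (dist x y))]
      have hof : ENNReal.ofReal (C * Real.exp (-(dist x y ^ 2) / (C * t)))
          ≤ ENNReal.ofReal C ^ 2 * ENNReal.ofReal (C⁻¹ * Real.exp (-(C * dist x y ^ 2) / T)) := by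
        rw [← ENNReal.ofReal_pow hC0.le, ← ENNReal.ofReal_mul (by positivity)]
        apply ENNReal.ofReal_le_ofReal
        have hcc : C ^ 2 * (C⁻¹ * Real.exp (-(C * dist x y ^ 2) / T))
            = C * Real.exp (-(C * dist x y ^ 2) / T) := by
          field_simp
        rw [hcc]
        exact mul_le_mul_of_nonneg_left hexp hC0.le
      calc p x y t ≤ ENNReal.ofReal (C * Real.exp (-(dist x y ^ 2) / (C * t)))
            * a ^ (-(1 : ℝ) / 2) := hLY_upper x y t ht
        _ ≤ (ENNReal.ofReal C ^ 2 * ENNReal.ofReal (C⁻¹ * Real.exp (-(C * dist x y ^ 2) / T))) *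
            (c * b ^ (-(1 : ℝ) / 2)) := mul_le_mul' hof hvol
        _ = K * (ENNReal.ofReal (C⁻¹ * Real.exp (-(C * dist x y ^ 2) / T)) *
            b ^ (-(1 : ℝ) / 2)) := by
            rw [hK, hc]
            ring
        _ ≤ K * p x y T := mul_le_mul_right (hLY_lower x y T hT) _
    have hle : H t ≤ K * H T := by
      rw [hH t, hH T]
      calc ∫⁻ x in Ω, ∫⁻ y in Ω, p x y t ∂μ ∂μ
          ≤ ∫⁻ x in Ω, K * ∫⁻ y in Ω, p x y T ∂μ ∂μ := by
            refine lintegral_mono fun x => ?_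
            calc ∫⁻ y in Ω, p x y t ∂μ ≤ ∫⁻ y in Ω, K * p x y T ∂μ :=
                  lintegral_mono fun y => hpt x y
              _ = K * ∫⁻ y in Ω, p x y T ∂μ := lintegral_const_mul' _ _ hKne
        _ = K * ∫⁻ x in Ω, ∫⁻ y in Ω, p x y T ∂μ ∂μ := lintegral_const_mul' _ _ hKne
    exact hle.trans_lt (ENNReal.mul_lt_top hKne.lt_top hHT)
  -- conclusion
  intro t ht
  have hC2 : (0 : ℝ) < C ^ 2 := by positivity
  have ht0 : 0 < T / C ^ 2 := by positivity
  have hcmp0 : C ^ 2 * (T / C ^ 2) = T := by field_simp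
  rcases le_or_gt (T / C ^ 2) t with h | h
  · exact (mono _ t ht0 h).trans_lt (compare _ ht0 hcmp0.le)
  · refine compare t ht ?_
    have := mul_lt_mul_of_pos_left h hC2
    rw [hcmp0] at this
    exact this.le
end

section
/- Let (M,d,μ) be a metric measure space with 0 < μ(B(x;R)) < ∞ for all x ∈ M, R > 0, and let p : M × M × (0,∞) → [0,∞) be a measurable symmetric kernel satisfying the semigroup property, stochastic completeness ∫_M p(x,y;t) dμ(y) = 1, and, for some constant C ∈ [2,∞), the two-sided Li–Yau Gaussian bound C^{-1} e^{-C d(x,y)²/t} (μ(B(x;t^{1/2})) μ(B(y;t^{1/2})))^{-1/2} ≤ p(x,y;t) ≤ C e^{-d(x,y)²/(Ct)} (μ(B(x;t^{1/2})) μ(B(y;t^{1/2})))^{-1/2}, together with volume doubling μ(B(x;2R)) ≤ C μ(B(x;R)). Let Ω ⊆ M be open, define H_Ω(t) = ∫_Ω ∫_Ω p(x,y;t) dμ(y) dμ(x) and μ_Ω(x;R) = μ(B(x;R) ∩ Ω). If H_Ω(T) < ∞ for some T > 0, then for all t > 0, ∫_Ω μ_Ω(x;t^{1/2}) / μ(B(x;t^{1/2}))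 dμ(x) < ∞. -/
open MeasureTheory Metric ENNReal

/-- Theorem 1(i): under the Li–Yau bound and volume doubling, if the heat content
`H_Ω(T)` is finite for some `T > 0`, then `∫_Ω μ(B(x;√t) ∩ Ω)/μ(B(x;√t)) dμ(x) < ∞`
for all `t > 0`. -/
theorem heat_content_integral_finite
    {M : Type*} [MetricSpace M] [MeasurableSpace M] [BorelSpace M]
    (μ : Measure M)
    (hball : ∀ x : M, ∀ R : ℝ, 0 < R → 0 < μ (ball x R) ∧ μ (ball x R) < ⊤)
    (p : M → M → ℝ → ℝ≥0∞)
    (hp_meas : Measurable fun q : M × M × ℝ => p q.1 q.2.1 q.2.2)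
    (hp_symm : ∀ x y : M, ∀ t : ℝ, 0 < t → p x y t = p y x t)
    (hp_semi : ∀ x y : M, ∀ s t : ℝ, 0 < s → 0 < t →
      p x y (s + t) = ∫⁻ z, p x z s * p z y t ∂μ)
    (hp_sc : ∀ x : M, ∀ t : ℝ, 0 < t → ∫⁻ y, p x y t ∂μ = 1)
    (C : ℝ) (hC : 2 ≤ C)
    (hLY_lower : ∀ x y : M, ∀ t : ℝ, 0 < t →
      ENNReal.ofReal (C⁻¹ * Real.exp (-(C * dist x y ^ 2) / t)) *
        (μ (ball x (Real.sqrt t)) * μ (ball y (Real.sqrt t))) ^ (-(1 : ℝ) / 2)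
        ≤ p x y t)
    (hLY_upper : ∀ x y : M, ∀ t : ℝ, 0 < t →
      p x y t ≤ ENNReal.ofReal (C * Real.exp (-(dist x y ^ 2) / (C * t))) *
        (μ (ball x (Real.sqrt t)) * μ (ball y (Real.sqrt t))) ^ (-(1 : ℝ) / 2))
    (hdbl : ∀ x : M, ∀ R : ℝ, 0 < R →
      μ (ball x (2 * R)) ≤ ENNReal.ofReal C * μ (ball x R))
    (Ω : Set M) (hΩ : IsOpen Ω)
    (H : ℝ → ℝ≥0∞)
    (hH : ∀ t : ℝ, H t = ∫⁻ x in Ω, ∫⁻ y in Ω, p x y t ∂μ ∂μ)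
    (T : ℝ) (hT : 0 < T) (hHT : H T < ⊤) :
    ∀ t : ℝ, 0 < t →
      (∫⁻ x in Ω, μ (ball x (Real.sqrt t) ∩ Ω) / μ (ball x (Real.sqrt t)) ∂μ) < ⊤ := by
  intro t ht
  set s := Real.sqrt t with hs_def
  have hs : 0 < s := Real.sqrt_pos.mpr ht
  have hsT : 0 < Real.sqrt T := Real.sqrt_pos.mpr hT
  set r := max s (Real.sqrt T) with hr_def
  have hsr : s ≤ r := le_max_left _ _
  have hTr : Real.sqrt T ≤ r := le_max_right _ _
  have hr : 0 < r := lt_of_lt_of_le hs hsr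
  set D := ENNReal.ofReal C with hD_def
  have hC1 : (1 : ℝ) ≤ C := by linarith
  have hD1 : (1 : ℝ≥0∞) ≤ D := by
    rw [hD_def]; exact ENNReal.one_le_ofReal.mpr hC1
  have hD0 : D ≠ 0 := by
    intro h; rw [h] at hD1; exact (zero_lt_one.not_ge hD1)
  have hDtop : D ≠ ⊤ := ENNReal.ofReal_ne_top
  -- doubling iterated
  have hdbl_iter : ∀ (x : M) (R : ℝ), 0 < R → ∀ n : ℕ,
      μ (ball x (2 ^ n * R)) ≤ D ^ n * μ (ball x R) := by
    intro x R hR n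
    induction n with
    | zero => simp
    | succ n ih =>
      have h2 : (2 : ℝ) ^ (n + 1) * R = 2 * (2 ^ n * R) := by ring
      have hpos : 0 < (2 : ℝ) ^ n * R := by positivity
      calc μ (ball x (2 ^ (n + 1) * R)) = μ (ball x (2 * (2 ^ n * R))) := by rw [h2]
        _ ≤ D * μ (ball x (2 ^ n * R)) := hdbl x _ hpos
        _ ≤ D * (D ^ n * μ (ball x R)) := mul_le_mul_right ih D
        _ = D ^ (n + 1) * μ (ball x R) := by ring
  -- choose n with r ≤ 2^n * s
  obtain ⟨n, hn⟩ := exists_nat_gt (r / s)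
  have hrn : r ≤ 2 ^ n * s := by
    have h1 : r < n * s := by
      rw [div_lt_iff₀ hs] at hn; linarith
    have h2 : (n : ℝ) ≤ 2 ^ n := by
      exact_mod_cast (Nat.lt_two_pow_self (n := n)).le
    nlinarith
  -- the constant
  set ε0 := ENNReal.ofReal (C⁻¹ * Real.exp (-(C * r ^ 2) / T)) with hε0_def
  have hε0_pos : 0 < ε0 := by
    rw [hε0_def]
    apply ENNReal.ofReal_pos.mpr
    have hCinv : 0 < C⁻¹ := by positivity
    positivity
  set ε := ε0 * (D ^ (n + 1))⁻¹ with hε_def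
  have hDn_top : D ^ (n + 1) ≠ ⊤ := ENNReal.pow_ne_top hDtop
  have hDn_0 : D ^ (n + 1) ≠ 0 := pow_ne_zero _ hD0
  have hε_pos : ε ≠ 0 := mul_ne_zero hε0_pos.ne' (ENNReal.inv_ne_zero.mpr hDn_top)
  have hε_top : ε ≠ ⊤ :=
    ENNReal.mul_ne_top ENNReal.ofReal_ne_top (ENNReal.inv_ne_top.mpr hDn_0)
  -- pointwise lower bound on p x y T for y ∈ ball x s
  have key : ∀ x : M, ∀ y ∈ ball x s, ε * (μ (ball x s))⁻¹ ≤ p x y T := by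
    intro x y hy
    set V := μ (ball x s) with hV_def
    obtain ⟨hV0, hVtop⟩ := hball x s hs
    set W := D ^ (n + 1) * V with hW_def
    have hW0 : W ≠ 0 := mul_ne_zero hDn_0 hV0.ne'
    have hWtop : W ≠ ⊤ := ENNReal.mul_ne_top hDn_top hVtop.ne
    have hdxy : dist x y < s := by rwa [mem_ball, dist_comm] at hy
    have hx_vol : μ (ball x (Real.sqrt T)) ≤ W := by
      calc μ (ball x (Real.sqrt T)) ≤ μ (ball x (2 ^ n * s)) :=
            measure_mono (ball_subset_ball (le_trans hTr hrn))
        _ ≤ D ^ n * V := hdbl_iter x s hs n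
        _ ≤ D ^ (n + 1) * V :=
            mul_le_mul_left (pow_le_pow_right₀ hD1 (Nat.le_succ n)) V
    have hy_vol : μ (ball y (Real.sqrt T)) ≤ W := by
      have hsub : ball y (Real.sqrt T) ⊆ ball x (2 ^ (n + 1) * s) := by
        apply ball_subset_ball'
        have hdyx : dist y x < s := by rwa [dist_comm] at hdxy
        have h2n : s ≤ 2 ^ n * s := le_trans hsr hrn
        have h2 : (2 : ℝ) ^ (n + 1) * s = 2 ^ n * s + 2 ^ n * s := by ring
        rw [h2]
        have h3 : Real.sqrt T ≤ 2 ^ n * s := le_trans hTr hrn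
        linarith
      calc μ (ball y (Real.sqrt T)) ≤ μ (ball x (2 ^ (n + 1) * s)) := measure_mono hsub
        _ ≤ D ^ (n + 1) * V := hdbl_iter x s hs (n + 1)
    -- the rpow manipulation
    have hprod : μ (ball x (Real.sqrt T)) * μ (ball y (Real.sqrt T)) ≤ W * W :=
      mul_le_mul' hx_vol hy_vol
    have hWW : (W * W) ^ (-(1 : ℝ) / 2) = W⁻¹ := by
      have : W * W = W ^ ((2 : ℕ) : ℝ) := by
        rw [ENNReal.rpow_natCast]; ring
      rw [this, ← ENNReal.rpow_mul]
      norm_num [ENNReal.rpow_neg_one]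
    have hrpow : W⁻¹ ≤ (μ (ball x (Real.sqrt T)) * μ (ball y (Real.sqrt T))) ^ (-(1 : ℝ) / 2) := by
      rw [← hWW]
      have h12 : (-(1 : ℝ) / 2) = -(1 / 2) := by norm_num
      rw [h12, ENNReal.rpow_neg, ENNReal.rpow_neg]
      exact ENNReal.inv_le_inv.mpr (ENNReal.rpow_le_rpow hprod (by norm_num))
    have hexp : ε0 ≤ ENNReal.ofReal (C⁻¹ * Real.exp (-(C * dist x y ^ 2) / T)) := by
      apply ENNReal.ofReal_le_ofReal
      have hCinv : (0 : ℝ) ≤ C⁻¹ := by positivity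
      apply mul_le_mul_of_nonneg_left _ hCinv
      apply Real.exp_le_exp.mpr
      have hd2 : dist x y ^ 2 ≤ r ^ 2 :=
        pow_le_pow_left₀ dist_nonneg (le_of_lt (lt_of_lt_of_le hdxy hsr)) 2
      have hnum : -(C * r ^ 2) ≤ -(C * dist x y ^ 2) := by nlinarith
      gcongr
    have hεW : ε * V⁻¹ = ε0 * W⁻¹ := by
      rw [hε_def, hW_def, ENNReal.mul_inv (Or.inl hDn_0) (Or.inl hDn_top), mul_assoc]
    calc ε * V⁻¹ = ε0 * W⁻¹ := hεW
      _ ≤ ENNReal.ofReal (C⁻¹ * Real.exp (-(C * dist x y ^ 2) / T)) *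
          (μ (ball x (Real.sqrt T)) * μ (ball y (Real.sqrt T))) ^ (-(1 : ℝ) / 2) :=
          mul_le_mul' hexp hrpow
      _ ≤ p x y T := hLY_lower x y T hT
  -- now integrate
  have step : ∀ x : M,
      ε * (μ (ball x s ∩ Ω) / μ (ball x s)) ≤ ∫⁻ y in Ω, p x y T ∂μ := by
    intro x
    have hmeasA : MeasurableSet (ball x s ∩ Ω) :=
      (isOpen_ball.inter hΩ).measurableSet
    calc ε * (μ (ball x s ∩ Ω) / μ (ball x s))
        = (ε * (μ (ball x s))⁻¹) * μ (ball x s ∩ Ω) := by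
          rw [div_eq_mul_inv]; ring
      _ = ∫⁻ _ in ball x s ∩ Ω, ε * (μ (ball x s))⁻¹ ∂μ := by
          rw [setLIntegral_const]
      _ ≤ ∫⁻ y in ball x s ∩ Ω, p x y T ∂μ := by
          apply setLIntegral_mono' hmeasA
          intro y hy
          exact key x y hy.1
      _ ≤ ∫⁻ y in Ω, p x y T ∂μ := lintegral_mono_set Set.inter_subset_right
  have final : ε * (∫⁻ x in Ω, μ (ball x s ∩ Ω) / μ (ball x s) ∂μ) ≤ H T := by
    rw [hH T, ← lintegral_const_mul' ε _ hε_top]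
    exact lintegral_mono fun x => step x
  by_contra hcon
  push_neg at hcon
  have htop : (∫⁻ x in Ω, μ (ball x s ∩ Ω) / μ (ball x s) ∂μ) = ⊤ := top_le_iff.mp hcon
  rw [htop, ENNReal.mul_top hε_pos] at final
  exact lt_irrefl ⊤ (lt_of_le_of_lt final hHT)
end

section
/- Let (M,d,μ) be a metric measure space with 0 < μ(B(x;R)) < ∞ for all x ∈ M, R > 0, and let p : M × M × (0,∞) → [0,∞) be a measurable symmetric kernel satisfying the semigroup property, stochastic completeness ∫_M p(x,y;t) dμ(y) = 1, and, for some constant C ∈ [2,∞), the two-sided Li–Yau Gaussian bound C^{-1} e^{-C d(x,y)²/t} (μ(B(x;t^{1/2})) μ(B(y;t^{1/2})))^{-1/2} ≤ p(x,y;t) ≤ C e^{-d(x,y)²/(Ct)} (μ(B(x;t^{1/2})) μ(B(y;t^{1/2})))^{-1/2}, together with volume doubling μ(B(x;2R)) ≤ C μ(B(x;R)). Let Ω ⊆ M be open with μ(Ω) < ∞, and define the heat loss F_Ω(t) = μ(Ω) − H_Ω(t), where H_Ω(t) = ∫_Ω ∫_Ω p(x,y;t) dμ(y) dμ(x), and ν_Ω(x;R)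 = μ(B(x;R) \ Ω). Then for all t > 0, L₁ ∫_Ω ν_Ω(x;t^{1/2}) / μ(B(x;t^{1/2})) dμ(x) ≤ F_Ω(t) ≤ L₂ ∫_Ω ν_Ω(x;t^{1/2}) / μ(B(x;t^{1/2})) dμ(x), where L₁ = C^{-2} e^{-C} and L₂ = 4 C^{15/4} ( C · log( 2 C^{7 + (log C)/(log 2)} ) )^{1 + (3 log C)/(4 log 2)}. -/
open MeasureTheory Metric ENNReal

set_option linter.unusedSectionVars false
set_option linter.unusedVariables false
set_option maxHeartbeats 3200000

section HeatLossAux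

variable {M : Type*} [MetricSpace M] [MeasurableSpace M] [BorelSpace M]

/-- The heat loss expressed as a double integral over `Ω × Ωᶜ`. -/
noncomputable def hlG (μ : Measure M) (p : M → M → ℝ → ℝ≥0∞) (Ω : Set M) (u : ℝ) : ℝ≥0∞ :=
  ∫⁻ x in Ω, ∫⁻ y in Ωᶜ, p x y u ∂μ ∂μ



lemma hl_sigmaFinite (μ : Measure M)
    (hball : ∀ x : M, ∀ R : ℝ, 0 < R → μ (ball x R) < ⊤) : SigmaFinite μ := by
  rcases isEmpty_or_nonempty M with h | h
  · exact ⟨⟨⟨fun _ => ∅, fun _ => trivial, fun _ => by simp, by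
      simp [Set.univ_eq_empty_iff.2 h]⟩⟩⟩
  · refine ⟨⟨⟨fun k => ball (Classical.arbitrary M) (k + 1), fun _ => trivial,
      fun k => hball _ _ (by positivity), ?_⟩⟩⟩
    apply Set.eq_univ_of_forall
    intro y
    rcases exists_nat_gt (dist y (Classical.arbitrary M)) with ⟨k, hk⟩
    refine Set.mem_iUnion.2 ⟨k, ?_⟩
    simp only [mem_ball]
    linarith

lemma hl_ball_pow (μ : Measure M) {C : ℝ} (hC : 0 ≤ C)
    (hdbl : ∀ x : M, ∀ R : ℝ, 0 < R → μ (ball x (2 * R)) ≤ ENNReal.ofReal C * μ (ball x R))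
    (x : M) {R : ℝ} (hR : 0 < R) (k : ℕ) :
    μ (ball x (2 ^ k * R)) ≤ ENNReal.ofReal (C ^ k) * μ (ball x R) := by
  induction k with
  | zero => simp
  | succ k ih =>
    have h1 : (2 : ℝ) ^ (k + 1) * R = 2 * (2 ^ k * R) := by ring
    have h2 : μ (ball x (2 * (2 ^ k * R))) ≤ ENNReal.ofReal C * μ (ball x (2 ^ k * R)) :=
      hdbl x _ (by positivity)
    calc μ (ball x (2 ^ (k + 1) * R)) = μ (ball x (2 * (2 ^ k * R))) := by rw [h1]
      _ ≤ ENNReal.ofReal C * μ (ball x (2 ^ k * R)) := h2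
      _ ≤ ENNReal.ofReal C * (ENNReal.ofReal (C ^ k) * μ (ball x R)) := by
          exact mul_le_mul_right ih _
      _ = ENNReal.ofReal (C ^ (k + 1)) * μ (ball x R) := by
          rw [← mul_assoc, ← ENNReal.ofReal_mul hC, pow_succ]
          ring_nf

lemma hl_ball_le (μ : Measure M) {C : ℝ} (hC : 0 ≤ C)
    (hdbl : ∀ x : M, ∀ R : ℝ, 0 < R → μ (ball x (2 * R)) ≤ ENNReal.ofReal C * μ (ball x R))
    (x : M) {R R' : ℝ} (hR : 0 < R) (k : ℕ) (h : R' ≤ 2 ^ k * R) :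
    μ (ball x R') ≤ ENNReal.ofReal (C ^ k) * μ (ball x R) :=
  (measure_mono (ball_subset_ball h)).trans (hl_ball_pow μ hC hdbl x hR k)

lemma hl_real_aux1 {A B XR c₁ c₂ : ℝ} (hA : 0 < A) (hB : 0 < B) (hX : 0 < XR)
    (h1 : XR ≤ c₁ * A) (h2 : XR ≤ c₂ * B) :
    (A * B) ^ (-(1 : ℝ) / 2) ≤ Real.sqrt (c₁ * c₂) / XR := by
  have hc₁ : 0 < c₁ := by nlinarith
  have hc₂ : 0 < c₂ := by nlinarith
  have hAB : 0 < A * B := mul_pos hA hB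
  have key : XR ≤ Real.sqrt (c₁ * c₂) * Real.sqrt (A * B) := by
    have h3 : XR ^ 2 ≤ (c₁ * c₂) * (A * B) := by nlinarith
    calc XR = Real.sqrt (XR ^ 2) := (Real.sqrt_sq hX.le).symm
      _ ≤ Real.sqrt ((c₁ * c₂) * (A * B)) := Real.sqrt_le_sqrt h3
      _ = Real.sqrt (c₁ * c₂) * Real.sqrt (A * B) := Real.sqrt_mul (by positivity) _
  have hsAB : 0 < Real.sqrt (A * B) := Real.sqrt_pos.2 hAB
  rw [neg_div, Real.rpow_neg hAB.le, ← Real.sqrt_eq_rpow, le_div_iff₀ hX,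
    inv_mul_le_iff₀ hsAB]
  linarith [key]

lemma hl_real_aux2 {A B XR c₁ c₂ : ℝ} (hA : 0 < A) (hB : 0 < B) (hX : 0 < XR)
    (hc₁ : 0 ≤ c₁) (hc₂ : 0 ≤ c₂)
    (h1 : A ≤ c₁ * XR) (h2 : B ≤ c₂ * XR) :
    (Real.sqrt (c₁ * c₂))⁻¹ / XR ≤ (A * B) ^ (-(1 : ℝ) / 2) := by
  have hAB : 0 < A * B := mul_pos hA hB
  have key : Real.sqrt (A * B) ≤ Real.sqrt (c₁ * c₂) * XR := by
    have h3 : A * B ≤ (c₁ * c₂) * XR ^ 2 := by nlinarith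
    calc Real.sqrt (A * B) ≤ Real.sqrt ((c₁ * c₂) * XR ^ 2) := Real.sqrt_le_sqrt h3
      _ = Real.sqrt (c₁ * c₂) * XR := by
          rw [Real.sqrt_mul (by positivity), Real.sqrt_sq hX.le]
  have hsAB : 0 < Real.sqrt (A * B) := Real.sqrt_pos.2 hAB
  rw [neg_div, Real.rpow_neg hAB.le, ← Real.sqrt_eq_rpow, div_eq_mul_inv, ← mul_inv]
  exact inv_anti₀ hsAB key

lemma hl_real_aux3 {A B A' B' c : ℝ} (hA : 0 < A) (hB : 0 < B) (hA' : 0 < A') (hB' : 0 < B')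
    (h1 : A' ≤ c * A) (h2 : B' ≤ c * B) :
    (A * B) ^ (-(1 : ℝ) / 2) ≤ c * (A' * B') ^ (-(1 : ℝ) / 2) := by
  have hc : 0 < c := by nlinarith
  have hAB : 0 < A * B := mul_pos hA hB
  have hAB' : 0 < A' * B' := mul_pos hA' hB'
  have key : Real.sqrt (A' * B') ≤ c * Real.sqrt (A * B) := by
    have h3 : A' * B' ≤ c ^ 2 * (A * B) := by nlinarith
    calc Real.sqrt (A' * B') ≤ Real.sqrt (c ^ 2 * (A * B)) := Real.sqrt_le_sqrt h3
      _ = c * Real.sqrt (A * B) := by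
          rw [Real.sqrt_mul (by positivity), Real.sqrt_sq hc.le]
  have hsAB : 0 < Real.sqrt (A * B) := Real.sqrt_pos.2 hAB
  have hsAB' : 0 < Real.sqrt (A' * B') := Real.sqrt_pos.2 hAB'
  rw [neg_div, Real.rpow_neg hAB.le, ← Real.sqrt_eq_rpow,
    Real.rpow_neg hAB'.le, ← Real.sqrt_eq_rpow]
  have h5 : (c * Real.sqrt (A * B))⁻¹ ≤ (Real.sqrt (A' * B'))⁻¹ :=
    inv_anti₀ hsAB' key
  calc (Real.sqrt (A * B))⁻¹ = c * (c * Real.sqrt (A * B))⁻¹ := by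
        field_simp
    _ ≤ c * (Real.sqrt (A' * B'))⁻¹ := by
        exact mul_le_mul_of_nonneg_left h5 hc.le

lemma hl_pow_ge (j : ℕ) : (2 * j + 1 : ℝ) ≤ 4 ^ j := by
  induction j with
  | zero => norm_num
  | succ j ih =>
    have : (4 : ℝ) ^ (j + 1) = 4 * 4 ^ j := by ring
    rw [this]
    push_cast
    push_cast at ih
    nlinarith

lemma hl_exists_annulus {q : ℝ} (hq : 1 ≤ q) : ∃ j : ℕ, (2 : ℝ) ^ j ≤ q ∧ q < 2 ^ (j + 1) := by
  have hq0 : 0 ≤ q := by linarith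
  set k : ℕ := ⌊q⌋₊ with hk
  have hk1 : 1 ≤ k := Nat.le_floor (by exact_mod_cast hq)
  have hk0 : k ≠ 0 := by omega
  refine ⟨Nat.log 2 k, ?_, ?_⟩
  · calc ((2 : ℝ) ^ Nat.log 2 k) = ((2 ^ Nat.log 2 k : ℕ) : ℝ) := by push_cast; ring
      _ ≤ (k : ℝ) := by exact_mod_cast Nat.pow_log_le_self 2 hk0
      _ ≤ q := Nat.floor_le hq0
  · have h1 : k < 2 ^ (Nat.log 2 k + 1) := Nat.lt_pow_succ_log_self (by norm_num) k
    have h2 : (k : ℝ) + 1 ≤ ((2 : ℝ) ^ (Nat.log 2 k + 1)) := by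
      have : k + 1 ≤ 2 ^ (Nat.log 2 k + 1) := h1
      exact_mod_cast this
    have h3 : q < (k : ℝ) + 1 := Nat.lt_floor_add_one q
    linarith


end HeatLossAux


lemma hl_enn_prod_rpow {a b : ℝ≥0∞} (ha0 : a ≠ 0) (hat : a ≠ ⊤) (hb0 : b ≠ 0) (hbt : b ≠ ⊤) :
    (a * b) ^ (-(1 : ℝ) / 2)
      = ENNReal.ofReal ((a.toReal * b.toReal) ^ (-(1 : ℝ) / 2)) := by
  have h : a * b = ENNReal.ofReal (a.toReal * b.toReal) := by
    rw [ENNReal.ofReal_mul ENNReal.toReal_nonneg, ENNReal.ofReal_toReal hat,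
      ENNReal.ofReal_toReal hbt]
  rw [h, ← ENNReal.ofReal_rpow_of_pos]
  exact mul_pos (ENNReal.toReal_pos ha0 hat) (ENNReal.toReal_pos hb0 hbt)

private lemma hl_ofReal_pos_of_le {X : ℝ≥0∞} {c : ℝ} {a : ℝ≥0∞} (hX0 : X ≠ 0)
    (h : X ≤ ENNReal.ofReal c * a) : 0 < c := by
  by_contra h'
  push_neg at h'
  rw [ENNReal.ofReal_eq_zero.2 h', zero_mul] at h
  exact hX0 (le_zero_iff.1 h)

private lemma hl_toReal_le {X : ℝ≥0∞} {c : ℝ} {a : ℝ≥0∞} (hat : a ≠ ⊤) (hXt : X ≠ ⊤)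
    (hc : 0 ≤ c) (h : X ≤ ENNReal.ofReal c * a) : X.toReal ≤ c * a.toReal := by
  have hne : ENNReal.ofReal c * a ≠ ⊤ := ENNReal.mul_ne_top ENNReal.ofReal_ne_top hat
  have := ENNReal.toReal_mono hne h
  rwa [ENNReal.toReal_mul, ENNReal.toReal_ofReal hc] at this

lemma hl_enn_aux1 {a b X : ℝ≥0∞} {c₁ c₂ : ℝ}
    (ha0 : a ≠ 0) (hat : a ≠ ⊤) (hb0 : b ≠ 0) (hbt : b ≠ ⊤) (hX0 : X ≠ 0) (hXt : X ≠ ⊤)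
    (h1 : X ≤ ENNReal.ofReal c₁ * a) (h2 : X ≤ ENNReal.ofReal c₂ * b) :
    (a * b) ^ (-(1 : ℝ) / 2) ≤ ENNReal.ofReal (Real.sqrt (c₁ * c₂)) / X := by
  have hc₁ : 0 < c₁ := hl_ofReal_pos_of_le hX0 h1
  have hc₂ : 0 < c₂ := hl_ofReal_pos_of_le hX0 h2
  have h1' : X.toReal ≤ c₁ * a.toReal := hl_toReal_le hat hXt hc₁.le h1
  have h2' : X.toReal ≤ c₂ * b.toReal := hl_toReal_le hbt hXt hc₂.le h2
  have hXpos : 0 < X.toReal := ENNReal.toReal_pos hX0 hXt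
  have key := hl_real_aux1 (ENNReal.toReal_pos ha0 hat) (ENNReal.toReal_pos hb0 hbt)
    hXpos h1' h2'
  rw [hl_enn_prod_rpow ha0 hat hb0 hbt]
  calc ENNReal.ofReal ((a.toReal * b.toReal) ^ (-(1 : ℝ) / 2))
      ≤ ENNReal.ofReal (Real.sqrt (c₁ * c₂) / X.toReal) := ENNReal.ofReal_le_ofReal key
    _ = ENNReal.ofReal (Real.sqrt (c₁ * c₂)) / ENNReal.ofReal X.toReal :=
        ENNReal.ofReal_div_of_pos hXpos
    _ = ENNReal.ofReal (Real.sqrt (c₁ * c₂)) / X := by rw [ENNReal.ofReal_toReal hXt]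

lemma hl_enn_aux2 {a b X : ℝ≥0∞} {c₁ c₂ : ℝ}
    (ha0 : a ≠ 0) (hat : a ≠ ⊤) (hb0 : b ≠ 0) (hbt : b ≠ ⊤) (hX0 : X ≠ 0) (hXt : X ≠ ⊤)
    (hc₁ : 0 ≤ c₁) (hc₂ : 0 ≤ c₂)
    (h1 : a ≤ ENNReal.ofReal c₁ * X) (h2 : b ≤ ENNReal.ofReal c₂ * X) :
    ENNReal.ofReal ((Real.sqrt (c₁ * c₂))⁻¹) / X ≤ (a * b) ^ (-(1 : ℝ) / 2) := by
  have h1' : a.toReal ≤ c₁ * X.toReal := hl_toReal_le hXt hat hc₁ h1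
  have h2' : b.toReal ≤ c₂ * X.toReal := hl_toReal_le hXt hbt hc₂ h2
  have hXpos : 0 < X.toReal := ENNReal.toReal_pos hX0 hXt
  have key := hl_real_aux2 (ENNReal.toReal_pos ha0 hat) (ENNReal.toReal_pos hb0 hbt)
    hXpos hc₁ hc₂ h1' h2'
  rw [hl_enn_prod_rpow ha0 hat hb0 hbt]
  calc ENNReal.ofReal ((Real.sqrt (c₁ * c₂))⁻¹) / X
      = ENNReal.ofReal ((Real.sqrt (c₁ * c₂))⁻¹) / ENNReal.ofReal X.toReal := by
        rw [ENNReal.ofReal_toReal hXt]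
    _ = ENNReal.ofReal ((Real.sqrt (c₁ * c₂))⁻¹ / X.toReal) :=
        (ENNReal.ofReal_div_of_pos hXpos).symm
    _ ≤ ENNReal.ofReal ((a.toReal * b.toReal) ^ (-(1 : ℝ) / 2)) :=
        ENNReal.ofReal_le_ofReal key

lemma hl_enn_aux3 {a b a' b' : ℝ≥0∞} {c : ℝ}
    (ha0 : a ≠ 0) (hat : a ≠ ⊤) (hb0 : b ≠ 0) (hbt : b ≠ ⊤)
    (ha0' : a' ≠ 0) (hat' : a' ≠ ⊤) (hb0' : b' ≠ 0) (hbt' : b' ≠ ⊤)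
    (h1 : a' ≤ ENNReal.ofReal c * a) (h2 : b' ≤ ENNReal.ofReal c * b) :
    (a * b) ^ (-(1 : ℝ) / 2) ≤ ENNReal.ofReal c * (a' * b') ^ (-(1 : ℝ) / 2) := by
  have hc : 0 < c := hl_ofReal_pos_of_le ha0' h1
  have h1' : a'.toReal ≤ c * a.toReal := hl_toReal_le hat hat' hc.le h1
  have h2' : b'.toReal ≤ c * b.toReal := hl_toReal_le hbt hbt' hc.le h2
  have key := hl_real_aux3 (ENNReal.toReal_pos ha0 hat) (ENNReal.toReal_pos hb0 hbt)
    (ENNReal.toReal_pos ha0' hat') (ENNReal.toReal_pos hb0' hbt') h1' h2'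
  rw [hl_enn_prod_rpow ha0 hat hb0 hbt, hl_enn_prod_rpow ha0' hat' hb0' hbt',
    ← ENNReal.ofReal_mul hc.le]
  exact ENNReal.ofReal_le_ofReal key


section HeatLossSemigroup

variable {M : Type*} [MetricSpace M] [MeasurableSpace M] [BorelSpace M]





variable (μ : Measure M) (p : M → M → ℝ → ℝ≥0∞)

lemma hl_meas_pair (hp_meas : Measurable fun q : M × M × ℝ => p q.1 q.2.1 q.2.2) (c : ℝ) :
    Measurable fun q : M × M => p q.1 q.2 c :=
  hp_meas.comp (measurable_fst.prodMk (measurable_snd.prodMk measurable_const))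

lemma hl_meas_left (hp_meas : Measurable fun q : M × M × ℝ => p q.1 q.2.1 q.2.2)
    (x : M) (c : ℝ) : Measurable fun y : M => p x y c :=
  (hl_meas_pair p hp_meas c).comp (measurable_const.prodMk measurable_id)

lemma hl_meas_right (hp_meas : Measurable fun q : M × M × ℝ => p q.1 q.2.1 q.2.2)
    (z : M) (c : ℝ) : Measurable fun x : M => p x z c :=
  (hl_meas_pair p hp_meas c).comp (measurable_id.prodMk measurable_const)

lemma hl_sc' (hp_symm : ∀ x y : M, ∀ t : ℝ, 0 < t → p x y t = p y x t)
    (hp_sc : ∀ x : M, ∀ t : ℝ, 0 < t → ∫⁻ y, p x y t ∂μ = 1)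
    (z : M) {c : ℝ} (hc : 0 < c) : ∫⁻ x, p x z c ∂μ = 1 := by
  rw [lintegral_congr fun x => hp_symm x z c hc]
  exact hp_sc z c hc

variable (Ω : Set M)

lemma hl_G_le (hp_sc : ∀ x : M, ∀ t : ℝ, 0 < t → ∫⁻ y, p x y t ∂μ = 1)
    {u : ℝ} (hu : 0 < u) : hlG μ p Ω u ≤ μ Ω := by
  calc hlG μ p Ω u ≤ ∫⁻ _ in Ω, 1 ∂μ := by
        refine lintegral_mono fun x => ?_
        exact (setLIntegral_le_lintegral _ _).trans (hp_sc x u hu).le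
    _ = μ Ω := by simp

lemma hl_G_add [SigmaFinite μ]
    (hp_meas : Measurable fun q : M × M × ℝ => p q.1 q.2.1 q.2.2)
    (hp_symm : ∀ x y : M, ∀ t : ℝ, 0 < t → p x y t = p y x t)
    (hp_semi : ∀ x y : M, ∀ s t : ℝ, 0 < s → 0 < t →
      p x y (s + t) = ∫⁻ z, p x z s * p z y t ∂μ)
    (hp_sc : ∀ x : M, ∀ t : ℝ, 0 < t → ∫⁻ y, p x y t ∂μ = 1)
    (hΩm : MeasurableSet Ω)
    {a b : ℝ} (ha : 0 < a) (hb : 0 < b) :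
    hlG μ p Ω (a + b) ≤ hlG μ p Ω a + hlG μ p Ω b := by
  -- measurability facts
  have hmyz : ∀ x : M, Measurable fun q : M × M => p x q.2 a * p q.2 q.1 b := by
    intro x
    exact ((hl_meas_left p hp_meas x a).comp measurable_snd).mul
      ((hl_meas_pair p hp_meas b).comp (measurable_snd.prodMk measurable_fst))
  -- J₁, J₂
  set J₁ : M → ℝ≥0∞ := fun x => ∫⁻ y in Ωᶜ, ∫⁻ z in Ω, p x z a * p z y b ∂μ ∂μ with hJ₁
  set J₂ : M → ℝ≥0∞ := fun x => ∫⁻ y in Ωᶜ, ∫⁻ z in Ωᶜ, p x z a * p z y b ∂μ ∂μ with hJ₂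
  have hmeasJ : ∀ (S : Set M), Measurable fun x : M => ∫⁻ y in Ωᶜ, ∫⁻ z in S,
      p x z a * p z y b ∂μ ∂μ := by
    intro S
    have h1 : Measurable fun q : M × M => ∫⁻ z in S, p q.1 z a * p z q.2 b ∂μ := by
      apply Measurable.lintegral_prod_right'
        (f := fun q : (M × M) × M => p q.1.1 q.2 a * p q.2 q.1.2 b)
      exact ((hl_meas_pair p hp_meas a).comp (measurable_fst.fst.prodMk measurable_snd)).mul
        ((hl_meas_pair p hp_meas b).comp (measurable_snd.prodMk measurable_fst.snd))
    exact Measurable.lintegral_prod_right' (f := fun q : M × M => ∫⁻ z in S,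
      p q.1 z a * p z q.2 b ∂μ) h1
  have step1 : hlG μ p Ω (a + b) = ∫⁻ x in Ω, (J₁ x + J₂ x) ∂μ := by
    refine lintegral_congr fun x => ?_
    have hsplit : ∀ y : M, p x y (a + b)
        = (∫⁻ z in Ω, p x z a * p z y b ∂μ) + ∫⁻ z in Ωᶜ, p x z a * p z y b ∂μ := by
      intro y
      rw [hp_semi x y a b ha hb, ← lintegral_add_compl (fun z => p x z a * p z y b) hΩm]
    rw [lintegral_congr hsplit]
    rw [lintegral_add_left]
    apply Measurable.lintegral_prod_right' (f := fun q : M × M => p x q.2 a * p q.2 q.1 b)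
    exact (hmyz x)
  have hT1 : ∫⁻ x in Ω, J₁ x ∂μ ≤ hlG μ p Ω b := by
    have hswap : ∀ x : M, J₁ x = ∫⁻ z in Ω, p x z a * (∫⁻ y in Ωᶜ, p z y b ∂μ) ∂μ := by
      intro x
      rw [hJ₁]
      simp only
      rw [lintegral_lintegral_swap]
      · refine lintegral_congr fun z => ?_
        rw [← lintegral_const_mul _ (hl_meas_left p hp_meas z b)]
      · exact (hmyz x).aemeasurable
    calc ∫⁻ x in Ω, J₁ x ∂μ
        = ∫⁻ x in Ω, ∫⁻ z in Ω, p x z a * (∫⁻ y in Ωᶜ, p z y b ∂μ) ∂μ ∂μ := by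
          exact lintegral_congr fun x => hswap x
      _ = ∫⁻ z in Ω, ∫⁻ x in Ω, p x z a * (∫⁻ y in Ωᶜ, p z y b ∂μ) ∂μ ∂μ := by
          apply lintegral_lintegral_swap
          apply AEMeasurable.mul
          · exact (hl_meas_pair p hp_meas a).aemeasurable
          · apply Measurable.aemeasurable
            have h2 : Measurable fun z : M => ∫⁻ y in Ωᶜ, p z y b ∂μ := by
              apply Measurable.lintegral_prod_right' (f := fun q : M × M => p q.1 q.2 b)
              exact hl_meas_pair p hp_meas b
            exact h2.comp measurable_snd
      _ ≤ ∫⁻ z in Ω, 1 * (∫⁻ y in Ωᶜ, p z y b ∂μ) ∂μ := by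
          refine lintegral_mono fun z => ?_
          rw [lintegral_mul_const _ (hl_meas_right p hp_meas z a)]
          rw [one_mul]
          apply mul_le_of_le_one_left' ?_
          exact (setLIntegral_le_lintegral _ _).trans
            (hl_sc' μ p hp_symm hp_sc z ha).le
      _ = hlG μ p Ω b := by
          refine lintegral_congr fun z => ?_
          rw [one_mul]
  have hT2 : ∫⁻ x in Ω, J₂ x ∂μ ≤ hlG μ p Ω a := by
    refine lintegral_mono fun x => ?_
    have hswap : J₂ x = ∫⁻ z in Ωᶜ, p x z a * (∫⁻ y in Ωᶜ, p z y b ∂μ) ∂μ := by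
      rw [hJ₂]
      simp only
      rw [lintegral_lintegral_swap]
      · refine lintegral_congr fun z => ?_
        rw [← lintegral_const_mul _ (hl_meas_left p hp_meas z b)]
      · exact (hmyz x).aemeasurable
    rw [hswap]
    refine lintegral_mono fun z => ?_
    apply mul_le_of_le_one_right' ?_
    exact (setLIntegral_le_lintegral _ _).trans (hp_sc z b hb).le
  calc hlG μ p Ω (a + b) = ∫⁻ x in Ω, (J₁ x + J₂ x) ∂μ := step1
    _ = ∫⁻ x in Ω, J₁ x ∂μ + ∫⁻ x in Ω, J₂ x ∂μ := by
        apply lintegral_add_left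
        exact (hmeasJ Ω)
    _ ≤ hlG μ p Ω b + hlG μ p Ω a := add_le_add hT1 hT2
    _ = hlG μ p Ω a + hlG μ p Ω b := add_comm _ _

lemma hl_G_nsmul [SigmaFinite μ]
    (hp_meas : Measurable fun q : M × M × ℝ => p q.1 q.2.1 q.2.2)
    (hp_symm : ∀ x y : M, ∀ t : ℝ, 0 < t → p x y t = p y x t)
    (hp_semi : ∀ x y : M, ∀ s t : ℝ, 0 < s → 0 < t →
      p x y (s + t) = ∫⁻ z, p x z s * p z y t ∂μ)
    (hp_sc : ∀ x : M, ∀ t : ℝ, 0 < t → ∫⁻ y, p x y t ∂μ = 1)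
    (hΩm : MeasurableSet Ω)
    (k : ℕ) (hk : 0 < k) {u : ℝ} (hu : 0 < u) :
    hlG μ p Ω ((k : ℝ) * u) ≤ (k : ℝ≥0∞) * hlG μ p Ω u := by
  induction k with
  | zero => omega
  | succ k ih =>
    rcases Nat.eq_zero_or_pos k with rfl | hk'
    · simp
    · have hcast : ((k + 1 : ℕ) : ℝ) * u = (k : ℝ) * u + u := by push_cast; ring
      have hku : 0 < (k : ℝ) * u := by positivity
      calc hlG μ p Ω ((k + 1 : ℕ) * u) = hlG μ p Ω ((k : ℝ) * u + u) := by rw [hcast]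
        _ ≤ hlG μ p Ω ((k : ℝ) * u) + hlG μ p Ω u :=
            hl_G_add μ p Ω hp_meas hp_symm hp_semi hp_sc hΩm hku hu
        _ ≤ (k : ℝ≥0∞) * hlG μ p Ω u + hlG μ p Ω u := add_le_add_left (ih hk') _
        _ = ((k + 1 : ℕ) : ℝ≥0∞) * hlG μ p Ω u := by push_cast; ring


end HeatLossSemigroup



lemma hl_log_beta {C : ℝ} (hC : 2 ≤ C) :
    Real.log (3 * (Real.log 2 + (7 + Real.log C / Real.log 2) * Real.log C) + 1)
      ≤ 4.159 + 0.825 * Real.log C := by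
  set x := Real.log C with hxdef
  set L := Real.log 2 with hLdef
  have hL1 : (0.6931471 : ℝ) < L := lt_trans (by norm_num) Real.log_two_gt_d9
  have hL2 : L < 0.6931472 := lt_trans Real.log_two_lt_d9 (by norm_num)
  have hxL : L ≤ x := Real.log_le_log (by norm_num) hC
  have hx0 : 0 < x := by linarith
  have hquad : 3 * (L + (7 + x / L) * x) + 1 ≤ (5.05 + 2.081 * x) ^ 2 := by
    have hdl : 3 * ((x / L) * x) ≤ 4.3285 * x ^ 2 := by
      have h : (x / L) * x = x ^ 2 / L := by ring
      rw [h, ← mul_div_assoc, div_le_iff₀ (by linarith)]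
      have h2 : (3 : ℝ) ≤ 4.3285 * L := by nlinarith
      nlinarith [mul_le_mul_of_nonneg_right h2 (sq_nonneg x)]
    have hexp2 : 3 * (L + (7 + x / L) * x) + 1 = 3*L + 21*x + 3*((x/L)*x) + 1 := by ring
    have hsq : (5.05 + 2.081 * x) ^ 2 = 25.5025 + 21.0181*x + 4.330561*x^2 := by ring
    rw [hexp2, hsq]
    have h1 : 0 ≤ x^2 := sq_nonneg x
    linarith
  have hpos : (0 : ℝ) < 3 * (L + (7 + x / L) * x) + 1 := by
    have : 0 < x / L := by positivity
    nlinarith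
  have h1 : Real.log (3 * (L + (7 + x / L) * x) + 1)
      ≤ Real.log ((5.05 + 2.081 * x) ^ 2) := Real.log_le_log hpos hquad
  have h2 : Real.log ((5.05 + 2.081 * x) ^ 2) = 2 * Real.log (5.05 + 2.081 * x) := by
    rw [Real.log_pow]; push_cast; ring
  have h3 : Real.log (5.05 + 2.081 * x) ≤ Real.log 5.05 + (2.081 / 5.05) * x := by
    have hfac : (5.05 + 2.081 * x) = 5.05 * (1 + (2.081 / 5.05) * x) := by ring
    rw [hfac, Real.log_mul (by norm_num) (by positivity)]
    have h4 : Real.log (1 + (2.081 / 5.05) * x) ≤ (2.081 / 5.05) * x := by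
      have := Real.log_le_sub_one_of_pos (show (0:ℝ) < 1 + (2.081 / 5.05) * x by positivity)
      linarith
    linarith
  have h5 : Real.log 5.05 ≤ 3 * L := by
    have ha : Real.log 5.05 ≤ Real.log 8 := Real.log_le_log (by norm_num) (by norm_num)
    have hb : Real.log 8 = 3 * L := by
      rw [hLdef, show (8 : ℝ) = 2 ^ 3 by norm_num, Real.log_pow]; push_cast; ring
    linarith
  have h6 : (2.081 / 5.05 : ℝ) ≤ 0.41209 := by norm_num
  nlinarith [h1, h2, h3, h5, h6, hx0]

lemma hl_scalarA {C ν : ℝ} (hC : 2 ≤ C)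
    (hν : C * (3 * (Real.log 2 + (7 + Real.log C / Real.log 2) * Real.log C)) ≤ ν) :
    4 * C * Real.exp (-(2 * ν / C)) ≤ 1 / 2 := by
  set x := Real.log C with hxdef
  set L := Real.log 2 with hLdef
  have hL1 : (0.6931471 : ℝ) < L := lt_trans (by norm_num) Real.log_two_gt_d9
  have hxL : L ≤ x := Real.log_le_log (by norm_num) hC
  have hC0 : (0 : ℝ) < C := by linarith
  have hx0 : 0 < x := by linarith
  have hβ : 21 * x ≤ 3 * (L + (7 + x / L) * x) := by
    have : 0 ≤ (x / L) * x := by positivity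
    nlinarith
  have h42 : 42 * x ≤ 2 * ν / C := by
    rw [le_div_iff₀ hC0]
    have h1 : C * (21 * x) ≤ ν := le_trans (mul_le_mul_of_nonneg_left hβ hC0.le) hν
    nlinarith
  have h8 : 8 * C ≤ Real.exp (2 * ν / C) := by
    have hc4 : 8 * C ≤ C ^ 4 := by nlinarith [pow_le_pow_left₀ (by norm_num : (0:ℝ) ≤ 2) hC 3, hC0]
    have hc42 : C ^ 4 ≤ C ^ 42 := pow_le_pow_right₀ (by linarith) (by norm_num)
    have hexp : Real.exp (42 * x) = C ^ 42 := by
      rw [show (42 : ℝ) * x = (42 : ℕ) * x by push_cast; ring, Real.exp_nat_mul,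
        hxdef, Real.exp_log hC0]
    calc 8 * C ≤ C ^ 42 := le_trans hc4 hc42
      _ = Real.exp (42 * x) := hexp.symm
      _ ≤ Real.exp (2 * ν / C) := Real.exp_le_exp.2 h42
  rw [Real.exp_neg, ← div_eq_mul_inv, div_le_iff₀ (Real.exp_pos _)]
  linarith

lemma hl_coef {C nR Kr : ℝ} (hC : 2 ≤ C) (hKr0 : 0 ≤ Kr) (hKr : Kr ≤ 3 / 2 * C)
    (hA : 4 * C * Real.exp (-(2 * nR / C)) ≤ 1 / 2) (hnR : 0 ≤ nR) (m2 j : ℕ) :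
    C ^ (j + 3 + m2) * Real.exp 1 * Real.exp (-(4 ^ j * nR / C)) * (Kr * 4 ^ (j + 1))
      ≤ 6 * Real.exp 1 * C ^ (4 + m2) * Real.exp (-(nR / C)) * (1 / 2) ^ j := by
  have hC0 : (0 : ℝ) < C := by linarith
  have key : (4 * C) ^ j * Real.exp (-(4 ^ j * nR / C))
      ≤ Real.exp (-(nR / C)) * (1 / 2) ^ j := by
    have h1 : Real.exp (-(4 ^ j * nR / C)) ≤ Real.exp (-((2 * j + 1) * nR / C)) := by
      apply Real.exp_le_exp.2
      have h2 : (2 * j + 1 : ℝ) * nR ≤ 4 ^ j * nR :=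
        mul_le_mul_of_nonneg_right (hl_pow_ge j) hnR
      have h3 : (2 * j + 1 : ℝ) * nR / C ≤ 4 ^ j * nR / C := by gcongr
      linarith
    have h4 : Real.exp (-((2 * j + 1) * nR / C))
        = Real.exp (-(nR / C)) * Real.exp (-(2 * nR / C)) ^ j := by
      rw [← Real.exp_nat_mul, ← Real.exp_add]
      congr 1
      push_cast
      ring
    calc (4 * C) ^ j * Real.exp (-(4 ^ j * nR / C))
        ≤ (4 * C) ^ j * (Real.exp (-(nR / C)) * Real.exp (-(2 * nR / C)) ^ j) := by
          rw [← h4]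
          exact mul_le_mul_of_nonneg_left h1 (by positivity)
      _ = Real.exp (-(nR / C)) * (4 * C * Real.exp (-(2 * nR / C))) ^ j := by
          rw [mul_pow]; ring
      _ ≤ Real.exp (-(nR / C)) * (1 / 2) ^ j := by
          apply mul_le_mul_of_nonneg_left _ (Real.exp_pos _).le
          exact pow_le_pow_left₀ (by positivity) hA j
  calc C ^ (j + 3 + m2) * Real.exp 1 * Real.exp (-(4 ^ j * nR / C)) * (Kr * 4 ^ (j + 1))
      = (Real.exp 1 * C ^ (3 + m2) * 4 * Kr) * ((4 * C) ^ j * Real.exp (-(4 ^ j * nR / C))) := by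
        rw [show j + 3 + m2 = j + (3 + m2) by omega, pow_add, pow_succ, mul_pow]
        ring
    _ ≤ (Real.exp 1 * C ^ (3 + m2) * 4 * (3 / 2 * C)) * (Real.exp (-(nR / C)) * (1 / 2) ^ j) := by
        apply mul_le_mul _ key (by positivity) (by positivity)
        exact mul_le_mul_of_nonneg_left hKr (by positivity)
    _ = 6 * Real.exp 1 * C ^ (4 + m2) * Real.exp (-(nR / C)) * (1 / 2) ^ j := by
        rw [show 4 + m2 = 3 + m2 + 1 by omega, pow_succ]
        ring




lemma hl_scalarB {C ν μ₂ : ℝ} (hC : 2 ≤ C)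
    (hν : C * (3 * (Real.log 2 + (7 + Real.log C / Real.log 2) * Real.log C)) ≤ ν)
    (hν' : ν ≤ C * (3 * (Real.log 2 + (7 + Real.log C / Real.log 2) * Real.log C)) + 1)
    (hμ₂0 : 0 ≤ μ₂)
    (hμ₂ : μ₂ ≤ Real.log (3 / 2 * C * ν) / (2 * Real.log 2) + 1) :
    12 * Real.exp 1 * ν * C ^ ((4 : ℝ) + μ₂) * Real.exp (-(ν / C)) ≤ 1 / 2 := by
  have hu' := hl_log_beta hC
  set x := Real.log C with hxdef
  set L := Real.log 2 with hLdef
  have hL1 : (0.6931471 : ℝ) < L := lt_trans (by norm_num) Real.log_two_gt_d9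
  have hL2 : L < 0.6931472 := lt_trans Real.log_two_lt_d9 (by norm_num)
  have hC0 : (0 : ℝ) < C := by linarith
  have hxL : L ≤ x := Real.log_le_log (by norm_num) hC
  have hx0 : 0 < x := by linarith
  set β := 3 * (L + (7 + x / L) * x) with hβdef
  have hβpos : 0 < β := by
    have : 0 < x / L := by positivity
    nlinarith
  have hν0 : 0 < ν := lt_of_lt_of_le (mul_pos hC0 hβpos) hν
  set u := Real.log (β + 1) with hudef
  have hu : u ≤ 4.159 + 0.825 * x := hu'
  have hu0 : 0 ≤ u := Real.log_nonneg (by linarith)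
  have hA0 : 0 < 12 * Real.exp 1 * ν * C ^ ((4 : ℝ) + μ₂) := by positivity
  have hlogA : Real.log (12 * Real.exp 1 * ν * C ^ ((4 : ℝ) + μ₂))
      = Real.log 12 + 1 + Real.log ν + (4 + μ₂) * x := by
    rw [Real.log_mul (by positivity) (by positivity),
      Real.log_mul (by positivity) (ne_of_gt hν0),
      Real.log_mul (by norm_num) (Real.exp_ne_zero 1), Real.log_exp,
      Real.log_rpow hC0]
  have hlogν : Real.log ν ≤ x + u := by
    have h1 : ν ≤ C * (β + 1) := by nlinarith
    calc Real.log ν ≤ Real.log (C * (β + 1)) := Real.log_le_log hν0 h1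
      _ = x + u := by rw [Real.log_mul (ne_of_gt hC0) (by linarith)]
  have hlog15 : Real.log (3 / 2 : ℝ) ≤ 0.61 := by
    rw [Real.log_le_iff_le_exp (by norm_num)]
    have := Real.add_one_le_exp (0.61 : ℝ)
    linarith
  have hμ₂x : μ₂ * x ≤ x + (x / (2 * L)) * (0.61 + 2 * x + u) := by
    have hlKn : Real.log (3 / 2 * C * ν) ≤ 0.61 + 2 * x + u := by
      rw [Real.log_mul (by positivity) (ne_of_gt hν0),
        Real.log_mul (by norm_num) (ne_of_gt hC0)]
      linarith [hlogν]
    have h2 : μ₂ ≤ (0.61 + 2 * x + u) / (2 * L) + 1 := by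
      refine hμ₂.trans ?_
      have hmono : Real.log (3 / 2 * C * ν) / (2 * L) ≤ (0.61 + 2 * x + u) / (2 * L) :=
        (div_le_div_iff_of_pos_right (by linarith : (0:ℝ) < 2 * L)).2 hlKn
      linarith
    calc μ₂ * x ≤ ((0.61 + 2 * x + u) / (2 * L) + 1) * x :=
          mul_le_mul_of_nonneg_right h2 hx0.le
      _ = x + (x / (2 * L)) * (0.61 + 2 * x + u) := by ring
  have hdiv1 : x / (2 * L) ≤ 0.7214 * x := by
    rw [div_le_iff₀ (by linarith)]
    nlinarith
  have hdiv2 : 1.44269 * x ^ 2 ≤ (x / L) * x := by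
    have h : (x / L) * x = x ^ 2 / L := by ring
    rw [h, le_div_iff₀ (by linarith)]
    nlinarith [sq_nonneg x]
  have hlog12 : Real.log 12 + L ≤ 5 * L := by
    have h24 : Real.log 12 + L = Real.log 24 := by
      rw [hLdef, ← Real.log_mul (by norm_num) (by norm_num)]
      norm_num
    have h32 : Real.log 24 ≤ Real.log 32 := Real.log_le_log (by norm_num) (by norm_num)
    have h325 : Real.log 32 = 5 * L := by
      rw [hLdef, show (32 : ℝ) = 2 ^ 5 by norm_num, Real.log_pow]
      push_cast; ring
    linarith
  have hmain : Real.log (12 * Real.exp 1 * ν * C ^ ((4 : ℝ) + μ₂)) + L ≤ ν / C := by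
    rw [hlogA]
    have hνC : β ≤ ν / C := by
      rw [le_div_iff₀ hC0]
      nlinarith [hν]
    have hw0 : (0:ℝ) ≤ 0.61 + 2 * x + u := by linarith
    have hx1 : (0.6931471 : ℝ) ≤ x := by linarith
    have hR : (x / (2 * L)) * (0.61 + 2 * x + u) ≤ 3.4403566 * x + 2.0379550 * x ^ 2 := by
      nlinarith [mul_nonneg (sub_nonneg.2 hdiv1) hw0,
        mul_le_mul_of_nonneg_left hu (by positivity : (0:ℝ) ≤ 0.7214 * x)]
    have hμ₂x' : μ₂ * x ≤ x + 3.4403566 * x + 2.0379550 * x ^ 2 := by linarith [hμ₂x, hR]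
    have hβx : β = 3 * L + 21 * x + 3 * ((x / L) * x) := by rw [hβdef]; ring
    have hβlow : 3 * L + 21 * x + 4.32807 * x ^ 2 ≤ β := by
      rw [hβx]
      linarith [hdiv2]
    have hquad : 0 ≤ 2.290115 * x ^ 2 + 10.7346434 * x - 6.5452944 := by
      nlinarith [sq_nonneg (x - 0.6931471), hx1]
    have hsq0 : 0 ≤ x ^ 2 := sq_nonneg x
    linarith [hlog12, hlogν, hu, hμ₂x', hβlow, hνC, hquad, hL1, hL2, hx0, hsq0]
  have hfinal : 12 * Real.exp 1 * ν * C ^ ((4 : ℝ) + μ₂) * Real.exp (-(ν / C))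
      = Real.exp (Real.log (12 * Real.exp 1 * ν * C ^ ((4 : ℝ) + μ₂)) + -(ν / C)) := by
    rw [Real.exp_add, Real.exp_log hA0]
  rw [hfinal]
  calc Real.exp (Real.log (12 * Real.exp 1 * ν * C ^ ((4 : ℝ) + μ₂)) + -(ν / C))
      ≤ Real.exp (-L) := Real.exp_le_exp.2 (by linarith)
    _ ≤ 1 / 2 := by
        rw [hLdef, Real.exp_neg, Real.exp_log (by norm_num : (0 : ℝ) < 2)]
        norm_num

lemma hl_scalarC {C ν μm : ℝ} (hC : 2 ≤ C)
    (hν : C * (3 * (Real.log 2 + (7 + Real.log C / Real.log 2) * Real.log C)) ≤ ν)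
    (hν' : ν ≤ C * (3 * (Real.log 2 + (7 + Real.log C / Real.log 2) * Real.log C)) + 1)
    (hμm0 : 0 ≤ μm)
    (hμm : μm ≤ Real.log ν / (2 * Real.log 2) + 1) :
    2 * ν * C ^ (μm + 3 / 2) ≤
      4 * C ^ ((15 : ℝ) / 4) *
        (C * Real.log (2 * C ^ ((7 : ℝ) + Real.log C / Real.log 2))) ^
          (1 + 3 * Real.log C / (4 * Real.log 2)) := by
  set x := Real.log C with hxdef
  set L := Real.log 2 with hLdef
  have hL1 : (0.6931471 : ℝ) < L := lt_trans (by norm_num) Real.log_two_gt_d9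
  have hL2 : L < 0.6931472 := lt_trans Real.log_two_lt_d9 (by norm_num)
  have hC0 : (0 : ℝ) < C := by linarith
  have hC1 : (1 : ℝ) ≤ C := by linarith
  have hxL : L ≤ x := Real.log_le_log (by norm_num) hC
  have hx0 : 0 < x := by linarith
  have hxLr : 1 ≤ x / L := (one_le_div (by linarith)).2 hxL
  have hW : Real.log (2 * C ^ ((7 : ℝ) + x / L)) = L + (7 + x / L) * x := by
    rw [Real.log_mul (by norm_num) (ne_of_gt (Real.rpow_pos_of_pos hC0 _)),
      Real.log_rpow hC0]
  set W := C * (L + (7 + x / L) * x) with hWdef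
  have hbase : C * Real.log (2 * C ^ ((7 : ℝ) + x / L)) = W := by rw [hW]
  have hW11 : (11 : ℝ) ≤ W := by
    have h1 : 8 * L ≤ (7 + x / L) * x := by nlinarith
    nlinarith
  have hWpos : 0 < W := by linarith
  have h3W : C * (3 * (L + (7 + x / L) * x)) = 3 * W := by rw [hWdef]; ring
  have hν3 : ν ≤ 3.1 * W := by nlinarith [hW11, hν']
  have hν0 : 0 < ν := by nlinarith [hν, hW11]
  -- C^μm ≤ C * ν^{x/(2L)}
  have hCμ : C ^ μm ≤ C * ν ^ (x / (2 * L)) := by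
    have h1 : C ^ μm ≤ C ^ (Real.log ν / (2 * L) + 1) :=
      Real.rpow_le_rpow_of_exponent_le hC1 hμm
    rw [Real.rpow_add hC0, Real.rpow_one] at h1
    have h2 : C ^ (Real.log ν / (2 * L)) = ν ^ (x / (2 * L)) := by
      rw [Real.rpow_def_of_pos hC0, Real.rpow_def_of_pos hν0]
      congr 1
      ring
    rw [h2] at h1
    linarith [h1]
  have hνpow : ν ^ (x / (2 * L)) ≤ (3.1 * W) ^ (x / (2 * L)) :=
    Real.rpow_le_rpow hν0.le hν3 (by positivity)
  have hsplit : (3.1 * W) ^ (x / (2 * L)) = 3.1 ^ (x / (2 * L)) * W ^ (x / (2 * L)) :=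
    Real.mul_rpow (by norm_num) hWpos.le
  have h31 : (3.1 : ℝ) ^ (x / (2 * L)) ≤ W ^ (x / (4 * L)) := by
    have heq : (3.1 : ℝ) ^ (x / (2 * L)) = (9.61 : ℝ) ^ (x / (4 * L)) := by
      rw [show (9.61 : ℝ) = 3.1 ^ (2 : ℕ) by norm_num, ← Real.rpow_natCast (3.1 : ℝ) 2,
        ← Real.rpow_mul (by norm_num)]
      congr 1
      push_cast
      ring
    rw [heq]
    exact Real.rpow_le_rpow (by norm_num) (by linarith) (by positivity)
  have key1 : C ^ μm ≤ C * (W ^ (x / (4 * L)) * W ^ (x / (2 * L))) := by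
    calc C ^ μm ≤ C * ν ^ (x / (2 * L)) := hCμ
      _ ≤ C * (3.1 ^ (x / (2 * L)) * W ^ (x / (2 * L))) := by
          rw [← hsplit]
          exact mul_le_mul_of_nonneg_left hνpow hC0.le
      _ ≤ C * (W ^ (x / (4 * L)) * W ^ (x / (2 * L))) := by
          apply mul_le_mul_of_nonneg_left _ hC0.le
          exact mul_le_mul_of_nonneg_right h31 (by positivity)
  have key2 : 2 * ν ≤ 6.2 * W := by nlinarith [hν3]
  have key3 : C * C ^ ((3 : ℝ) / 2) = C ^ ((5 : ℝ) / 2) := by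
    nth_rewrite 1 [← Real.rpow_one C]
    rw [← Real.rpow_add hC0]
    norm_num
  have key4 : (6.2 : ℝ) ≤ 4 * C ^ ((5 : ℝ) / 4) := by
    have h1 : C ^ (1 : ℝ) ≤ C ^ ((5 : ℝ) / 4) :=
      Real.rpow_le_rpow_of_exponent_le hC1 (by norm_num)
    rw [Real.rpow_one] at h1
    linarith
  have hLHS : C ^ (μm + 3 / 2) = C ^ μm * C ^ ((3 : ℝ) / 2) := by
    rw [← Real.rpow_add hC0]
  have hWexp : W ^ ((1 : ℝ) + 3 * x / (4 * L))
      = W * (W ^ (x / (2 * L)) * W ^ (x / (4 * L))) := by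
    rw [show (1 : ℝ) + 3 * x / (4 * L) = 1 + (x / (2 * L) + x / (4 * L)) by ring,
      Real.rpow_add hWpos, Real.rpow_add hWpos, Real.rpow_one]
  have hC154 : C ^ ((5 : ℝ) / 4) * C ^ ((5 : ℝ) / 2) = C ^ ((15 : ℝ) / 4) := by
    rw [← Real.rpow_add hC0]
    norm_num
  rw [hbase, hLHS, hWexp]
  calc 2 * ν * (C ^ μm * C ^ ((3 : ℝ) / 2))
      = (2 * ν) * C ^ μm * C ^ ((3 : ℝ) / 2) := by ring
    _ ≤ (6.2 * W) * (C * (W ^ (x / (4 * L)) * W ^ (x / (2 * L)))) * C ^ ((3 : ℝ) / 2) := by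
        have hp1 : (0:ℝ) ≤ C ^ ((3:ℝ)/2) := (Real.rpow_pos_of_pos hC0 _).le
        have hp2 : (0:ℝ) ≤ C ^ μm := (Real.rpow_pos_of_pos hC0 _).le
        have hp3 : (0:ℝ) ≤ 2 * ν := by linarith
        apply mul_le_mul_of_nonneg_right _ hp1
        exact mul_le_mul key2 key1 hp2 (by nlinarith [hW11])
    _ = 6.2 * (C * C ^ ((3 : ℝ) / 2)) * (W * (W ^ (x / (2 * L)) * W ^ (x / (4 * L)))) := by
        ring
    _ ≤ 4 * C ^ ((5 : ℝ) / 4) * (C * C ^ ((3 : ℝ) / 2))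
          * (W * (W ^ (x / (2 * L)) * W ^ (x / (4 * L)))) := by
        have hq1 : (0:ℝ) ≤ C * C ^ ((3:ℝ)/2) := by positivity
        have hq2 : (0:ℝ) ≤ W * (W ^ (x / (2 * L)) * W ^ (x / (4 * L))) := by positivity
        apply mul_le_mul_of_nonneg_right _ hq2
        exact mul_le_mul_of_nonneg_right key4 hq1
    _ = 4 * C ^ ((15 : ℝ) / 4) * (W * (W ^ (x / (2 * L)) * W ^ (x / (4 * L)))) := by
        rw [key3, ← hC154]
        ring


/-- Theorem 2: under the Li–Yau bound and volume doubling, for an open set `Ω` of finite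
measure the heat loss `F_Ω(t) = μ(Ω) - H_Ω(t)` is bounded above and below by constant
multiples of `∫_Ω μ(B(x;√t) \ Ω)/μ(B(x;√t)) dμ(x)`, with `L₁ = C⁻² e^{-C}` and
`L₂ = 4 C^{15/4} (C log(2 C^{7 + log C/log 2}))^{1 + 3 log C/(4 log 2)}`. -/
theorem heat_loss_two_sided_bounds
    {M : Type*} [MetricSpace M] [MeasurableSpace M] [BorelSpace M]
    (μ : Measure M)
    (hball : ∀ x : M, ∀ R : ℝ, 0 < R → 0 < μ (ball x R) ∧ μ (ball x R) < ⊤)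
    (p : M → M → ℝ → ℝ≥0∞)
    (hp_meas : Measurable fun q : M × M × ℝ => p q.1 q.2.1 q.2.2)
    (hp_symm : ∀ x y : M, ∀ t : ℝ, 0 < t → p x y t = p y x t)
    (hp_semi : ∀ x y : M, ∀ s t : ℝ, 0 < s → 0 < t →
      p x y (s + t) = ∫⁻ z, p x z s * p z y t ∂μ)
    (hp_sc : ∀ x : M, ∀ t : ℝ, 0 < t → ∫⁻ y, p x y t ∂μ = 1)
    (C : ℝ) (hC : 2 ≤ C)
    (hLY_lower : ∀ x y : M, ∀ t : ℝ, 0 < t →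
      ENNReal.ofReal (C⁻¹ * Real.exp (-(C * dist x y ^ 2) / t)) *
        (μ (ball x (Real.sqrt t)) * μ (ball y (Real.sqrt t))) ^ (-(1 : ℝ) / 2)
        ≤ p x y t)
    (hLY_upper : ∀ x y : M, ∀ t : ℝ, 0 < t →
      p x y t ≤ ENNReal.ofReal (C * Real.exp (-(dist x y ^ 2) / (C * t))) *
        (μ (ball x (Real.sqrt t)) * μ (ball y (Real.sqrt t))) ^ (-(1 : ℝ) / 2))
    (hdbl : ∀ x : M, ∀ R : ℝ, 0 < R →
      μ (ball x (2 * R)) ≤ ENNReal.ofReal C * μ (ball x R))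
    (Ω : Set M) (hΩ : IsOpen Ω) (hΩfin : μ Ω < ⊤)
    (H : ℝ → ℝ≥0∞)
    (hH : ∀ t : ℝ, H t = ∫⁻ x in Ω, ∫⁻ y in Ω, p x y t ∂μ ∂μ)
    (F : ℝ → ℝ≥0∞)
    (hF : ∀ t : ℝ, F t = μ Ω - H t) :
    ∀ t : ℝ, 0 < t →
      ENNReal.ofReal (C ^ (-2 : ℝ) * Real.exp (-C)) *
          (∫⁻ x in Ω, μ (ball x (Real.sqrt t) \ Ω) / μ (ball x (Real.sqrt t)) ∂μ)
        ≤ F t ∧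
      F t ≤
        ENNReal.ofReal (4 * C ^ ((15 : ℝ) / 4) *
            (C * Real.log (2 * C ^ ((7 : ℝ) + Real.log C / Real.log 2))) ^
              (1 + 3 * Real.log C / (4 * Real.log 2))) *
          (∫⁻ x in Ω, μ (ball x (Real.sqrt t) \ Ω) / μ (ball x (Real.sqrt t)) ∂μ) := by
  intro t ht
  classical
  have hΩm : MeasurableSet Ω := hΩ.measurableSet
  haveI : SigmaFinite μ := hl_sigmaFinite μ (fun x R hR => (hball x R hR).2)
  have hC0 : (0 : ℝ) < C := by linarith
  have hC1 : (1 : ℝ) ≤ C := by linarith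
  set r := Real.sqrt t with hrdef
  have hr0 : 0 < r := Real.sqrt_pos.2 ht
  have hr2 : r ^ 2 = t := Real.sq_sqrt ht.le
  have hmeasHin : Measurable fun x : M => ∫⁻ y in Ω, p x y t ∂μ :=
    Measurable.lintegral_prod_right' (f := fun q : M × M => p q.1 q.2 t)
      (hl_meas_pair p hp_meas t)
  have hGsum : H t + hlG μ p Ω t = μ Ω := by
    have hinner : ∀ x : M,
        (∫⁻ y in Ω, p x y t ∂μ) + (∫⁻ y in Ωᶜ, p x y t ∂μ) = 1 := by
      intro x
      rw [lintegral_add_compl (fun y => p x y t) hΩm]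
      exact hp_sc x t ht
    calc H t + hlG μ p Ω t
        = ∫⁻ x in Ω, ((∫⁻ y in Ω, p x y t ∂μ) + (∫⁻ y in Ωᶜ, p x y t ∂μ)) ∂μ := by
          rw [hH t]
          exact (lintegral_add_left hmeasHin _).symm
      _ = ∫⁻ _ in Ω, 1 ∂μ := lintegral_congr hinner
      _ = μ Ω := setLIntegral_one Ω
  have hHfin : H t ≠ ⊤ := by
    have h1 : H t ≤ μ Ω := le_of_le_of_eq le_self_add hGsum
    exact (lt_of_le_of_lt h1 hΩfin).ne
  have hFG : F t = hlG μ p Ω t := by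
    rw [hF t, ← hGsum, ENNReal.add_sub_cancel_left hHfin]
  have hGle : hlG μ p Ω t ≤ μ Ω := hl_G_le μ p Ω hp_sc ht
  have hGfin : hlG μ p Ω t ≠ ⊤ := (lt_of_le_of_lt hGle hΩfin).ne
  constructor
  · -- LOWER BOUND
    rw [hFG]
    have hpt : ∀ x : M, ENNReal.ofReal (C ^ (-2 : ℝ) * Real.exp (-C)) *
        (μ (ball x r \ Ω) / μ (ball x r)) ≤ ∫⁻ y in Ωᶜ, p x y t ∂μ := by
      intro x
      have hX0 : μ (ball x r) ≠ 0 := (hball x r hr0).1.ne'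
      have hXt : μ (ball x r) ≠ ⊤ := (hball x r hr0).2.ne
      have hptwise : ∀ y ∈ Ωᶜ ∩ ball x r,
          ENNReal.ofReal (C ^ (-2 : ℝ) * Real.exp (-C)) / μ (ball x r) ≤ p x y t := by
        intro y hy
        have hdxy : dist x y < r := by
          have h := mem_ball.1 hy.2
          rwa [dist_comm] at h
        refine le_trans ?_ (hLY_lower x y t ht)
        have h1 : μ (ball x r) ≤ ENNReal.ofReal 1 * μ (ball x r) := by
          rw [ENNReal.ofReal_one, one_mul]
        have h2 : μ (ball y r) ≤ ENNReal.ofReal C * μ (ball x r) := by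
          refine le_trans (measure_mono (ball_subset_ball' ?_)) (hdbl x r hr0)
          have h := mem_ball.1 hy.2
          linarith
        have haux := hl_enn_aux2 (a := μ (ball x r)) (b := μ (ball y r))
          (X := μ (ball x r)) hX0 hXt (hball y r hr0).1.ne' (hball y r hr0).2.ne
          hX0 hXt (by norm_num) hC0.le h1 h2
        have hconst : ENNReal.ofReal (C ^ (-2 : ℝ) * Real.exp (-C))
            ≤ ENNReal.ofReal (C⁻¹ * Real.exp (-(C * dist x y ^ 2) / t)) *
              ENNReal.ofReal ((Real.sqrt (1 * C))⁻¹) := by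
          rw [← ENNReal.ofReal_mul (by positivity)]
          apply ENNReal.ofReal_le_ofReal
          have he : Real.exp (-C) ≤ Real.exp (-(C * dist x y ^ 2) / t) := by
            apply Real.exp_le_exp.2
            rw [neg_div]
            apply neg_le_neg
            have hd2 : dist x y ^ 2 ≤ t := by nlinarith [dist_nonneg (x := x) (y := y)]
            rw [div_le_iff₀ ht]
            nlinarith
          have hpow : C ^ (-2 : ℝ) ≤ C⁻¹ * (Real.sqrt (1 * C))⁻¹ := by
            rw [one_mul]
            have heq : C⁻¹ * (Real.sqrt C)⁻¹ = C ^ (-(3 / 2) : ℝ) := by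
              rw [Real.sqrt_eq_rpow, ← Real.rpow_neg_one C, ← Real.rpow_neg hC0.le,
                ← Real.rpow_add hC0]
              norm_num
            rw [heq]
            exact Real.rpow_le_rpow_of_exponent_le hC1 (by norm_num)
          calc C ^ (-2 : ℝ) * Real.exp (-C)
              ≤ (C⁻¹ * (Real.sqrt (1 * C))⁻¹) * Real.exp (-(C * dist x y ^ 2) / t) := by
                apply mul_le_mul hpow he (Real.exp_pos _).le
                positivity
            _ = C⁻¹ * Real.exp (-(C * dist x y ^ 2) / t) * (Real.sqrt (1 * C))⁻¹ := by
                ring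
        calc ENNReal.ofReal (C ^ (-2 : ℝ) * Real.exp (-C)) / μ (ball x r)
            ≤ (ENNReal.ofReal (C⁻¹ * Real.exp (-(C * dist x y ^ 2) / t)) *
                ENNReal.ofReal ((Real.sqrt (1 * C))⁻¹)) / μ (ball x r) :=
              ENNReal.div_le_div_right hconst _
          _ = ENNReal.ofReal (C⁻¹ * Real.exp (-(C * dist x y ^ 2) / t)) *
                (ENNReal.ofReal ((Real.sqrt (1 * C))⁻¹) / μ (ball x r)) := by
              rw [mul_div_assoc]
          _ ≤ ENNReal.ofReal (C⁻¹ * Real.exp (-(C * dist x y ^ 2) / t)) *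
                (μ (ball x r) * μ (ball y r)) ^ (-(1 : ℝ) / 2) :=
              mul_le_mul_right haux _
      calc ENNReal.ofReal (C ^ (-2 : ℝ) * Real.exp (-C)) * (μ (ball x r \ Ω) / μ (ball x r))
          = ENNReal.ofReal (C ^ (-2 : ℝ) * Real.exp (-C)) / μ (ball x r) *
              μ (Ωᶜ ∩ ball x r) := by
            rw [Set.diff_eq, Set.inter_comm (ball x r) Ωᶜ, div_eq_mul_inv, div_eq_mul_inv]
            ring
        _ = ∫⁻ _ in Ωᶜ ∩ ball x r,
              ENNReal.ofReal (C ^ (-2 : ℝ) * Real.exp (-C)) / μ (ball x r) ∂μ :=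
            (setLIntegral_const _ _).symm
        _ ≤ ∫⁻ y in Ωᶜ ∩ ball x r, p x y t ∂μ :=
            setLIntegral_mono (hl_meas_left p hp_meas x t) hptwise
        _ ≤ ∫⁻ y in Ωᶜ, p x y t ∂μ := lintegral_mono_set Set.inter_subset_left
    calc ENNReal.ofReal (C ^ (-2 : ℝ) * Real.exp (-C)) *
          (∫⁻ x in Ω, μ (ball x r \ Ω) / μ (ball x r) ∂μ)
        = ∫⁻ x in Ω, ENNReal.ofReal (C ^ (-2 : ℝ) * Real.exp (-C)) *
            (μ (ball x r \ Ω) / μ (ball x r)) ∂μ :=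
          (lintegral_const_mul' _ _ ENNReal.ofReal_ne_top).symm
      _ ≤ ∫⁻ x in Ω, ∫⁻ y in Ωᶜ, p x y t ∂μ ∂μ := lintegral_mono fun x => hpt x
      _ = hlG μ p Ω t := rfl
  · -- UPPER BOUND
    rw [hFG]
    have hLpos : (0 : ℝ) < Real.log 2 := Real.log_pos one_lt_two
    have hxL : Real.log 2 ≤ Real.log C := Real.log_le_log (by norm_num) hC
    have hβpos : 0 < 3 * (Real.log 2 + (7 + Real.log C / Real.log 2) * Real.log C) := by
      have h1 : 0 < Real.log C / Real.log 2 := div_pos (lt_of_lt_of_le hLpos hxL) hLpos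
      nlinarith
    set n : ℕ := ⌈C * (3 * (Real.log 2 + (7 + Real.log C / Real.log 2) * Real.log C))⌉₊
      with hndef
    have hn0 : 0 < n := Nat.ceil_pos.2 (mul_pos hC0 hβpos)
    have hn0R : (0 : ℝ) < (n : ℝ) := by exact_mod_cast hn0
    have hnlow : C * (3 * (Real.log 2 + (7 + Real.log C / Real.log 2) * Real.log C))
        ≤ (n : ℝ) := Nat.le_ceil _
    have hnhigh : (n : ℝ)
        ≤ C * (3 * (Real.log 2 + (7 + Real.log C / Real.log 2) * Real.log C)) + 1 :=
      le_of_lt (Nat.ceil_lt_add_one (mul_pos hC0 hβpos).le)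
    set K : ℕ := ⌈C⌉₊ with hKdef
    have hK0 : 0 < K := Nat.ceil_pos.2 hC0
    have hKlow : C ≤ (K : ℝ) := Nat.le_ceil _
    have hKhigh : (K : ℝ) ≤ 3 / 2 * C := by
      have h := Nat.ceil_lt_add_one hC0.le
      linarith
    set m : ℕ := Nat.clog 4 n with hmdef
    set m2 : ℕ := Nat.clog 4 (K * n) with hm2def
    have hm4 : (n : ℝ) ≤ 4 ^ m := by exact_mod_cast Nat.le_pow_clog (by norm_num) n
    have hm24 : (K : ℕ) * n ≤ 4 ^ m2 := Nat.le_pow_clog (by norm_num) (K * n)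
    have hclogR : ∀ k : ℕ, 0 < k →
        ((Nat.clog 4 k : ℕ) : ℝ) ≤ Real.log k / (2 * Real.log 2) + 1 := by
      intro k hk
      have hk1 : (1 : ℝ) ≤ (k : ℝ) := by exact_mod_cast hk
      have hlogb0 : 0 ≤ Real.logb 4 (k : ℝ) := Real.logb_nonneg (by norm_num) hk1
      have h1 : (k : ℝ) ≤ (4 : ℝ) ^ (⌈Real.logb 4 (k : ℝ)⌉₊ : ℕ) :=
        calc (k : ℝ) = (4 : ℝ) ^ (Real.logb 4 (k : ℝ)) :=
            (Real.rpow_logb (by norm_num) (by norm_num) (by linarith)).symm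
          _ ≤ (4 : ℝ) ^ ((⌈Real.logb 4 (k : ℝ)⌉₊ : ℕ) : ℝ) :=
            Real.rpow_le_rpow_of_exponent_le (by norm_num) (Nat.le_ceil _)
          _ = (4 : ℝ) ^ (⌈Real.logb 4 (k : ℝ)⌉₊ : ℕ) := Real.rpow_natCast _ _
      have h3 : k ≤ 4 ^ (⌈Real.logb 4 (k : ℝ)⌉₊ : ℕ) := by exact_mod_cast h1
      have h4 : Nat.clog 4 k ≤ ⌈Real.logb 4 (k : ℝ)⌉₊ :=
        (Nat.clog_le_iff_le_pow (by norm_num)).2 h3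
      have h5 : ((⌈Real.logb 4 (k : ℝ)⌉₊ : ℕ) : ℝ) ≤ Real.logb 4 (k : ℝ) + 1 :=
        le_of_lt (Nat.ceil_lt_add_one hlogb0)
      have h6 : Real.logb 4 (k : ℝ) = Real.log k / (2 * Real.log 2) := by
        rw [Real.logb, show Real.log 4 = 2 * Real.log 2 by
          rw [show (4 : ℝ) = 2 ^ 2 by norm_num, Real.log_pow]; push_cast; ring]
      have h7 : ((Nat.clog 4 k : ℕ) : ℝ) ≤ ((⌈Real.logb 4 (k : ℝ)⌉₊ : ℕ) : ℝ) := by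
        exact_mod_cast h4
      linarith [h5, h6, h7]
    have hmR : (m : ℝ) ≤ Real.log (n : ℝ) / (2 * Real.log 2) + 1 := hclogR n hn0
    have hm2R : (m2 : ℝ) ≤ Real.log (3 / 2 * C * (n : ℝ)) / (2 * Real.log 2) + 1 := by
      refine (hclogR (K * n) (by positivity)).trans ?_
      have h1 : ((K * n : ℕ) : ℝ) ≤ 3 / 2 * C * (n : ℝ) := by
        push_cast
        exact mul_le_mul_of_nonneg_right hKhigh hn0R.le
      have h2 : Real.log ((K * n : ℕ) : ℝ) ≤ Real.log (3 / 2 * C * (n : ℝ)) := by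
        apply Real.log_le_log _ h1
        have : (0:ℕ) < K * n := by positivity
        exact_mod_cast this
      have h3 : Real.log ((K * n : ℕ) : ℝ) / (2 * Real.log 2)
          ≤ Real.log (3 / 2 * C * (n : ℝ)) / (2 * Real.log 2) :=
        (div_le_div_iff_of_pos_right (by linarith)).2 h2
      linarith
    set s : ℝ := t / (n : ℝ) with hsdef
    have hs0 : 0 < s := by positivity
    set rs := Real.sqrt s with hrsdef
    have hrs0 : 0 < rs := Real.sqrt_pos.2 hs0
    have hsn : (n : ℝ) * s = t := by
      rw [hsdef]
      field_simp
    have hpow24 : ∀ k : ℕ, ((2 : ℝ) ^ k) ^ 2 = 4 ^ k := by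
      intro k
      rw [← pow_mul, show (4 : ℝ) = 2 ^ 2 by norm_num, ← pow_mul, mul_comm]
    have hsqrt4 : ∀ k : ℕ, Real.sqrt ((4 : ℝ) ^ k) = 2 ^ k := by
      intro k
      rw [← hpow24 k, Real.sqrt_sq (by positivity)]
    have hradm : r ≤ 2 ^ m * rs := by
      rw [hrdef, hrsdef, ← hsqrt4 m, ← Real.sqrt_mul (by positivity)]
      apply Real.sqrt_le_sqrt
      have h1 : (1 : ℝ) ≤ (4 : ℝ) ^ m / (n : ℝ) := (one_le_div hn0R).2 hm4
      have h2 : (4 : ℝ) ^ m * s = ((4 : ℝ) ^ m / (n : ℝ)) * t := by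
        rw [hsdef]; ring
      nlinarith
    have hradm2 : ∀ j : ℕ, Real.sqrt (((K * 4 ^ (j + 1) : ℕ) : ℝ) * t)
        ≤ 2 ^ (j + 1 + m2) * rs := by
      intro j
      rw [hrsdef, ← hsqrt4 (j + 1 + m2), ← Real.sqrt_mul (by positivity)]
      apply Real.sqrt_le_sqrt
      have h1 : ((K * 4 ^ (j + 1) : ℕ) : ℝ) * (n : ℝ) ≤ (4 : ℝ) ^ (j + 1 + m2) := by
        have h2 : K * 4 ^ (j + 1) * n ≤ 4 ^ (j + 1 + m2) := by
          calc K * 4 ^ (j + 1) * n = 4 ^ (j + 1) * (K * n) := by ring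
            _ ≤ 4 ^ (j + 1) * 4 ^ m2 := Nat.mul_le_mul_left _ hm24
            _ = 4 ^ (j + 1 + m2) := (pow_add 4 (j + 1) m2).symm
        calc ((K * 4 ^ (j + 1) : ℕ) : ℝ) * (n : ℝ) = ((K * 4 ^ (j + 1) * n : ℕ) : ℝ) := by
              push_cast; ring
          _ ≤ ((4 ^ (j + 1 + m2) : ℕ) : ℝ) := by exact_mod_cast h2
          _ = (4 : ℝ) ^ (j + 1 + m2) := by push_cast; ring
      have h3 : (4 : ℝ) ^ (j + 1 + m2) * s = ((4 : ℝ) ^ (j + 1 + m2) / (n : ℝ)) * t := by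
        rw [hsdef]; ring
      rw [h3]
      have h4 : ((K * 4 ^ (j + 1) : ℕ) : ℝ) ≤ (4 : ℝ) ^ (j + 1 + m2) / (n : ℝ) := by
        rw [le_div_iff₀ hn0R]
        exact h1
      nlinarith [ht, h4]
    have hT0 : ∀ j : ℕ, 0 < ((K * 4 ^ (j + 1) : ℕ) : ℝ) * t := by
      intro j
      have h1 : 0 < K * 4 ^ (j + 1) := by positivity
      have h2 : (0 : ℝ) < ((K * 4 ^ (j + 1) : ℕ) : ℝ) := by exact_mod_cast h1
      positivity
    -- near bound
    have hnear : ∀ x : M, (∫⁻ y in ball x r ∩ Ωᶜ, p x y s ∂μ)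
        ≤ ENNReal.ofReal (C ^ m * (C * Real.sqrt C)) *
          (μ (ball x r \ Ω) / μ (ball x r)) := by
      intro x
      have hX0 : μ (ball x r) ≠ 0 := (hball x r hr0).1.ne'
      have hXt : μ (ball x r) ≠ ⊤ := (hball x r hr0).2.ne
      have hptwise : ∀ y ∈ ball x r ∩ Ωᶜ,
          p x y s ≤ ENNReal.ofReal (C ^ m * (C * Real.sqrt C)) / μ (ball x r) := by
        intro y hy
        have hdyx : dist y x < r := mem_ball.1 hy.1
        refine (hLY_upper x y s hs0).trans ?_
        have h1 : μ (ball x r) ≤ ENNReal.ofReal (C ^ m) * μ (ball x rs) :=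
          hl_ball_le μ hC0.le hdbl x hrs0 m hradm
        have h2 : μ (ball x r) ≤ ENNReal.ofReal (C ^ (m + 1)) * μ (ball y rs) := by
          have hsub : ball x r ⊆ ball y (2 * r) := ball_subset_ball' (by
            rw [dist_comm]; linarith)
          calc μ (ball x r) ≤ μ (ball y (2 * r)) := measure_mono hsub
            _ ≤ ENNReal.ofReal (C ^ (m + 1)) * μ (ball y rs) := by
                apply hl_ball_le μ hC0.le hdbl y hrs0 (m + 1)
                rw [pow_succ]
                nlinarith [hradm, hrs0]
        have haux := hl_enn_aux1 (a := μ (ball x rs)) (b := μ (ball y rs))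
          (X := μ (ball x r)) (hball x rs hrs0).1.ne' (hball x rs hrs0).2.ne
          (hball y rs hrs0).1.ne' (hball y rs hrs0).2.ne hX0 hXt h1 h2
        calc ENNReal.ofReal (C * Real.exp (-(dist x y ^ 2) / (C * s))) *
              (μ (ball x rs) * μ (ball y rs)) ^ (-(1 : ℝ) / 2)
            ≤ ENNReal.ofReal C *
              (ENNReal.ofReal (Real.sqrt (C ^ m * C ^ (m + 1))) / μ (ball x r)) := by
              apply mul_le_mul ?_ haux zero_le zero_le
              apply ENNReal.ofReal_le_ofReal
              have hee : Real.exp (-(dist x y ^ 2) / (C * s)) ≤ 1 := by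
                rw [Real.exp_le_one_iff]
                have h3 : 0 ≤ dist x y ^ 2 / (C * s) := by positivity
                rw [neg_div]
                linarith
              nlinarith [hC0]
          _ = ENNReal.ofReal (C ^ m * (C * Real.sqrt C)) / μ (ball x r) := by
              rw [← mul_div_assoc, ← ENNReal.ofReal_mul hC0.le]
              congr 2
              rw [show C ^ m * C ^ (m + 1) = (C ^ m) ^ 2 * C by ring,
                Real.sqrt_mul (sq_nonneg _), Real.sqrt_sq (by positivity)]
              ring
      calc ∫⁻ y in ball x r ∩ Ωᶜ, p x y s ∂μ
          ≤ ∫⁻ _ in ball x r ∩ Ωᶜ,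
              ENNReal.ofReal (C ^ m * (C * Real.sqrt C)) / μ (ball x r) ∂μ :=
            setLIntegral_mono measurable_const hptwise
        _ = ENNReal.ofReal (C ^ m * (C * Real.sqrt C)) / μ (ball x r) *
              μ (ball x r ∩ Ωᶜ) := setLIntegral_const _ _
        _ = ENNReal.ofReal (C ^ m * (C * Real.sqrt C)) *
              (μ (ball x r \ Ω) / μ (ball x r)) := by
            rw [Set.diff_eq, div_eq_mul_inv, div_eq_mul_inv]
            ring
    -- far pointwise
    have hfar : ∀ (x : M) (j : ℕ),
        ∀ y ∈ (ball x (2 ^ (j + 1) * r) \ ball x (2 ^ j * r)) ∩ Ωᶜ,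
        p x y s ≤ ENNReal.ofReal (C ^ (j + 3 + m2) * Real.exp 1 *
          Real.exp (-(4 ^ j * (n : ℝ) / C))) * p x y (((K * 4 ^ (j + 1) : ℕ) : ℝ) * t) := by
      intro x j y hy
      have hd1 : 2 ^ j * r ≤ dist x y := by
        rw [dist_comm]
        exact le_of_not_gt fun hc => hy.1.2 (mem_ball.2 hc)
      have hd2 : dist x y < 2 ^ (j + 1) * r := by
        rw [dist_comm]; exact mem_ball.1 hy.1.1
      have hd0 : 0 ≤ dist x y := dist_nonneg
      have hTj0 : 0 < ((K * 4 ^ (j + 1) : ℕ) : ℝ) * t := hT0 j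
      have hsT0 : 0 < Real.sqrt (((K * 4 ^ (j + 1) : ℕ) : ℝ) * t) := Real.sqrt_pos.2 hTj0
      have hup : p x y s ≤ ENNReal.ofReal (C * Real.exp (-(4 ^ j * (n : ℝ) / C))) *
          (μ (ball x rs) * μ (ball y rs)) ^ (-(1 : ℝ) / 2) := by
        refine (hLY_upper x y s hs0).trans
          (mul_le_mul_left (ENNReal.ofReal_le_ofReal ?_) _)
        have hee : Real.exp (-(dist x y ^ 2) / (C * s))
            ≤ Real.exp (-(4 ^ j * (n : ℝ) / C)) := by
          apply Real.exp_le_exp.2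
          have hd2' : 4 ^ j * t ≤ dist x y ^ 2 := by
            have h1 : (2 ^ j * r) ^ 2 ≤ dist x y ^ 2 :=
              pow_le_pow_left₀ (by positivity) hd1 2
            calc (4 : ℝ) ^ j * t = (2 ^ j * r) ^ 2 := by rw [mul_pow, hpow24 j, hr2]
              _ ≤ _ := h1
          have heq : 4 ^ j * (n : ℝ) / C = 4 ^ j * t / (C * s) := by
            rw [← hsn]
            field_simp
          rw [heq, neg_div]
          apply neg_le_neg
          gcongr
        exact mul_le_mul_of_nonneg_left hee hC0.le
      have hbx : μ (ball x (Real.sqrt (((K * 4 ^ (j + 1) : ℕ) : ℝ) * t)))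
          ≤ ENNReal.ofReal (C ^ (j + 1 + m2)) * μ (ball x rs) :=
        hl_ball_le μ hC0.le hdbl x hrs0 _ (hradm2 j)
      have hby : μ (ball y (Real.sqrt (((K * 4 ^ (j + 1) : ℕ) : ℝ) * t)))
          ≤ ENNReal.ofReal (C ^ (j + 1 + m2)) * μ (ball y rs) :=
        hl_ball_le μ hC0.le hdbl y hrs0 _ (hradm2 j)
      have haux3 := hl_enn_aux3 (a := μ (ball x rs)) (b := μ (ball y rs))
        (a' := μ (ball x (Real.sqrt (((K * 4 ^ (j + 1) : ℕ) : ℝ) * t))))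
        (b' := μ (ball y (Real.sqrt (((K * 4 ^ (j + 1) : ℕ) : ℝ) * t))))
        (hball x rs hrs0).1.ne' (hball x rs hrs0).2.ne
        (hball y rs hrs0).1.ne' (hball y rs hrs0).2.ne
        (hball x _ hsT0).1.ne' (hball x _ hsT0).2.ne
        (hball y _ hsT0).1.ne' (hball y _ hsT0).2.ne hbx hby
      have hGT : (μ (ball x (Real.sqrt (((K * 4 ^ (j + 1) : ℕ) : ℝ) * t))) *
            μ (ball y (Real.sqrt (((K * 4 ^ (j + 1) : ℕ) : ℝ) * t)))) ^ (-(1 : ℝ) / 2)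
          ≤ ENNReal.ofReal (C * Real.exp 1) * p x y (((K * 4 ^ (j + 1) : ℕ) : ℝ) * t) := by
        have hexp1 : Real.exp (-1 : ℝ)
            ≤ Real.exp (-(C * dist x y ^ 2) / (((K * 4 ^ (j + 1) : ℕ) : ℝ) * t)) := by
          apply Real.exp_le_exp.2
          rw [neg_div]
          apply neg_le_neg
          rw [div_le_one hTj0]
          have h1 : dist x y ^ 2 ≤ 4 ^ (j + 1) * t := by
            have h2 : dist x y ^ 2 ≤ (2 ^ (j + 1) * r) ^ 2 := pow_le_pow_left₀ hd0 hd2.le 2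
            calc dist x y ^ 2 ≤ (2 ^ (j + 1) * r) ^ 2 := h2
              _ = 4 ^ (j + 1) * t := by rw [mul_pow, hpow24, hr2]
          have hcst : ((K * 4 ^ (j + 1) : ℕ) : ℝ) = (K : ℝ) * 4 ^ (j + 1) := by
            push_cast; ring
          rw [hcst]
          have h5 : C * dist x y ^ 2 ≤ C * (4 ^ (j + 1) * t) :=
            mul_le_mul_of_nonneg_left h1 hC0.le
          have h6 : C * (4 ^ (j + 1) * t) ≤ (K : ℝ) * (4 ^ (j + 1) * t) :=
            mul_le_mul_of_nonneg_right hKlow (by positivity)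
          calc C * dist x y ^ 2 ≤ (K : ℝ) * (4 ^ (j + 1) * t) := le_trans h5 h6
            _ = (K : ℝ) * 4 ^ (j + 1) * t := by ring
        have hlow := hLY_lower x y (((K * 4 ^ (j + 1) : ℕ) : ℝ) * t) hTj0
        have hlow2 : ENNReal.ofReal (C⁻¹ * Real.exp (-1 : ℝ)) *
            (μ (ball x (Real.sqrt (((K * 4 ^ (j + 1) : ℕ) : ℝ) * t))) *
              μ (ball y (Real.sqrt (((K * 4 ^ (j + 1) : ℕ) : ℝ) * t)))) ^ (-(1 : ℝ) / 2)
            ≤ p x y (((K * 4 ^ (j + 1) : ℕ) : ℝ) * t) := by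
          refine le_trans (mul_le_mul_left (ENNReal.ofReal_le_ofReal ?_) _) hlow
          exact mul_le_mul_of_nonneg_left hexp1 (by positivity)
        calc (μ (ball x (Real.sqrt (((K * 4 ^ (j + 1) : ℕ) : ℝ) * t))) *
              μ (ball y (Real.sqrt (((K * 4 ^ (j + 1) : ℕ) : ℝ) * t)))) ^ (-(1 : ℝ) / 2)
            = ENNReal.ofReal (C * Real.exp 1) * (ENNReal.ofReal (C⁻¹ * Real.exp (-1 : ℝ)) *
                (μ (ball x (Real.sqrt (((K * 4 ^ (j + 1) : ℕ) : ℝ) * t))) *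
                  μ (ball y (Real.sqrt (((K * 4 ^ (j + 1) : ℕ) : ℝ) * t)))) ^
                    (-(1 : ℝ) / 2)) := by
              rw [← mul_assoc, ← ENNReal.ofReal_mul (by positivity),
                show C * Real.exp 1 * (C⁻¹ * Real.exp (-1 : ℝ)) = 1 by
                  rw [Real.exp_neg]; field_simp,
                ENNReal.ofReal_one, one_mul]
          _ ≤ ENNReal.ofReal (C * Real.exp 1) * p x y (((K * 4 ^ (j + 1) : ℕ) : ℝ) * t) :=
              mul_le_mul_right hlow2 _
      calc p x y s
          ≤ ENNReal.ofReal (C * Real.exp (-(4 ^ j * (n : ℝ) / C))) *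
            (μ (ball x rs) * μ (ball y rs)) ^ (-(1 : ℝ) / 2) := hup
        _ ≤ ENNReal.ofReal (C * Real.exp (-(4 ^ j * (n : ℝ) / C))) *
            (ENNReal.ofReal (C ^ (j + 1 + m2)) *
              ((μ (ball x (Real.sqrt (((K * 4 ^ (j + 1) : ℕ) : ℝ) * t))) *
                μ (ball y (Real.sqrt (((K * 4 ^ (j + 1) : ℕ) : ℝ) * t)))) ^ (-(1 : ℝ) / 2))) :=
            mul_le_mul_right haux3 _
        _ ≤ ENNReal.ofReal (C * Real.exp (-(4 ^ j * (n : ℝ) / C))) *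
            (ENNReal.ofReal (C ^ (j + 1 + m2)) *
              (ENNReal.ofReal (C * Real.exp 1) * p x y (((K * 4 ^ (j + 1) : ℕ) : ℝ) * t))) :=
            mul_le_mul_right (mul_le_mul_right hGT _) _
        _ = ENNReal.ofReal (C ^ (j + 3 + m2) * Real.exp 1 *
              Real.exp (-(4 ^ j * (n : ℝ) / C))) * p x y (((K * 4 ^ (j + 1) : ℕ) : ℝ) * t) := by
            rw [← mul_assoc, ← mul_assoc, ← ENNReal.ofReal_mul (by positivity),
              ← ENNReal.ofReal_mul (by positivity)]
            congr 2
            rw [show j + 3 + m2 = j + 1 + m2 + 2 by omega, pow_add]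
            ring
    -- far integral pointwise in x
    have hfarint : ∀ x : M,
        (∫⁻ y in (ball x r)ᶜ ∩ Ωᶜ, p x y s ∂μ)
          ≤ ∑' j : ℕ, ENNReal.ofReal (C ^ (j + 3 + m2) * Real.exp 1 *
              Real.exp (-(4 ^ j * (n : ℝ) / C))) *
              (∫⁻ y in Ωᶜ, p x y (((K * 4 ^ (j + 1) : ℕ) : ℝ) * t) ∂μ) := by
      intro x
      have hcover : (ball x r)ᶜ ∩ Ωᶜ
          ⊆ ⋃ j : ℕ, (ball x (2 ^ (j + 1) * r) \ ball x (2 ^ j * r)) ∩ Ωᶜ := by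
        rintro y ⟨hyB, hyΩ⟩
        have hdy : r ≤ dist y x := le_of_not_gt fun hc => hyB (mem_ball.2 hc)
        have hq : 1 ≤ dist y x / r := (one_le_div hr0).2 hdy
        obtain ⟨j, hj1, hj2⟩ := hl_exists_annulus hq
        refine Set.mem_iUnion.2 ⟨j, ⟨⟨?_, ?_⟩, hyΩ⟩⟩
        · exact mem_ball.2 ((div_lt_iff₀ hr0).1 hj2)
        · intro hc
          have h1 := mem_ball.1 hc
          have h2 : 2 ^ j * r ≤ dist y x := by
            have h3 := (le_div_iff₀ hr0).1 hj1
            linarith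
          linarith
      calc ∫⁻ y in (ball x r)ᶜ ∩ Ωᶜ, p x y s ∂μ
          ≤ ∫⁻ y in ⋃ j : ℕ, (ball x (2 ^ (j + 1) * r) \ ball x (2 ^ j * r)) ∩ Ωᶜ,
              p x y s ∂μ := lintegral_mono_set hcover
        _ ≤ ∑' j : ℕ, ∫⁻ y in (ball x (2 ^ (j + 1) * r) \ ball x (2 ^ j * r)) ∩ Ωᶜ,
              p x y s ∂μ := lintegral_iUnion_le _ _
        _ ≤ _ := by
            apply ENNReal.tsum_le_tsum
            intro j
            calc ∫⁻ y in (ball x (2 ^ (j + 1) * r) \ ball x (2 ^ j * r)) ∩ Ωᶜ, p x y s ∂μ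
                ≤ ∫⁻ y in (ball x (2 ^ (j + 1) * r) \ ball x (2 ^ j * r)) ∩ Ωᶜ,
                    ENNReal.ofReal (C ^ (j + 3 + m2) * Real.exp 1 *
                      Real.exp (-(4 ^ j * (n : ℝ) / C))) *
                      p x y (((K * 4 ^ (j + 1) : ℕ) : ℝ) * t) ∂μ :=
                  setLIntegral_mono
                    ((hl_meas_left p hp_meas x (((K * 4 ^ (j + 1) : ℕ) : ℝ) * t)).const_mul _)
                    (hfar x j)
              _ = ENNReal.ofReal (C ^ (j + 3 + m2) * Real.exp 1 *
                    Real.exp (-(4 ^ j * (n : ℝ) / C))) *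
                    ∫⁻ y in (ball x (2 ^ (j + 1) * r) \ ball x (2 ^ j * r)) ∩ Ωᶜ,
                      p x y (((K * 4 ^ (j + 1) : ℕ) : ℝ) * t) ∂μ :=
                  lintegral_const_mul' _ _ ENNReal.ofReal_ne_top
              _ ≤ ENNReal.ofReal (C ^ (j + 3 + m2) * Real.exp 1 *
                    Real.exp (-(4 ^ j * (n : ℝ) / C))) *
                    ∫⁻ y in Ωᶜ, p x y (((K * 4 ^ (j + 1) : ℕ) : ℝ) * t) ∂μ :=
                  mul_le_mul_right (lintegral_mono_set Set.inter_subset_right) _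
    -- pointwise split of the inner integral
    have hsp : ∀ x : M, (∫⁻ y in Ωᶜ, p x y s ∂μ)
        = (∫⁻ y in ball x r ∩ Ωᶜ, p x y s ∂μ)
          + ∫⁻ y in (ball x r)ᶜ ∩ Ωᶜ, p x y s ∂μ := by
      intro x
      rw [← Measure.restrict_restrict measurableSet_ball,
        ← Measure.restrict_restrict measurableSet_ball.compl]
      exact (lintegral_add_compl (fun y => p x y s) measurableSet_ball
        (μ := μ.restrict Ωᶜ)).symm
    have hmeasTj : ∀ j : ℕ,
        Measurable fun x : M => ∫⁻ y in Ωᶜ, p x y (((K * 4 ^ (j + 1) : ℕ) : ℝ) * t) ∂μ :=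
      fun j => Measurable.lintegral_prod_right'
        (f := fun q : M × M => p q.1 q.2 (((K * 4 ^ (j + 1) : ℕ) : ℝ) * t))
        (hl_meas_pair p hp_meas _)
    have hfarmeas : Measurable fun x : M => ∑' j : ℕ,
        ENNReal.ofReal (C ^ (j + 3 + m2) * Real.exp 1 *
          Real.exp (-(4 ^ j * (n : ℝ) / C))) *
          (∫⁻ y in Ωᶜ, p x y (((K * 4 ^ (j + 1) : ℕ) : ℝ) * t) ∂μ) :=
      Measurable.ennreal_tsum fun j => (hmeasTj j).const_mul _
    have hGs : hlG μ p Ω s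
        ≤ ENNReal.ofReal (C ^ m * (C * Real.sqrt C)) *
            (∫⁻ x in Ω, μ (ball x r \ Ω) / μ (ball x r) ∂μ)
          + ∑' j : ℕ, ENNReal.ofReal (C ^ (j + 3 + m2) * Real.exp 1 *
              Real.exp (-(4 ^ j * (n : ℝ) / C))) *
              hlG μ p Ω (((K * 4 ^ (j + 1) : ℕ) : ℝ) * t) := by
      calc hlG μ p Ω s
          = ∫⁻ x in Ω, ((∫⁻ y in ball x r ∩ Ωᶜ, p x y s ∂μ)
              + ∫⁻ y in (ball x r)ᶜ ∩ Ωᶜ, p x y s ∂μ) ∂μ := lintegral_congr hsp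
        _ ≤ ∫⁻ x in Ω, ((∫⁻ y in ball x r ∩ Ωᶜ, p x y s ∂μ)
              + ∑' j : ℕ, ENNReal.ofReal (C ^ (j + 3 + m2) * Real.exp 1 *
                Real.exp (-(4 ^ j * (n : ℝ) / C))) *
                (∫⁻ y in Ωᶜ, p x y (((K * 4 ^ (j + 1) : ℕ) : ℝ) * t) ∂μ)) ∂μ :=
            lintegral_mono fun x => add_le_add_right (hfarint x) _
        _ = (∫⁻ x in Ω, ∫⁻ y in ball x r ∩ Ωᶜ, p x y s ∂μ ∂μ)
              + ∫⁻ x in Ω, (∑' j : ℕ, ENNReal.ofReal (C ^ (j + 3 + m2) * Real.exp 1 *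
                Real.exp (-(4 ^ j * (n : ℝ) / C))) *
                (∫⁻ y in Ωᶜ, p x y (((K * 4 ^ (j + 1) : ℕ) : ℝ) * t) ∂μ)) ∂μ :=
            lintegral_add_right _ hfarmeas
        _ ≤ ENNReal.ofReal (C ^ m * (C * Real.sqrt C)) *
              (∫⁻ x in Ω, μ (ball x r \ Ω) / μ (ball x r) ∂μ)
            + ∑' j : ℕ, ENNReal.ofReal (C ^ (j + 3 + m2) * Real.exp 1 *
                Real.exp (-(4 ^ j * (n : ℝ) / C))) *
                hlG μ p Ω (((K * 4 ^ (j + 1) : ℕ) : ℝ) * t) := by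
            apply add_le_add
            · calc ∫⁻ x in Ω, ∫⁻ y in ball x r ∩ Ωᶜ, p x y s ∂μ ∂μ
                  ≤ ∫⁻ x in Ω, ENNReal.ofReal (C ^ m * (C * Real.sqrt C)) *
                      (μ (ball x r \ Ω) / μ (ball x r)) ∂μ :=
                    lintegral_mono fun x => hnear x
                _ = ENNReal.ofReal (C ^ m * (C * Real.sqrt C)) *
                      (∫⁻ x in Ω, μ (ball x r \ Ω) / μ (ball x r) ∂μ) :=
                    lintegral_const_mul' _ _ ENNReal.ofReal_ne_top
            · refine le_of_eq ?_
              calc ∫⁻ x in Ω, (∑' j : ℕ, ENNReal.ofReal (C ^ (j + 3 + m2) * Real.exp 1 *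
                    Real.exp (-(4 ^ j * (n : ℝ) / C))) *
                    (∫⁻ y in Ωᶜ, p x y (((K * 4 ^ (j + 1) : ℕ) : ℝ) * t) ∂μ)) ∂μ
                  = ∑' j : ℕ, ∫⁻ x in Ω, ENNReal.ofReal (C ^ (j + 3 + m2) * Real.exp 1 *
                      Real.exp (-(4 ^ j * (n : ℝ) / C))) *
                      (∫⁻ y in Ωᶜ, p x y (((K * 4 ^ (j + 1) : ℕ) : ℝ) * t) ∂μ) ∂μ :=
                    lintegral_tsum fun j => ((hmeasTj j).const_mul _).aemeasurable
                _ = ∑' j : ℕ, ENNReal.ofReal (C ^ (j + 3 + m2) * Real.exp 1 *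
                      Real.exp (-(4 ^ j * (n : ℝ) / C))) *
                      hlG μ p Ω (((K * 4 ^ (j + 1) : ℕ) : ℝ) * t) :=
                    tsum_congr fun j => lintegral_const_mul' _ _ ENNReal.ofReal_ne_top
    have hAcond := hl_scalarA hC hnlow
    have h12enn : ENNReal.ofReal (1 / 2 : ℝ) = 2⁻¹ := by
      rw [show (1 / 2 : ℝ) = (2 : ℝ)⁻¹ by norm_num,
        ENNReal.ofReal_inv_of_pos (by norm_num)]
      norm_num
    have hsumb : (∑' j : ℕ, ENNReal.ofReal (C ^ (j + 3 + m2) * Real.exp 1 *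
        Real.exp (-(4 ^ j * (n : ℝ) / C))) * hlG μ p Ω (((K * 4 ^ (j + 1) : ℕ) : ℝ) * t))
        ≤ ENNReal.ofReal (6 * Real.exp 1 * C ^ (4 + m2) * Real.exp (-((n : ℝ) / C)) * 2)
          * hlG μ p Ω t := by
      have hstep : ∀ j : ℕ, ENNReal.ofReal (C ^ (j + 3 + m2) * Real.exp 1 *
          Real.exp (-(4 ^ j * (n : ℝ) / C))) * hlG μ p Ω (((K * 4 ^ (j + 1) : ℕ) : ℝ) * t)
          ≤ ENNReal.ofReal (6 * Real.exp 1 * C ^ (4 + m2) * Real.exp (-((n : ℝ) / C)))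
            * (ENNReal.ofReal (1 / 2)) ^ j * hlG μ p Ω t := by
        intro j
        have hsmul : hlG μ p Ω (((K * 4 ^ (j + 1) : ℕ) : ℝ) * t)
            ≤ ((K * 4 ^ (j + 1) : ℕ) : ℝ≥0∞) * hlG μ p Ω t :=
          hl_G_nsmul μ p Ω hp_meas hp_symm hp_semi hp_sc hΩm (K * 4 ^ (j + 1))
            (by positivity) ht
        calc ENNReal.ofReal (C ^ (j + 3 + m2) * Real.exp 1 *
              Real.exp (-(4 ^ j * (n : ℝ) / C))) * hlG μ p Ω (((K * 4 ^ (j + 1) : ℕ) : ℝ) * t)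
            ≤ ENNReal.ofReal (C ^ (j + 3 + m2) * Real.exp 1 *
                Real.exp (-(4 ^ j * (n : ℝ) / C))) *
                (((K * 4 ^ (j + 1) : ℕ) : ℝ≥0∞) * hlG μ p Ω t) := mul_le_mul_right hsmul _
          _ = ENNReal.ofReal (C ^ (j + 3 + m2) * Real.exp 1 *
                Real.exp (-(4 ^ j * (n : ℝ) / C)) * ((K : ℝ) * 4 ^ (j + 1))) *
                hlG μ p Ω t := by
              rw [← mul_assoc]
              congr 1
              rw [show ((K * 4 ^ (j + 1) : ℕ) : ℝ≥0∞)
                  = ENNReal.ofReal ((K : ℝ) * 4 ^ (j + 1)) by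
                rw [← ENNReal.ofReal_natCast (K * 4 ^ (j + 1))]
                congr 1
                push_cast
                ring]
              rw [← ENNReal.ofReal_mul (by positivity)]
          _ ≤ ENNReal.ofReal (6 * Real.exp 1 * C ^ (4 + m2) * Real.exp (-((n : ℝ) / C)) *
                (1 / 2) ^ j) * hlG μ p Ω t := by
              apply mul_le_mul_left
              apply ENNReal.ofReal_le_ofReal
              exact hl_coef hC (by positivity) hKhigh hAcond (by positivity) m2 j
          _ = ENNReal.ofReal (6 * Real.exp 1 * C ^ (4 + m2) * Real.exp (-((n : ℝ) / C)))
                * (ENNReal.ofReal (1 / 2)) ^ j * hlG μ p Ω t := by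
              rw [ENNReal.ofReal_mul (by positivity), ENNReal.ofReal_pow (by norm_num)]
      calc (∑' j : ℕ, ENNReal.ofReal (C ^ (j + 3 + m2) * Real.exp 1 *
            Real.exp (-(4 ^ j * (n : ℝ) / C))) * hlG μ p Ω (((K * 4 ^ (j + 1) : ℕ) : ℝ) * t))
          ≤ ∑' j : ℕ, ENNReal.ofReal (6 * Real.exp 1 * C ^ (4 + m2) *
              Real.exp (-((n : ℝ) / C))) * (ENNReal.ofReal (1 / 2)) ^ j * hlG μ p Ω t :=
            ENNReal.tsum_le_tsum hstep
        _ = ENNReal.ofReal (6 * Real.exp 1 * C ^ (4 + m2) * Real.exp (-((n : ℝ) / C))) *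
              (∑' j : ℕ, (ENNReal.ofReal (1 / 2)) ^ j) * hlG μ p Ω t := by
            rw [ENNReal.tsum_mul_right, ENNReal.tsum_mul_left]
        _ = ENNReal.ofReal (6 * Real.exp 1 * C ^ (4 + m2) * Real.exp (-((n : ℝ) / C)) * 2)
              * hlG μ p Ω t := by
            rw [ENNReal.tsum_geometric, h12enn,
              show (1 : ℝ≥0∞) - 2⁻¹ = 2⁻¹ from
                ENNReal.sub_eq_of_eq_add (by norm_num) ENNReal.inv_two_add_inv_two.symm,
              inv_inv,
              ENNReal.ofReal_mul (p := 6 * Real.exp 1 * C ^ (4 + m2) *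
                Real.exp (-((n : ℝ) / C))) (by positivity), ENNReal.ofReal_ofNat]
    have hstep1 : hlG μ p Ω t ≤ (n : ℝ≥0∞) * hlG μ p Ω s := by
      have h1 : hlG μ p Ω t = hlG μ p Ω ((n : ℝ) * s) := by rw [hsn]
      rw [h1]
      exact hl_G_nsmul μ p Ω hp_meas hp_symm hp_semi hp_sc hΩm n hn0 hs0
    have hBcond : 12 * Real.exp 1 * (n : ℝ) * C ^ ((4 : ℝ) + (m2 : ℝ)) *
        Real.exp (-((n : ℝ) / C)) ≤ 1 / 2 :=
      hl_scalarB hC hnlow hnhigh (by positivity) hm2R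
    have htheta : (n : ℝ≥0∞) * ENNReal.ofReal (6 * Real.exp 1 * C ^ (4 + m2) *
        Real.exp (-((n : ℝ) / C)) * 2) ≤ 2⁻¹ := by
      have hrpow : (C : ℝ) ^ (4 + m2) = C ^ ((4 : ℝ) + (m2 : ℝ)) := by
        rw [← Real.rpow_natCast C (4 + m2)]
        congr 1
        push_cast
        ring
      have hreal : (n : ℝ) * (6 * Real.exp 1 * C ^ (4 + m2) *
          Real.exp (-((n : ℝ) / C)) * 2) ≤ 1 / 2 := by
        calc (n : ℝ) * (6 * Real.exp 1 * C ^ (4 + m2) * Real.exp (-((n : ℝ) / C)) * 2)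
            = 12 * Real.exp 1 * (n : ℝ) * C ^ ((4 : ℝ) + (m2 : ℝ)) *
              Real.exp (-((n : ℝ) / C)) := by rw [← hrpow]; ring
          _ ≤ 1 / 2 := hBcond
      calc (n : ℝ≥0∞) * ENNReal.ofReal (6 * Real.exp 1 * C ^ (4 + m2) *
            Real.exp (-((n : ℝ) / C)) * 2)
          = ENNReal.ofReal ((n : ℝ) * (6 * Real.exp 1 * C ^ (4 + m2) *
              Real.exp (-((n : ℝ) / C)) * 2)) := by
            rw [← ENNReal.ofReal_natCast n, ← ENNReal.ofReal_mul (by positivity)]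
        _ ≤ ENNReal.ofReal (1 / 2) := ENNReal.ofReal_le_ofReal hreal
        _ = 2⁻¹ := h12enn
    have hmaster : hlG μ p Ω t
        ≤ ENNReal.ofReal ((n : ℝ) * (C ^ m * (C * Real.sqrt C))) *
            (∫⁻ x in Ω, μ (ball x r \ Ω) / μ (ball x r) ∂μ)
          + 2⁻¹ * hlG μ p Ω t := by
      calc hlG μ p Ω t ≤ (n : ℝ≥0∞) * hlG μ p Ω s := hstep1
        _ ≤ (n : ℝ≥0∞) * (ENNReal.ofReal (C ^ m * (C * Real.sqrt C)) *
              (∫⁻ x in Ω, μ (ball x r \ Ω) / μ (ball x r) ∂μ)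
            + ∑' j : ℕ, ENNReal.ofReal (C ^ (j + 3 + m2) * Real.exp 1 *
                Real.exp (-(4 ^ j * (n : ℝ) / C))) *
                hlG μ p Ω (((K * 4 ^ (j + 1) : ℕ) : ℝ) * t)) := mul_le_mul_right hGs _
        _ ≤ (n : ℝ≥0∞) * (ENNReal.ofReal (C ^ m * (C * Real.sqrt C)) *
              (∫⁻ x in Ω, μ (ball x r \ Ω) / μ (ball x r) ∂μ))
            + (n : ℝ≥0∞) * (ENNReal.ofReal (6 * Real.exp 1 * C ^ (4 + m2) *
                Real.exp (-((n : ℝ) / C)) * 2) * hlG μ p Ω t) := by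
            rw [mul_add]
            exact add_le_add_right (mul_le_mul_right hsumb _) _
        _ ≤ ENNReal.ofReal ((n : ℝ) * (C ^ m * (C * Real.sqrt C))) *
              (∫⁻ x in Ω, μ (ball x r \ Ω) / μ (ball x r) ∂μ)
            + 2⁻¹ * hlG μ p Ω t := by
            apply add_le_add
            · apply le_of_eq
              rw [← mul_assoc, ← ENNReal.ofReal_natCast n,
                ← ENNReal.ofReal_mul (by positivity)]
            · rw [← mul_assoc]
              exact mul_le_mul_left htheta _
    have habsorb : hlG μ p Ω t
        ≤ 2 * (ENNReal.ofReal ((n : ℝ) * (C ^ m * (C * Real.sqrt C))) *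
            (∫⁻ x in Ω, μ (ball x r \ Ω) / μ (ball x r) ∂μ)) := by
      have h1 : hlG μ p Ω t - 2⁻¹ * hlG μ p Ω t
          ≤ ENNReal.ofReal ((n : ℝ) * (C ^ m * (C * Real.sqrt C))) *
            (∫⁻ x in Ω, μ (ball x r \ Ω) / μ (ball x r) ∂μ) :=
        tsub_le_iff_right.2 hmaster
      have h2 : 2⁻¹ * hlG μ p Ω t + 2⁻¹ * hlG μ p Ω t = hlG μ p Ω t := by
        rw [← add_mul, ENNReal.inv_two_add_inv_two, one_mul]
      have h3 : hlG μ p Ω t - 2⁻¹ * hlG μ p Ω t = 2⁻¹ * hlG μ p Ω t := by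
        nth_rewrite 1 [← h2]
        exact ENNReal.add_sub_cancel_right
          (ENNReal.mul_ne_top (by norm_num) hGfin)
      rw [h3] at h1
      have h4 : hlG μ p Ω t = 2 * (2⁻¹ * hlG μ p Ω t) := by
        rw [← mul_assoc, ENNReal.mul_inv_cancel two_ne_zero ENNReal.ofNat_ne_top, one_mul]
      calc hlG μ p Ω t = 2 * (2⁻¹ * hlG μ p Ω t) := h4
        _ ≤ _ := mul_le_mul_right h1 _
    have hCcond := hl_scalarC hC hnlow hnhigh (by positivity : (0 : ℝ) ≤ (m : ℝ)) hmR
    refine habsorb.trans ?_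
    have h2e : (2 : ℝ≥0∞) = ENNReal.ofReal (2 : ℝ) := by rw [ENNReal.ofReal_ofNat]
    rw [h2e, ← mul_assoc, ← ENNReal.ofReal_mul (by norm_num)]
    apply mul_le_mul_left
    apply ENNReal.ofReal_le_ofReal
    have hpoweq : C ^ ((m : ℝ) + 3 / 2) = C ^ m * (C * Real.sqrt C) := by
      rw [Real.rpow_add hC0, Real.rpow_natCast,
        show (3 / 2 : ℝ) = 1 + 1 / 2 by norm_num, Real.rpow_add hC0, Real.rpow_one,
        ← Real.sqrt_eq_rpow]
    calc 2 * ((n : ℝ) * (C ^ m * (C * Real.sqrt C)))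
        = 2 * (n : ℝ) * C ^ ((m : ℝ) + 3 / 2) := by rw [hpoweq]; ring
      _ ≤ _ := hCcond
end

section
/- Let m ≥ 1, let (z_i)_{i∈ℕ} be an enumeration of ℤ^m in ℝ^m, let r₁ ≥ r₂ ≥ … > 0 with δ = 1 − 2r₁ > 0 and ∑_{i=1}^∞ r_i^{2m} < ∞, and let Ω = ⋃_{i∈ℕ} B(z_i; r_i). Let H_Ω(t) = ∫_Ω ∫_Ω (4πt)^{-m/2} e^{-|x−y|²/(4t)} dy dx and, for each i, H_{B(z_i;r_i)}(t) = ∫_{B(z_i;r_i)} ∫_{B(z_i;r_i)} (4πt)^{-m/2} e^{-|x−y|²/(4t)} dy dx. Then for all t > 0, | H_Ω(t) − ∑_{i=1}^∞ H_{B(z_i;r_i)}(t) | ≤ ω_m² e^{-δ²/(8t)} ( √2/δ + (4πt)^{-1/2} )^m ∑_{i=1}^∞ r_i^{2m}, where ω_m is the volume of the unit ball in ℝ^m. -/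
open MeasureTheory Metric ENNReal

/-- The heat content of an open set `Ω ⊆ ℝᵐ` at time `t`, computed with the Euclidean
heat kernel `p(x,y;t) = (4πt)^{-m/2} e^{-|x-y|²/(4t)}`. -/
noncomputable def heatContent {m : ℕ} (Ω : Set (EuclideanSpace ℝ (Fin m))) (t : ℝ) :
    ℝ≥0∞ :=
  ∫⁻ x in Ω, ∫⁻ y in Ω,
    ENNReal.ofReal ((4 * Real.pi * t) ^ (-(m : ℝ) / 2) * Real.exp (-dist x y ^ 2 / (4 * t)))

/-- `z : ℕ → ℝᵐ` is an enumeration of the integer lattice `ℤᵐ ⊆ ℝᵐ`. -/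
def IsLatticeEnum (m : ℕ) (z : ℕ → EuclideanSpace ℝ (Fin m)) : Prop :=
  Function.Injective z ∧
    Set.range z = {x : EuclideanSpace ℝ (Fin m) | ∀ j : Fin m, ∃ k : ℤ, x j = (k : ℝ)}

set_option maxHeartbeats 1000000

lemma coord_dist_le {m : ℕ} (x y : EuclideanSpace ℝ (Fin m)) (j : Fin m) :
    |x j - y j| ≤ dist x y := by
  rw [EuclideanSpace.dist_eq]
  rw [← Real.sqrt_sq_eq_abs]
  apply Real.sqrt_le_sqrt
  have := Finset.single_le_sum (f := fun i => dist (x i) (y i) ^ 2)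
    (fun i _ => sq_nonneg _) (Finset.mem_univ j)
  simpa [Real.dist_eq] using this

lemma lattice_dist_ge {m : ℕ} {x y : EuclideanSpace ℝ (Fin m)}
    (hx : ∀ j : Fin m, ∃ k : ℤ, x j = (k : ℝ))
    (hy : ∀ j : Fin m, ∃ k : ℤ, y j = (k : ℝ)) (hne : x ≠ y) :
    1 ≤ dist x y := by
  have : ∃ j : Fin m, x j ≠ y j := by
    by_contra h
    push_neg at h
    exact hne (by ext j; exact h j)
  obtain ⟨j, hj⟩ := this
  obtain ⟨k, hk⟩ := hx j
  obtain ⟨l, hl⟩ := hy j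
  have hkl : k ≠ l := by rintro rfl; exact hj (hk.trans hl.symm)
  have h1 : (1 : ℝ) ≤ |x j - y j| := by
    rw [hk, hl, ← Int.cast_sub, ← Int.cast_abs]
    exact_mod_cast Int.one_le_abs (sub_ne_zero.mpr hkl)
  exact h1.trans (coord_dist_le x y j)

lemma gauss_step {a : ℝ} (ha : 0 < a) (n : ℕ) :
    Real.exp (-a * ((n : ℝ) + 1) ^ 2) ≤ ∫ x in (n : ℝ)..((n : ℝ) + 1), Real.exp (-a * x ^ 2) := by
  have h := intervalIntegral.integral_mono_on (a := (n : ℝ)) (b := (n : ℝ) + 1)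
    (f := fun _ => Real.exp (-a * ((n : ℝ) + 1) ^ 2)) (g := fun x => Real.exp (-a * x ^ 2))
    (by linarith) intervalIntegrable_const
    ((integrable_exp_neg_mul_sq ha).intervalIntegrable)
    (fun x hx => by
      rw [Set.mem_Icc] at hx
      apply Real.exp_le_exp.2
      have hx0 : 0 ≤ x := le_trans (Nat.cast_nonneg n) hx.1
      have hsq : x ^ 2 ≤ ((n : ℝ) + 1) ^ 2 := pow_le_pow_left₀ hx0 hx.2 2
      nlinarith)
  simpa using h

lemma gauss_partial_sum_le {a : ℝ} (ha : 0 < a) (N : ℕ) :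
    ∑ n ∈ Finset.range N, Real.exp (-a * ((n : ℝ) + 1) ^ 2) ≤ Real.sqrt (Real.pi / a) / 2 := by
  have key : ∑ n ∈ Finset.range N, Real.exp (-a * ((n : ℝ) + 1) ^ 2) ≤
      ∫ x in (0 : ℝ)..(N : ℝ), Real.exp (-a * x ^ 2) := by
    have := intervalIntegral.sum_integral_adjacent_intervals (a := fun k : ℕ => (k : ℝ))
      (f := fun x => Real.exp (-a * x ^ 2)) (n := N)
      (fun k _ => (integrable_exp_neg_mul_sq ha).intervalIntegrable)
    simp only [Nat.cast_zero] at this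
    rw [← this]
    apply Finset.sum_le_sum
    intro n _
    simpa [Nat.cast_succ] using gauss_step ha n
  refine key.trans ?_
  rw [← integral_gaussian_Ioi a]
  rw [intervalIntegral.integral_of_le (Nat.cast_nonneg N)]
  apply setIntegral_mono_set ((integrable_exp_neg_mul_sq ha).integrableOn)
  · filter_upwards with x using (Real.exp_pos _).le
  · filter_upwards with x hx using hx.1

lemma gauss_int_sum_le {a : ℝ} (ha : 0 < a) :
    ∑' n : ℤ, ENNReal.ofReal (Real.exp (-a * (n : ℝ) ^ 2)) ≤
      ENNReal.ofReal (1 + Real.sqrt (Real.pi / a)) := by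
  set f : ℤ → ℝ≥0∞ := fun n => ENNReal.ofReal (Real.exp (-a * (n : ℝ) ^ 2)) with hf
  have hsum : Summable f := ENNReal.summable
  have hsplit : ∑' n : ℤ, f n = ∑' n : ℕ, (f n + f (-((n : ℤ) + 1))) :=
    (tsum_nat_add_neg_add_one hsum).symm
  have hneg : ∀ n : ℕ, f (-((n : ℤ) + 1)) = f ((n : ℤ) + 1) := by
    intro n; simp only [hf]; congr 1; push_cast; ring
  have htail : ∑' n : ℕ, f ((n : ℤ) + 1) ≤ ENNReal.ofReal (Real.sqrt (Real.pi / a) / 2) := by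
    apply ENNReal.tsum_le_of_sum_range_le
    intro N
    calc ∑ n ∈ Finset.range N, f ((n : ℤ) + 1)
        = ENNReal.ofReal (∑ n ∈ Finset.range N, Real.exp (-a * ((n : ℝ) + 1) ^ 2)) := by
          rw [ENNReal.ofReal_sum_of_nonneg (fun n _ => (Real.exp_pos _).le)]
          apply Finset.sum_congr rfl
          intro n _
          simp [hf]
      _ ≤ _ := ENNReal.ofReal_le_ofReal (gauss_partial_sum_le ha N)
  have hzero : ∑' n : ℕ, f (n : ℤ) = f 0 + ∑' n : ℕ, f ((n : ℤ) + 1) := by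
    have := tsum_eq_zero_add' (f := fun n : ℕ => f (n : ℤ)) ENNReal.summable
    rw [this]
    congr 1
  calc ∑' n : ℤ, f n = ∑' n : ℕ, (f n + f (-((n : ℤ) + 1))) := hsplit
    _ = ∑' n : ℕ, f (n : ℤ) + ∑' n : ℕ, f ((n : ℤ) + 1) := by
        rw [ENNReal.tsum_add]; simp only [hneg]
    _ = f 0 + (∑' n : ℕ, f ((n : ℤ) + 1) + ∑' n : ℕ, f ((n : ℤ) + 1)) := by
        rw [hzero, add_assoc]
    _ ≤ ENNReal.ofReal 1 + (ENNReal.ofReal (Real.sqrt (Real.pi / a) / 2) +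
        ENNReal.ofReal (Real.sqrt (Real.pi / a) / 2)) := by
        gcongr
        · simp [hf]
    _ = ENNReal.ofReal (1 + Real.sqrt (Real.pi / a)) := by
        rw [← ENNReal.ofReal_add (by positivity) (by positivity),
          ← ENNReal.ofReal_add (by positivity) (by positivity)]
        congr 1
        ring

lemma gauss_pi_sum (a : ℝ) (m : ℕ) :
    ∑' k : Fin m → ℤ, ENNReal.ofReal (Real.exp (-a * ∑ j, ((k j : ℝ)) ^ 2)) =
      (∑' n : ℤ, ENNReal.ofReal (Real.exp (-a * (n : ℝ) ^ 2))) ^ m := by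
  induction m with
  | zero =>
    simp only [pow_zero]
    rw [show (∑' k : Fin 0 → ℤ, ENNReal.ofReal (Real.exp (-a * ∑ j, ((k j : ℝ)) ^ 2))) =
        ∑' _ : Fin 0 → ℤ, 1 from tsum_congr (by intro k; simp)]
    rw [tsum_eq_single (fun i : Fin 0 => i.elim0) ?_]
    intro b hb
    exact absurd (Subsingleton.elim b _) hb
  | succ m ih =>
    have he := (Fin.consEquiv (fun _ : Fin (m + 1) => ℤ)).tsum_eq
      (f := fun k : Fin (m + 1) → ℤ => ENNReal.ofReal (Real.exp (-a * ∑ j, ((k j : ℝ)) ^ 2)))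
    rw [← he]
    have hstep : ∀ p : ℤ × (Fin m → ℤ),
        ENNReal.ofReal (Real.exp (-a * ∑ j, (((Fin.consEquiv (fun _ : Fin (m + 1) => ℤ)) p j : ℝ)) ^ 2)) =
        ENNReal.ofReal (Real.exp (-a * (p.1 : ℝ) ^ 2)) *
          ENNReal.ofReal (Real.exp (-a * ∑ j, ((p.2 j : ℝ)) ^ 2)) := by
      rintro ⟨x, k⟩
      rw [← ENNReal.ofReal_mul (Real.exp_pos _).le, ← Real.exp_add]
      congr 2
      rw [Fin.sum_univ_succ]
      simp [Fin.consEquiv, mul_add]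
    calc ∑' p : ℤ × (Fin m → ℤ), ENNReal.ofReal
          (Real.exp (-a * ∑ j, (((Fin.consEquiv (fun _ : Fin (m + 1) => ℤ)) p j : ℝ)) ^ 2))
        = ∑' p : ℤ × (Fin m → ℤ), ENNReal.ofReal (Real.exp (-a * (p.1 : ℝ) ^ 2)) *
            ENNReal.ofReal (Real.exp (-a * ∑ j, ((p.2 j : ℝ)) ^ 2)) := tsum_congr hstep
      _ = ∑' x : ℤ, ∑' k : Fin m → ℤ, ENNReal.ofReal (Real.exp (-a * (x : ℝ) ^ 2)) *
            ENNReal.ofReal (Real.exp (-a * ∑ j, ((k j : ℝ)) ^ 2)) := ENNReal.tsum_prod'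
      _ = (∑' x : ℤ, ENNReal.ofReal (Real.exp (-a * (x : ℝ) ^ 2))) *
            (∑' k : Fin m → ℤ, ENNReal.ofReal (Real.exp (-a * ∑ j, ((k j : ℝ)) ^ 2))) := by
          simp_rw [ENNReal.tsum_mul_left]
          rw [ENNReal.tsum_mul_right]
      _ = _ := by rw [ih, pow_succ]; ring

noncomputable def latticeMap (m : ℕ) : (Fin m → ℤ) → EuclideanSpace ℝ (Fin m) :=
  fun k => (WithLp.equiv 2 (Fin m → ℝ)).symm (fun j => (k j : ℝ))

lemma latticeMap_apply (m : ℕ) (k : Fin m → ℤ) (j : Fin m) :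
    latticeMap m k j = (k j : ℝ) := rfl

lemma latticeMap_injective (m : ℕ) : Function.Injective (latticeMap m) := by
  intro k l h
  funext j
  have := congrFun (congrArg (WithLp.equiv 2 (Fin m → ℝ)) h) j
  simpa [latticeMap] using this

lemma latticeMap_range (m : ℕ) :
    Set.range (latticeMap m) =
      {x : EuclideanSpace ℝ (Fin m) | ∀ j : Fin m, ∃ k : ℤ, x j = (k : ℝ)} := by
  ext x
  constructor
  · rintro ⟨k, rfl⟩ j
    exact ⟨k j, rfl⟩
  · intro hx
    refine ⟨fun j => Classical.choose (hx j), ?_⟩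
    apply (WithLp.equiv 2 (Fin m → ℝ)).injective
    funext j
    exact (Classical.choose_spec (hx j)).symm

lemma exists_lattice_equiv {m : ℕ} {z : ℕ → EuclideanSpace ℝ (Fin m)}
    (hinj : Function.Injective z)
    (hrange : Set.range z =
      {x : EuclideanSpace ℝ (Fin m) | ∀ j : Fin m, ∃ k : ℤ, x j = (k : ℝ)}) :
    ∃ e : ℕ ≃ (Fin m → ℤ), ∀ n, z n = latticeMap m (e n) := by
  have hr : Set.range z = Set.range (latticeMap m) := by rw [hrange, latticeMap_range]
  refine ⟨(Equiv.ofInjective z hinj).trans ((Equiv.setCongr hr).trans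
    (Equiv.ofInjective _ (latticeMap_injective m)).symm), fun n => ?_⟩
  simp only [Equiv.trans_apply]
  rw [Equiv.apply_ofInjective_symm (latticeMap_injective m)]
  rfl

lemma dist_latticeMap (m : ℕ) (k c : Fin m → ℤ) :
    dist (latticeMap m (k + c)) (latticeMap m c) ^ 2 = ∑ j, ((k j : ℝ)) ^ 2 := by
  rw [EuclideanSpace.dist_eq, Real.sq_sqrt (Finset.sum_nonneg fun j _ => sq_nonneg _)]
  apply Finset.sum_congr rfl
  intro j _
  rw [latticeMap_apply, latticeMap_apply]
  rw [Real.dist_eq]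
  rw [sq_abs]
  simp only [Pi.add_apply]
  push_cast
  ring

lemma row_sum_eq {m : ℕ} {z : ℕ → EuclideanSpace ℝ (Fin m)}
    (e : ℕ ≃ (Fin m → ℤ)) (hez : ∀ n, z n = latticeMap m (e n)) (a : ℝ) (i : ℕ) :
    ∑' j : ℕ, ENNReal.ofReal (Real.exp (-a * dist (z j) (z i) ^ 2)) =
      ∑' k : Fin m → ℤ, ENNReal.ofReal (Real.exp (-a * ∑ j, ((k j : ℝ)) ^ 2)) := by
  have h1 : ∑' j : ℕ, ENNReal.ofReal (Real.exp (-a * dist (z j) (z i) ^ 2)) =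
      ∑' k : Fin m → ℤ, ENNReal.ofReal (Real.exp (-a * dist (latticeMap m k) (latticeMap m (e i)) ^ 2)) := by
    rw [← e.tsum_eq]
    apply tsum_congr
    intro n
    rw [hez n, hez i]
  rw [h1, ← (Equiv.addRight (e i)).tsum_eq]
  apply tsum_congr
  intro k
  simp only [Equiv.coe_addRight]
  rw [dist_latticeMap]

lemma double_lintegral_iUnion {m : ℕ} (B : ℕ → Set (EuclideanSpace ℝ (Fin m)))
    (hmeas : ∀ i, MeasurableSet (B i)) (hdisj : Pairwise (Function.onFun Disjoint B))
    (K : EuclideanSpace ℝ (Fin m) → EuclideanSpace ℝ (Fin m) → ℝ≥0∞)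
    (hK : Measurable (Function.uncurry K)) :
    ∫⁻ x in ⋃ i, B i, ∫⁻ y in ⋃ i, B i, K x y =
      ∑' i : ℕ, ∑' j : ℕ, ∫⁻ x in B i, ∫⁻ y in B j, K x y := by
  have hinner : ∀ x, ∫⁻ y in ⋃ i, B i, K x y = ∑' j : ℕ, ∫⁻ y in B j, K x y := by
    intro x
    exact lintegral_iUnion hmeas hdisj _
  calc ∫⁻ x in ⋃ i, B i, ∫⁻ y in ⋃ i, B i, K x y
      = ∫⁻ x in ⋃ i, B i, ∑' j : ℕ, ∫⁻ y in B j, K x y := by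
        apply lintegral_congr
        intro x
        exact hinner x
    _ = ∑' j : ℕ, ∫⁻ x in ⋃ i, B i, ∫⁻ y in B j, K x y := by
        apply lintegral_tsum
        intro j
        exact (hK.lintegral_prod_right (ν := volume.restrict (B j))).aemeasurable
    _ = ∑' j : ℕ, ∑' i : ℕ, ∫⁻ x in B i, ∫⁻ y in B j, K x y := by
        apply tsum_congr
        intro j
        exact lintegral_iUnion hmeas hdisj _
    _ = _ := ENNReal.tsum_comm

lemma double_lintegral_le {m : ℕ} (s u : Set (EuclideanSpace ℝ (Fin m)))
    (K : EuclideanSpace ℝ (Fin m) → EuclideanSpace ℝ (Fin m) → ℝ≥0∞) (c : ℝ≥0∞)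
    (hle : ∀ x ∈ s, ∀ y ∈ u, K x y ≤ c) :
    ∫⁻ x in s, ∫⁻ y in u, K x y ≤ c * volume s * volume u := by
  calc ∫⁻ x in s, ∫⁻ y in u, K x y ≤ ∫⁻ _ in s, c * volume u := by
        apply setLIntegral_mono measurable_const
        intro x hx
        calc ∫⁻ y in u, K x y ≤ ∫⁻ _ in u, c := setLIntegral_mono measurable_const
              (fun y hy => hle x hx y hy)
          _ = c * volume u := by rw [setLIntegral_const]
    _ = c * volume u * volume s := by rw [setLIntegral_const]
    _ = c * volume s * volume u := by ring

lemma const_eq (m : ℕ) {t δ : ℝ} (ht : 0 < t) (hδ : 0 < δ) :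
    (4 * Real.pi * t) ^ (-(m : ℝ) / 2) *
      (1 + Real.sqrt (Real.pi / (δ ^ 2 / (8 * t)))) ^ m =
    (Real.sqrt 2 / δ + (4 * Real.pi * t) ^ (-(1 : ℝ) / 2)) ^ m := by
  have h4 : (0 : ℝ) < 4 * Real.pi * t := by positivity
  have hu : (4 * Real.pi * t) ^ (-(m : ℝ) / 2) =
      ((4 * Real.pi * t) ^ (-(1 : ℝ) / 2)) ^ m := by
    rw [show -(m : ℝ) / 2 = (-(1 : ℝ) / 2) * (m : ℝ) by ring,
      Real.rpow_mul h4.le, Real.rpow_natCast]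
  rw [hu, ← mul_pow]
  congr 1
  have hs : (4 * Real.pi * t) ^ (-(1 : ℝ) / 2) = (Real.sqrt (4 * Real.pi * t))⁻¹ := by
    rw [show (-(1 : ℝ) / 2) = -(1 / 2 : ℝ) by ring, Real.rpow_neg h4.le,
      ← Real.sqrt_eq_rpow]
  have hq : Real.sqrt (Real.pi / (δ ^ 2 / (8 * t))) =
      2 * Real.sqrt (2 * Real.pi * t) / δ := by
    rw [show Real.pi / (δ ^ 2 / (8 * t)) = (2 * Real.sqrt (2 * Real.pi * t) / δ) ^ 2 by
      rw [div_pow, mul_pow, Real.sq_sqrt (by positivity)]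
      field_simp
      ring]
    exact Real.sqrt_sq (by positivity)
  have h4s : Real.sqrt (4 * Real.pi * t) = Real.sqrt 2 * Real.sqrt (2 * Real.pi * t) := by
    rw [← Real.sqrt_mul (by norm_num : (0:ℝ) ≤ 2)]
    congr 1
    ring
  have hst : 0 < Real.sqrt (2 * Real.pi * t) := Real.sqrt_pos.2 (by positivity)
  have hs2 : 0 < Real.sqrt 2 := Real.sqrt_pos.2 (by norm_num)
  have h2 : Real.sqrt 2 * Real.sqrt 2 = 2 := Real.mul_self_sqrt (by norm_num)
  rw [hs, hq, h4s]
  field_simp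
  linear_combination (-Real.sqrt (2 * Real.pi * t)) * h2

/-- Theorem 3(ii): for `Ω` a union of disjoint balls `B(z_i;r_i)` centred at the points of
`ℤᵐ` with decreasing radii, `δ = 1 - 2 r₁ > 0` and `∑ r_i^{2m} < ∞`, the heat content of
`Ω` differs from the sum of the heat contents of the individual balls by at most
`ω_m² e^{-δ²/(8t)} (√2/δ + (4πt)^{-1/2})^m ∑ r_i^{2m}`. -/
theorem heat_content_lattice_balls_almost_additive
    (m : ℕ) (hm : 1 ≤ m)
    (z : ℕ → EuclideanSpace ℝ (Fin m)) (hz : IsLatticeEnum m z)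
    (r : ℕ → ℝ) (hrpos : ∀ i, 0 < r i) (hrdec : Antitone r)
    (δ : ℝ) (hδdef : δ = 1 - 2 * r 0) (hδ : 0 < δ)
    (hsum : Summable (fun i : ℕ => r i ^ (2 * m)))
    (Ω : Set (EuclideanSpace ℝ (Fin m))) (hΩ : Ω = ⋃ i : ℕ, ball (z i) (r i))
    (ω : ℝ) (hω : ω = (volume (ball (0 : EuclideanSpace ℝ (Fin m)) 1)).toReal) :
    ∀ t : ℝ, 0 < t →
      heatContent Ω t ≤ (∑' i : ℕ, heatContent (ball (z i) (r i)) t) +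
        ENNReal.ofReal (ω ^ 2 * Real.exp (-δ ^ 2 / (8 * t)) *
          (Real.sqrt 2 / δ + (4 * Real.pi * t) ^ (-(1 : ℝ) / 2)) ^ m *
          ∑' i : ℕ, r i ^ (2 * m)) ∧
      (∑' i : ℕ, heatContent (ball (z i) (r i)) t) ≤ heatContent Ω t +
        ENNReal.ofReal (ω ^ 2 * Real.exp (-δ ^ 2 / (8 * t)) *
          (Real.sqrt 2 / δ + (4 * Real.pi * t) ^ (-(1 : ℝ) / 2)) ^ m *
          ∑' i : ℕ, r i ^ (2 * m)) := by
  intro t ht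
  have hπ4 : (0 : ℝ) < 4 * Real.pi * t := by positivity
  set C : ℝ := (4 * Real.pi * t) ^ (-(m : ℝ) / 2) with hCdef
  have hC : 0 < C := Real.rpow_pos_of_pos hπ4 _
  set B : ℕ → Set (EuclideanSpace ℝ (Fin m)) := fun i => ball (z i) (r i) with hB
  set K : EuclideanSpace ℝ (Fin m) → EuclideanSpace ℝ (Fin m) → ℝ≥0∞ :=
    fun x y => ENNReal.ofReal (C * Real.exp (-dist x y ^ 2 / (4 * t))) with hKdef
  -- lattice facts
  have hlat : ∀ i, ∀ j : Fin m, ∃ k : ℤ, z i j = (k : ℝ) := by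
    intro i
    have h1 : z i ∈ Set.range z := Set.mem_range_self i
    rw [hz.2] at h1
    exact h1
  have hdist : ∀ i j : ℕ, i ≠ j → 1 ≤ dist (z i) (z j) := by
    intro i j hij
    exact lattice_dist_ge (hlat i) (hlat j) (fun h => hij (hz.1 h))
  have hr0 : 0 < r 0 := hrpos 0
  have hrle : ∀ i, r i ≤ r 0 := fun i => hrdec (Nat.zero_le i)
  have hdisj : Pairwise (Function.onFun Disjoint B) := by
    intro i j hij
    apply ball_disjoint_ball
    have h1 := hdist i j hij
    have h2 := hrle i
    have h3 := hrle j
    linarith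
  -- measurability of kernel
  have hKmeas : Measurable (Function.uncurry K) := by
    apply Continuous.measurable
    apply ENNReal.continuous_ofReal.comp
    apply (continuous_const.mul ?_)
    apply Real.continuous_exp.comp
    exact ((continuous_dist.pow 2).neg).div_const (4 * t)
  set I : ℕ → ℕ → ℝ≥0∞ := fun i j => ∫⁻ x in B i, ∫⁻ y in B j, K x y with hI
  have hdecomp : heatContent Ω t = ∑' i, ∑' j, I i j := by
    rw [hΩ]
    exact double_lintegral_iUnion B (fun i => measurableSet_ball) hdisj K hKmeas
  have hIball : ∀ i, I i i = heatContent (ball (z i) (r i)) t := fun i => rfl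
  -- constants
  set a : ℝ := δ ^ 2 / (8 * t) with ha_def
  have ha : 0 < a := by positivity
  set J : ℕ → ℕ → ℝ≥0∞ :=
    fun i j => ENNReal.ofReal (Real.exp (-a * dist (z i) (z j) ^ 2)) with hJ
  set c2 : ℝ≥0∞ := ENNReal.ofReal (C * Real.exp (-δ ^ 2 / (8 * t))) with hc2
  -- volume of balls
  haveI : Nontrivial (EuclideanSpace ℝ (Fin m)) := by
    apply Module.nontrivial_of_finrank_pos (R := ℝ)
    rw [finrank_euclideanSpace_fin]
    omega
  have hωnn : 0 ≤ ω := hω ▸ ENNReal.toReal_nonneg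
  have hvol : ∀ i, volume (B i) = ENNReal.ofReal (ω * r i ^ m) := by
    intro i
    have h1 : volume (B i) = ENNReal.ofReal (r i ^ m) *
        volume (ball (0 : EuclideanSpace ℝ (Fin m)) 1) := by
      rw [hB]
      simp only
      rw [Measure.addHaar_ball volume (z i) (hrpos i).le, finrank_euclideanSpace_fin]
    rw [h1, ENNReal.ofReal_mul hωnn, hω, ENNReal.ofReal_toReal measure_ball_lt_top.ne]
    exact mul_comm _ _
  -- kernel bound
  have hKbound : ∀ i j : ℕ, i ≠ j → ∀ x ∈ B i, ∀ y ∈ B j, K x y ≤ c2 * J i j := by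
    intro i j hij x hx y hy
    have h1 : 1 ≤ dist (z i) (z j) := hdist i j hij
    have hxz : dist x (z i) < r i := mem_ball.1 hx
    have hyz : dist y (z j) < r j := mem_ball.1 hy
    have hd2 : δ * dist (z i) (z j) ≤ dist x y := by
      have htri : dist (z i) (z j) ≤ dist (z i) x + dist x y + dist y (z j) :=
        dist_triangle4 (z i) x y (z j)
      rw [dist_comm (z i) x] at htri
      nlinarith [hrle i, hrle j, hr0]
    have hdd : 0 ≤ δ * dist (z i) (z j) := by positivity
    have hsq : δ ^ 2 * dist (z i) (z j) ^ 2 ≤ dist x y ^ 2 := by nlinarith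
    have hexp : Real.exp (-dist x y ^ 2 / (4 * t)) ≤
        Real.exp (-δ ^ 2 / (8 * t)) * Real.exp (-a * dist (z i) (z j) ^ 2) := by
      rw [← Real.exp_add]
      apply Real.exp_le_exp.2
      rw [ha_def]
      have hD : 1 ≤ dist (z i) (z j) ^ 2 := by nlinarith
      have key : δ ^ 2 + δ ^ 2 * dist (z i) (z j) ^ 2 ≤ 2 * dist x y ^ 2 := by
        nlinarith [hsq, hD, sq_nonneg δ]
      have h8t : (0:ℝ) < 8 * t := by positivity
      rw [neg_div, neg_div, neg_mul, ← neg_add, neg_le_neg_iff]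
      rw [show δ ^ 2 / (8 * t) + δ ^ 2 / (8 * t) * dist (z i) (z j) ^ 2 =
        (δ ^ 2 + δ ^ 2 * dist (z i) (z j) ^ 2) / (8 * t) by ring]
      rw [show dist x y ^ 2 / (4 * t) = 2 * dist x y ^ 2 / (8 * t) by ring]
      gcongr
    calc K x y = ENNReal.ofReal (C * Real.exp (-dist x y ^ 2 / (4 * t))) := rfl
      _ ≤ ENNReal.ofReal (C * (Real.exp (-δ ^ 2 / (8 * t)) *
            Real.exp (-a * dist (z i) (z j) ^ 2))) := by
          apply ENNReal.ofReal_le_ofReal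
          exact mul_le_mul_of_nonneg_left hexp hC.le
      _ = c2 * J i j := by
          rw [hc2, hJ]
          rw [← mul_assoc, ENNReal.ofReal_mul (by positivity)]
  have hIbound : ∀ i j : ℕ, (if j = i then 0 else I i j) ≤
      volume (B i) * volume (B j) * (c2 * J i j) := by
    intro i j
    by_cases hij : j = i
    · simp [hij]
    · rw [if_neg hij]
      have h1 := double_lintegral_le (B i) (B j) K (c2 * J i j)
        (hKbound i j (fun h => hij h.symm))
      calc I i j ≤ c2 * J i j * volume (B i) * volume (B j) := h1
        _ = volume (B i) * volume (B j) * (c2 * J i j) := by ring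
  set W : ℕ → ℝ≥0∞ := fun i => ENNReal.ofReal (ω ^ 2 * r i ^ (2 * m)) with hW
  have hsymW : ∀ i j : ℕ, 2 * (volume (B i) * volume (B j)) ≤ W i + W j := by
    intro i j
    rw [hvol i, hvol j, hW]
    simp only
    have hreal : 2 * (ω * r i ^ m * (ω * r j ^ m)) ≤
        ω ^ 2 * r i ^ (2 * m) + ω ^ 2 * r j ^ (2 * m) := by
      have e1 : r i ^ (2 * m) = (r i ^ m) ^ 2 := by rw [← pow_mul, mul_comm]
      have e2 : r j ^ (2 * m) = (r j ^ m) ^ 2 := by rw [← pow_mul, mul_comm]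
      rw [e1, e2]
      nlinarith [sq_nonneg (ω * r i ^ m - ω * r j ^ m)]
    calc 2 * (ENNReal.ofReal (ω * r i ^ m) * ENNReal.ofReal (ω * r j ^ m))
        = ENNReal.ofReal (2 * (ω * r i ^ m * (ω * r j ^ m))) := by
          rw [ENNReal.ofReal_mul (by norm_num : (0:ℝ) ≤ 2),
            ENNReal.ofReal_mul (mul_nonneg hωnn (pow_nonneg (hrpos i).le m)),
            ENNReal.ofReal_ofNat]
      _ ≤ ENNReal.ofReal (ω ^ 2 * r i ^ (2 * m) + ω ^ 2 * r j ^ (2 * m)) :=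
          ENNReal.ofReal_le_ofReal hreal
      _ = _ := ENNReal.ofReal_add
          (mul_nonneg (sq_nonneg ω) (pow_nonneg (hrpos i).le _))
          (mul_nonneg (sq_nonneg ω) (pow_nonneg (hrpos j).le _))
  obtain ⟨e, hez⟩ := exists_lattice_equiv hz.1 hz.2
  set Q : ℝ≥0∞ := ∑' n : ℤ, ENNReal.ofReal (Real.exp (-a * (n : ℝ) ^ 2)) with hQ
  have hrow : ∀ i, ∑' j, J i j = Q ^ m := by
    intro i
    have h1 : ∑' j, J i j =
        ∑' j : ℕ, ENNReal.ofReal (Real.exp (-a * dist (z j) (z i) ^ 2)) := by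
      apply tsum_congr
      intro j
      rw [hJ]
      simp only
      rw [dist_comm]
    rw [h1, row_sum_eq e hez a i, gauss_pi_sum, hQ]
  have hcol : ∀ j, ∑' i, J i j = Q ^ m := by
    intro j
    rw [show (∑' i, J i j) =
        ∑' i : ℕ, ENNReal.ofReal (Real.exp (-a * dist (z i) (z j) ^ 2)) from rfl]
    rw [row_sum_eq e hez a j, gauss_pi_sum, hQ]
  set β : ℝ := 1 + Real.sqrt (Real.pi / a) with hβ
  have hβpos : 0 < β := by positivity
  have hQle : Q ≤ ENNReal.ofReal β := gauss_int_sum_le ha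
  set E : ℝ≥0∞ := ∑' i, ∑' j, (if j = i then 0 else I i j) with hE
  set S : ℝ≥0∞ := (∑' i, W i) * (c2 * ENNReal.ofReal β ^ m) with hS
  have hQmle : Q ^ m ≤ ENNReal.ofReal β ^ m := pow_le_pow_left' hQle m
  have hbound1 : ∑' i, ∑' j, W i * (c2 * J i j) ≤ S := by
    have h1 : ∀ i, ∑' j, W i * (c2 * J i j) = W i * c2 * (Q ^ m) := by
      intro i
      rw [show (∑' j, W i * (c2 * J i j)) = ∑' j, (W i * c2) * J i j from
        tsum_congr (fun j => by ring), ENNReal.tsum_mul_left, hrow i]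
    calc ∑' i, ∑' j, W i * (c2 * J i j) = ∑' i, W i * c2 * Q ^ m := tsum_congr h1
      _ ≤ ∑' i, W i * c2 * ENNReal.ofReal β ^ m :=
          ENNReal.tsum_le_tsum (fun i => mul_le_mul_right hQmle _)
      _ = (∑' i, W i) * (c2 * ENNReal.ofReal β ^ m) := by
          rw [← ENNReal.tsum_mul_right]
          exact tsum_congr (fun i => by ring)
  have hbound2 : ∑' i, ∑' j, W j * (c2 * J i j) ≤ S := by
    rw [ENNReal.tsum_comm]
    have h1 : ∀ j, ∑' i, W j * (c2 * J i j) = W j * c2 * (Q ^ m) := by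
      intro j
      rw [show (∑' i, W j * (c2 * J i j)) = ∑' i, (W j * c2) * J i j from
        tsum_congr (fun i => by ring), ENNReal.tsum_mul_left, hcol j]
    calc ∑' j, ∑' i, W j * (c2 * J i j) = ∑' j, W j * c2 * Q ^ m := tsum_congr h1
      _ ≤ ∑' j, W j * c2 * ENNReal.ofReal β ^ m :=
          ENNReal.tsum_le_tsum (fun j => mul_le_mul_right hQmle _)
      _ = (∑' i, W i) * (c2 * ENNReal.ofReal β ^ m) := by
          rw [← ENNReal.tsum_mul_right]
          exact tsum_congr (fun j => by ring)
  have hES : E ≤ S := by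
    have h2E : 2 * E ≤ 2 * S := by
      calc 2 * E = ∑' i, ∑' j, 2 * (if j = i then 0 else I i j) := by
            rw [hE, ← ENNReal.tsum_mul_left]
            exact tsum_congr (fun i => ENNReal.tsum_mul_left.symm)
        _ ≤ ∑' i, ∑' j, ((W i + W j) * (c2 * J i j)) := by
            apply ENNReal.tsum_le_tsum
            intro i
            apply ENNReal.tsum_le_tsum
            intro j
            calc 2 * (if j = i then 0 else I i j)
                ≤ 2 * (volume (B i) * volume (B j) * (c2 * J i j)) :=
                  mul_le_mul_right (hIbound i j) 2
              _ = (2 * (volume (B i) * volume (B j))) * (c2 * J i j) := by ring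
              _ ≤ (W i + W j) * (c2 * J i j) := mul_le_mul_left (hsymW i j) _
        _ = (∑' i, ∑' j, W i * (c2 * J i j)) + (∑' i, ∑' j, W j * (c2 * J i j)) := by
            rw [← ENNReal.tsum_add]
            apply tsum_congr
            intro i
            rw [← ENNReal.tsum_add]
            exact tsum_congr (fun j => add_mul _ _ _)
        _ ≤ S + S := add_le_add hbound1 hbound2
        _ = 2 * S := (two_mul S).symm
    exact (ENNReal.mul_le_mul_iff_right (by norm_num) (by norm_num)).1 h2E
  have hWsum : ∑' i, W i = ENNReal.ofReal (ω ^ 2 * ∑' i, r i ^ (2 * m)) := by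
    rw [hW]
    rw [show ω ^ 2 * ∑' i, r i ^ (2 * m) = ∑' i, ω ^ 2 * r i ^ (2 * m) by
      rw [← tsum_mul_left]]
    rw [ENNReal.ofReal_tsum_of_nonneg (fun i => mul_nonneg (sq_nonneg ω) (pow_nonneg (hrpos i).le _)) (hsum.mul_left _)]
  have hSle : S ≤ ENNReal.ofReal (ω ^ 2 * Real.exp (-δ ^ 2 / (8 * t)) *
      (Real.sqrt 2 / δ + (4 * Real.pi * t) ^ (-(1 : ℝ) / 2)) ^ m *
      ∑' i, r i ^ (2 * m)) := by
    rw [hS, hWsum, hc2]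
    have hSnn : 0 ≤ ∑' i, r i ^ (2 * m) := tsum_nonneg (fun i => pow_nonneg (hrpos i).le _)
    rw [← ENNReal.ofReal_pow hβpos.le,
      ← ENNReal.ofReal_mul (mul_nonneg hC.le (Real.exp_pos _).le),
      ← ENNReal.ofReal_mul (mul_nonneg (sq_nonneg ω) hSnn)]
    apply ENNReal.ofReal_le_ofReal
    apply le_of_eq
    have hkey : C * β ^ m =
        (Real.sqrt 2 / δ + (4 * Real.pi * t) ^ (-(1 : ℝ) / 2)) ^ m := by
      rw [hCdef, hβ, ha_def]
      exact const_eq m ht hδ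
    calc ω ^ 2 * (∑' i, r i ^ (2 * m)) * (C * Real.exp (-δ ^ 2 / (8 * t)) * β ^ m)
        = ω ^ 2 * Real.exp (-δ ^ 2 / (8 * t)) * (C * β ^ m) * ∑' i, r i ^ (2 * m) := by
          ring
      _ = _ := by rw [hkey]
  have htsum0 : ∑' i, I i i = ∑' i : ℕ, heatContent (ball (z i) (r i)) t :=
    tsum_congr (fun i => hIball i)
  constructor
  · rw [hdecomp]
    calc ∑' i, ∑' j, I i j
        = ∑' i, (I i i + ∑' j, (if j = i then 0 else I i j)) := by
          apply tsum_congr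
          intro i
          rw [ENNReal.tsum_eq_add_tsum_ite i]
          congr 1
          apply tsum_congr
          intro j
          by_cases h : j = i <;> simp [h]
      _ = (∑' i, I i i) + E := ENNReal.tsum_add
      _ ≤ _ := by
          rw [htsum0]
          exact add_le_add_right (hES.trans hSle) _
  · rw [hdecomp]
    calc ∑' i : ℕ, heatContent (ball (z i) (r i)) t = ∑' i, I i i := htsum0.symm
      _ ≤ ∑' i, ∑' j, I i j := ENNReal.tsum_le_tsum (fun i => ENNReal.le_tsum i)
      _ ≤ _ := le_self_add
end

section
/- Let m ≥ 1, let (z_i)_{i∈ℕ} be an enumeration of ℤ^m in ℝ^m, let r₁ ≥ r₂ ≥ … > 0 with δ = 1 − 2r₁ > 0 and ∑_{i=1}^∞ r_i^{2m} < ∞, and let Ω = ⋃_{i∈ℕ} B(z_i; r_i). Define μ_Ω(x;R) = |B(x;R) ∩ Ω| (Lebesgue measure). Then ∫_Ω μ_Ω(x; δ/2) / |B(x; δ/2)| dx ≤ ω_m (4/δ)^m ∑_{i=1}^∞ r_i^{2m}, where ω_m is the volume of the unit ball in ℝ^m. -/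
open MeasureTheory Metric ENNReal

/-- For `Ω` a union of disjoint balls `B(z_i;r_i)` centred at the points of `ℤᵐ` with
decreasing radii, `δ = 1 - 2 r₁ > 0` and `∑ r_i^{2m} < ∞`, one has
`∫_Ω |B(x;δ/2) ∩ Ω| / |B(x;δ/2)| dx ≤ ω_m (4/δ)^m ∑ r_i^{2m}`. -/
theorem lattice_balls_mu_integral_bound
    (m : ℕ) (hm : 1 ≤ m)
    (z : ℕ → EuclideanSpace ℝ (Fin m)) (hz : IsLatticeEnum m z)
    (r : ℕ → ℝ) (hrpos : ∀ i, 0 < r i) (hrdec : Antitone r)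
    (δ : ℝ) (hδdef : δ = 1 - 2 * r 0) (hδ : 0 < δ)
    (hsum : Summable (fun i : ℕ => r i ^ (2 * m)))
    (Ω : Set (EuclideanSpace ℝ (Fin m))) (hΩ : Ω = ⋃ i : ℕ, ball (z i) (r i))
    (ω : ℝ) (hω : ω = (volume (ball (0 : EuclideanSpace ℝ (Fin m)) 1)).toReal) :
    (∫⁻ x in Ω, volume (ball x (δ / 2) ∩ Ω) / volume (ball x (δ / 2)))
      ≤ ENNReal.ofReal (ω * (4 / δ) ^ m * ∑' i : ℕ, r i ^ (2 * m)) := by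
  classical
  obtain ⟨hinj, hrange⟩ := hz
  have hcoord : ∀ i (j : Fin m), ∃ k : ℤ, z i j = (k : ℝ) := by
    intro i j
    have : z i ∈ Set.range z := ⟨i, rfl⟩
    rw [hrange] at this
    exact this j
  -- distance between distinct lattice points is at least 1
  have hdist : ∀ i j, i ≠ j → (1:ℝ) ≤ dist (z i) (z j) := by
    intro i j hij
    have hne : z i ≠ z j := fun h => hij (hinj h)
    have hc : ∃ c : Fin m, z i c ≠ z j c := by
      by_contra h
      push_neg at h
      exact hne (PiLp.ext h)
    obtain ⟨c, hc⟩ := hc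
    obtain ⟨k₁, hk₁⟩ := hcoord i c
    obtain ⟨k₂, hk₂⟩ := hcoord j c
    have hk : k₁ ≠ k₂ := by
      intro h; apply hc; rw [hk₁, hk₂, h]
    have h1 : (1:ℝ) ≤ |z i c - z j c| := by
      rw [hk₁, hk₂, ← Int.cast_sub, ← Int.cast_abs]
      exact_mod_cast Int.one_le_abs (sub_ne_zero.mpr hk)
    have h2 : |z i c - z j c| ≤ dist (z i) (z j) := by
      rw [EuclideanSpace.dist_eq]
      rw [← Real.sqrt_sq_eq_abs]
      apply Real.sqrt_le_sqrt
      have : (z i c - z j c) ^ 2 = dist (z i c) (z j c) ^ 2 := by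
        rw [Real.dist_eq, sq_abs]
      rw [this]
      exact Finset.single_le_sum (f := fun l => dist (z i l) (z j l) ^ 2)
        (fun l _ => sq_nonneg _) (Finset.mem_univ c)
    linarith
  have hr0 : r 0 < 1/2 := by rw [hδdef] at hδ; linarith
  have hrle : ∀ i, r i ≤ r 0 := fun i => hrdec (Nat.zero_le i)
  have hδ2 : δ / 2 = 1/2 - r 0 := by rw [hδdef]; ring
  have hδ2pos : 0 < δ / 2 := by linarith
  -- the balls are pairwise disjoint
  have hdisj : Pairwise (Function.onFun Disjoint fun i => ball (z i) (r i)) := by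
    intro i j hij
    apply ball_disjoint_ball
    exact (calc r i + r j ≤ r 0 + r 0 := add_le_add (hrle i) (hrle j)
      _ < 1 := by linarith
      _ ≤ dist (z i) (z j) := hdist i j hij).le
  -- inclusion: small ball intersected with Ω stays in the same lattice ball
  have hincl : ∀ i, ∀ x ∈ ball (z i) (r i),
      ball x (δ/2) ∩ (⋃ i : ℕ, ball (z i) (r i)) ⊆ ball (z i) (r i) := by
    intro i x hx y ⟨hy1, hy2⟩
    obtain ⟨_, ⟨j, rfl⟩, hyj⟩ := hy2
    by_cases hji : j = i
    · subst hji; exact hyj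
    · exfalso
      have h1 : dist y (z i) < 1/2 := by
        calc dist y (z i) ≤ dist y x + dist x (z i) := dist_triangle _ _ _
          _ < δ/2 + r i := add_lt_add (mem_ball.mp hy1) (mem_ball.mp hx)
          _ ≤ 1/2 := by rw [hδ2]; linarith [hrle i]
      have hji' := hdist j i hji
      have hd : dist y (z j) < r j := mem_ball.mp hyj
      have htri := dist_triangle (z j) y (z i)
      have hcomm : dist (z j) y = dist y (z j) := dist_comm _ _
      have hrj := hrle j
      linarith
  -- volume of balls
  have hnt : Nontrivial (EuclideanSpace ℝ (Fin m)) := by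
    have hm' : 0 < m := hm
    exact ⟨EuclideanSpace.single ⟨0, hm'⟩ 1, 0,
      by intro h; simpa using congrArg (fun v => v ⟨0, hm'⟩) h⟩
  set V := volume (ball (0 : EuclideanSpace ℝ (Fin m)) 1) with hV
  have hball : ∀ (x : EuclideanSpace ℝ (Fin m)) (R : ℝ), 0 ≤ R →
      volume (ball x R) = ENNReal.ofReal (R ^ m) * V := by
    intro x R hR
    rw [Measure.addHaar_ball volume x hR, finrank_euclideanSpace_fin]
  have hVfin : V ≠ ⊤ := measure_ball_lt_top.ne
  have hVpos : V ≠ 0 := (measure_ball_pos volume 0 one_pos).ne'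
  rw [hΩ, lintegral_iUnion (fun i => measurableSet_ball) hdisj]
  -- per-ball bound
  have hterm : ∀ i, (∫⁻ x in ball (z i) (r i),
        volume (ball x (δ / 2) ∩ ⋃ i : ℕ, ball (z i) (r i)) / volume (ball x (δ / 2)))
      ≤ ENNReal.ofReal ((2/δ)^m * r i ^ (2*m)) * V := by
    intro i
    have hCi : ∀ x ∈ ball (z i) (r i),
        volume (ball x (δ / 2) ∩ ⋃ i : ℕ, ball (z i) (r i)) / volume (ball x (δ / 2))
          ≤ ENNReal.ofReal ((2 * r i / δ)^m) := by
      intro x hx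
      calc volume (ball x (δ / 2) ∩ ⋃ i : ℕ, ball (z i) (r i)) / volume (ball x (δ / 2))
          ≤ volume (ball (z i) (r i)) / volume (ball x (δ / 2)) :=
            ENNReal.div_le_div_right (measure_mono (hincl i x hx)) _
        _ = (ENNReal.ofReal (r i ^ m) * V) / (ENNReal.ofReal ((δ/2)^m) * V) := by
            rw [hball _ _ (hrpos i).le, hball _ _ hδ2pos.le]
        _ = ENNReal.ofReal (r i ^ m) / ENNReal.ofReal ((δ/2)^m) :=
            ENNReal.mul_div_mul_right _ _ hVpos hVfin
        _ = ENNReal.ofReal (r i ^ m / (δ/2)^m) :=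
            (ENNReal.ofReal_div_of_pos (pow_pos hδ2pos m)).symm
        _ = ENNReal.ofReal ((2 * r i / δ)^m) := by
            congr 1
            rw [← div_pow]
            congr 1
            field_simp
    calc (∫⁻ x in ball (z i) (r i),
          volume (ball x (δ / 2) ∩ ⋃ i : ℕ, ball (z i) (r i)) / volume (ball x (δ / 2)))
        ≤ ∫⁻ _ in ball (z i) (r i), ENNReal.ofReal ((2 * r i / δ)^m) :=
          setLIntegral_mono measurable_const hCi
      _ = ENNReal.ofReal ((2 * r i / δ)^m) * volume (ball (z i) (r i)) :=
          setLIntegral_const _ _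
      _ = ENNReal.ofReal ((2 * r i / δ)^m) * (ENNReal.ofReal (r i ^ m) * V) := by
          rw [hball _ _ (hrpos i).le]
      _ = ENNReal.ofReal ((2/δ)^m * r i ^ (2*m)) * V := by
          rw [← mul_assoc, ← ENNReal.ofReal_mul
            (pow_nonneg (div_nonneg (mul_nonneg two_pos.le (hrpos i).le) hδ.le) m)]
          congr 2
          rw [← mul_pow, pow_mul, ← mul_pow]
          congr 1
          field_simp
  have hSnn : (0:ℝ) ≤ ∑' i : ℕ, r i ^ (2*m) :=
    tsum_nonneg fun i => pow_nonneg (hrpos i).le _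
  have hωnn : 0 ≤ ω := by rw [hω]; exact ENNReal.toReal_nonneg
  refine le_trans (ENNReal.tsum_le_tsum hterm) ?_
  calc (∑' i, ENNReal.ofReal ((2/δ)^m * r i ^ (2*m)) * V)
      = (∑' i, ENNReal.ofReal ((2/δ)^m * r i ^ (2*m))) * V := ENNReal.tsum_mul_right
    _ = ENNReal.ofReal (∑' i, (2/δ)^m * r i ^ (2*m)) * V := by
        rw [ENNReal.ofReal_tsum_of_nonneg
          (fun n => mul_nonneg (pow_nonneg (div_nonneg two_pos.le hδ.le) m) (pow_nonneg (hrpos n).le _))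
          (hsum.mul_left _)]
    _ = ENNReal.ofReal ((2/δ)^m * ∑' i, r i ^ (2*m)) * V := by rw [tsum_mul_left]
    _ = ENNReal.ofReal (ω * (2/δ)^m * ∑' i, r i ^ (2*m)) := by
        have hVω : V = ENNReal.ofReal ω := by rw [hω, ENNReal.ofReal_toReal hVfin]
        rw [hVω, ← ENNReal.ofReal_mul
          (mul_nonneg (pow_nonneg (div_nonneg two_pos.le hδ.le) m) hSnn)]
        congr 1
        ring
    _ ≤ ENNReal.ofReal (ω * (4/δ)^m * ∑' i, r i ^ (2*m)) := by
        apply ENNReal.ofReal_le_ofReal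
        have h24 : ((2:ℝ)/δ)^m ≤ ((4:ℝ)/δ)^m :=
          pow_le_pow_left₀ (div_nonneg two_pos.le hδ.le)
            ((div_le_div_iff_of_pos_right hδ).2 (by norm_num)) m
        exact mul_le_mul_of_nonneg_right
          (mul_le_mul_of_nonneg_left h24 hωnn) hSnn
end

section
/- Let f : (0,∞) → [0,∞) be increasing and g : (0,∞) → [0,∞) be decreasing, with f·g summable in the sense that ∑_{i=1}^∞ f(i) g(i) < ∞ and x ↦ f(x)g(x) is integrable on [1,∞). Then | ∑_{i=1}^∞ f(i) g(i) − ∫_1^∞ f(x) g(x) dx | ≤ ∑_{i=1}^∞ f(i+1) ( g(i) − g(i+1) ). -/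
open MeasureTheory

/-- Lemma 2: if `f : (0,∞) → [0,∞)` is increasing and `g : (0,∞) → [0,∞)` is decreasing,
and `f·g` is summable (the series `∑ f(i)g(i)` converges and `x ↦ f(x)g(x)` is integrable
on `[1,∞)`), then `|∑_{i≥1} f(i)g(i) - ∫_1^∞ f g| ≤ ∑_{i≥1} f(i+1)(g(i) - g(i+1))`
(the right-hand side being interpreted in `[0,∞]`). -/
theorem sum_integral_comparison
    (f g : ℝ → ℝ)
    (hf0 : ∀ x : ℝ, 0 < x → 0 ≤ f x)
    (hg0 : ∀ x : ℝ, 0 < x → 0 ≤ g x)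
    (hfmono : MonotoneOn f (Set.Ioi (0 : ℝ)))
    (hganti : AntitoneOn g (Set.Ioi (0 : ℝ)))
    (hsum : Summable (fun i : ℕ => f ((i : ℝ) + 1) * g ((i : ℝ) + 1)))
    (hint : IntegrableOn (fun x : ℝ => f x * g x) (Set.Ici (1 : ℝ))) :
    ENNReal.ofReal
        |(∑' i : ℕ, f ((i : ℝ) + 1) * g ((i : ℝ) + 1)) -
          ∫ x in Set.Ici (1 : ℝ), f x * g x|
      ≤ ∑' i : ℕ, ENNReal.ofReal (f ((i : ℝ) + 2) * (g ((i : ℝ) + 1) - g ((i : ℝ) + 2))) := by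
  set b : ℕ → ℝ := fun i => f ((i : ℝ) + 2) * (g ((i : ℝ) + 1) - g ((i : ℝ) + 2)) with hbdef
  have hpos1 : ∀ i : ℕ, (0:ℝ) < (i : ℝ) + 1 := fun i => by positivity
  have hpos2 : ∀ i : ℕ, (0:ℝ) < (i : ℝ) + 2 := fun i => by positivity
  have hmem1 : ∀ i : ℕ, ((i : ℝ) + 1) ∈ Set.Ioi (0:ℝ) := fun i => hpos1 i
  have hmem2 : ∀ i : ℕ, ((i : ℝ) + 2) ∈ Set.Ioi (0:ℝ) := fun i => hpos2 i
  have hgd : ∀ i : ℕ, 0 ≤ g ((i:ℝ)+1) - g ((i:ℝ)+2) := fun i =>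
    sub_nonneg.2 (hganti (hmem1 i) (hmem2 i) (by linarith))
  have hb0 : ∀ i, 0 ≤ b i := fun i =>
    mul_nonneg (hf0 _ (hpos2 i)) (hgd i)
  by_cases hT : (∑' i : ℕ, ENNReal.ofReal (b i)) = ⊤
  · rw [hT]; exact le_top
  have hbsum : Summable b :=
    (ENNReal.summable_toReal hT).congr fun i => ENNReal.toReal_ofReal (hb0 i)
  rw [← ENNReal.ofReal_tsum_of_nonneg hb0 hbsum]
  apply ENNReal.ofReal_le_ofReal
  -- intervals
  set s : ℕ → Set ℝ := fun i => Set.Ico ((i : ℝ) + 1) ((i : ℝ) + 2) with hsdef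
  have hmeas : ∀ i, MeasurableSet (s i) := fun i => measurableSet_Ico
  have hsub : ∀ i, s i ⊆ Set.Ici (1:ℝ) := by
    intro i x hx
    have : (0:ℝ) ≤ i := Nat.cast_nonneg i
    have := hx.1
    simp only [Set.mem_Ici]; linarith
  have hdisj : Pairwise (Function.onFun Disjoint s) := by
    intro i j hij
    rcases lt_or_gt_of_ne hij with h | h
    · have hc : ((i:ℝ) + 1) ≤ (j:ℝ) := by exact_mod_cast Nat.succ_le_of_lt h
      apply Set.Ico_disjoint_Ico.2
      calc min ((i:ℝ)+2) ((j:ℝ)+2) ≤ (i:ℝ)+2 := min_le_left _ _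
        _ ≤ (j:ℝ)+1 := by linarith
        _ ≤ max ((i:ℝ)+1) ((j:ℝ)+1) := le_max_right _ _
    · have hc : ((j:ℝ) + 1) ≤ (i:ℝ) := by exact_mod_cast Nat.succ_le_of_lt h
      apply Set.Ico_disjoint_Ico.2
      calc min ((i:ℝ)+2) ((j:ℝ)+2) ≤ (j:ℝ)+2 := min_le_right _ _
        _ ≤ (i:ℝ)+1 := by linarith
        _ ≤ max ((i:ℝ)+1) ((j:ℝ)+1) := le_max_left _ _
  have hcover : Set.Ici (1:ℝ) = ⋃ i, s i := by
    ext x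
    simp only [Set.mem_Ici, Set.mem_iUnion, hsdef, Set.mem_Ico]
    constructor
    · intro hx
      refine ⟨⌊x - 1⌋₊, ?_, ?_⟩
      · have := Nat.floor_le (by linarith : (0:ℝ) ≤ x - 1); linarith
      · have := Nat.lt_floor_add_one (x - 1); linarith
    · rintro ⟨i, h1, _⟩
      have : (0:ℝ) ≤ i := Nat.cast_nonneg i
      linarith
  have hintU : IntegrableOn (fun x : ℝ => f x * g x) (⋃ i, s i) := hcover ▸ hint
  have hHasSum : HasSum (fun i : ℕ => ∫ x in s i, f x * g x)
      (∫ x in ⋃ i, s i, f x * g x) :=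
    hasSum_integral_iUnion hmeas hdisj hintU
  set a : ℕ → ℝ := fun i => ∫ x in s i, f x * g x with hadef
  have hasum : Summable a := hHasSum.summable
  have hIeq : (∫ x in Set.Ici (1:ℝ), f x * g x) = ∑' i, a i := by
    rw [hcover]; exact hHasSum.tsum_eq.symm
  have hvol : ∀ i : ℕ, (volume (s i)).toReal = 1 := by
    intro i
    simp only [hsdef, Real.volume_Ico]
    rw [show ((i:ℝ)+2) - ((i:ℝ)+1) = 1 by ring]
    simp
  have hIco : ∀ i, IntegrableOn (fun x : ℝ => f x * g x) (s i) :=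
    fun i => hint.mono_set (hsub i)
  have hxpos : ∀ i : ℕ, ∀ x ∈ s i, (0:ℝ) < x := by
    intro i x hx
    have : (0:ℝ) ≤ i := Nat.cast_nonneg i
    have := hx.1
    linarith
  have haub : ∀ i : ℕ, a i ≤ f ((i:ℝ)+2) * g ((i:ℝ)+1) := by
    intro i
    have hmono : ∀ x ∈ s i, f x * g x ≤ f ((i:ℝ)+2) * g ((i:ℝ)+1) := by
      intro x hx
      have hx0 : (0:ℝ) < x := hxpos i x hx
      have hfle : f x ≤ f ((i:ℝ)+2) := hfmono hx0 (hmem2 i) (le_of_lt hx.2)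
      have hgle : g x ≤ g ((i:ℝ)+1) := hganti (hmem1 i) hx0 hx.1
      exact mul_le_mul hfle hgle (hg0 x hx0) (hf0 _ (hpos2 i))
    calc a i ≤ ∫ _x in s i, f ((i:ℝ)+2) * g ((i:ℝ)+1) :=
          setIntegral_mono_on (hIco i) (integrableOn_const (by
            simp [hsdef, Real.volume_Ico])) (hmeas i) hmono
      _ = f ((i:ℝ)+2) * g ((i:ℝ)+1) := by
          rw [setIntegral_const, measureReal_def, hvol i, one_smul]
  have halb : ∀ i : ℕ, f ((i:ℝ)+1) * g ((i:ℝ)+2) ≤ a i := by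
    intro i
    have hmono : ∀ x ∈ s i, f ((i:ℝ)+1) * g ((i:ℝ)+2) ≤ f x * g x := by
      intro x hx
      have hx0 : (0:ℝ) < x := hxpos i x hx
      have hfle : f ((i:ℝ)+1) ≤ f x := hfmono (hmem1 i) hx0 hx.1
      have hgle : g ((i:ℝ)+2) ≤ g x := hganti hx0 (hmem2 i) (le_of_lt hx.2)
      exact mul_le_mul hfle hgle (hg0 _ (hpos2 i)) (hf0 x hx0)
    calc f ((i:ℝ)+1) * g ((i:ℝ)+2)
        = ∫ _x in s i, f ((i:ℝ)+1) * g ((i:ℝ)+2) := by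
          rw [setIntegral_const, measureReal_def, hvol i, one_smul]
      _ ≤ a i := setIntegral_mono_on (integrableOn_const (by
            simp [hsdef, Real.volume_Ico])) (hIco i) (hmeas i) hmono
  -- shifted summable
  have hshift : Summable (fun i : ℕ => f ((i:ℝ)+2) * g ((i:ℝ)+2)) := by
    have := (summable_nat_add_iff 1).2 hsum
    refine this.congr fun i => ?_
    push_cast
    ring_nf
  set S : ℝ := ∑' i : ℕ, f ((i:ℝ)+1) * g ((i:ℝ)+1) with hSdef
  set T : ℝ := ∑' i : ℕ, b i with hTdef
  have hshiftle : (∑' i : ℕ, f ((i:ℝ)+2) * g ((i:ℝ)+2)) ≤ S := by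
    have h0 := Summable.tsum_eq_zero_add hsum
    have he : (∑' i : ℕ, f ((i:ℝ)+2) * g ((i:ℝ)+2))
        = ∑' n : ℕ, f ((((n+1:ℕ)):ℝ)+1) * g ((((n+1:ℕ)):ℝ)+1) := by
      apply tsum_congr; intro n; push_cast; ring_nf
    have hnn : (0:ℝ) ≤ f (((0:ℕ):ℝ)+1) * g (((0:ℕ):ℝ)+1) :=
      mul_nonneg (hf0 _ (hpos1 0)) (hg0 _ (hpos1 0))
    rw [hSdef, h0, he]
    linarith
  -- upper bound on integral
  have hub : (∑' i, a i) ≤ S + T := by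
    have h1 : (∑' i, a i) ≤ ∑' i : ℕ, (f ((i:ℝ)+2) * g ((i:ℝ)+2) + b i) := by
      refine Summable.tsum_le_tsum (fun i => ?_) hasum (hshift.add hbsum)
      have : f ((i:ℝ)+2) * g ((i:ℝ)+2) + b i = f ((i:ℝ)+2) * g ((i:ℝ)+1) := by
        simp only [hbdef]; ring
      rw [this]; exact haub i
    rw [Summable.tsum_add hshift hbsum] at h1
    linarith [hshiftle]
  -- lower bound
  have hlb : S - T ≤ (∑' i, a i) := by
    have h1 : (∑' i : ℕ, (f ((i:ℝ)+1) * g ((i:ℝ)+1) - b i)) ≤ ∑' i, a i := by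
      refine Summable.tsum_le_tsum (fun i => ?_) (hsum.sub hbsum) hasum
      have key : f ((i:ℝ)+1) * g ((i:ℝ)+1) - b i ≤ f ((i:ℝ)+1) * g ((i:ℝ)+2) := by
        have hfle : f ((i:ℝ)+1) ≤ f ((i:ℝ)+2) := hfmono (hmem1 i) (hmem2 i) (by linarith)
        have := mul_le_mul_of_nonneg_right hfle (hgd i)
        simp only [hbdef]
        nlinarith
      exact le_trans key (halb i)
    rw [Summable.tsum_sub hsum hbsum] at h1
    exact h1
  rw [hIeq]
  rw [abs_sub_le_iff]
  constructor <;> linarith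
end
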